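/- arXiv:2602.11770 — 13 statements merged into one kernel-verified Lean document; each statement's English description precedes it below -/
import Mathlib

section
/- Let d* be a minimizer of d ↦ ⟨g,d⟩ over D₁ and set ω = |⟨g,d*⟩|. Let η > 0 and α > 0 satisfy α·ω ≤ η. Suppose s ∈ ℝⁿ is either (i) a minimizer of s ↦ ⟨g,s⟩ over D(α·ω), or (ii) d* ≠ 0 and s = (α·ω/‖d*‖_∞)·d*. Then |⟨g,s⟩| ≥ (α/max(η,1))·ω². -/
open scoped RealInnerProductSpace

/-- The sup-norm on `ℝⁿ` (viewing a Euclidean vector as a plain function). -/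
noncomputable def supNorm {n : ℕ} (d : EuclideanSpace ℝ (Fin n)) : ℝ :=
  ‖(WithLp.equiv 2 (Fin n → ℝ)) d‖

lemma supNorm_smul {n : ℕ} (t : ℝ) (d : EuclideanSpace ℝ (Fin n)) :
    supNorm (t • d) = |t| * supNorm d := by
  simp [supNorm, norm_smul, Real.norm_eq_abs]

lemma supNorm_pos {n : ℕ} {d : EuclideanSpace ℝ (Fin n)} (hd : d ≠ 0) :
    0 < supNorm d := by
  rw [supNorm, norm_pos_iff]
  simpa using hd

theorem stmt0 {n m : ℕ}
    (x g : EuclideanSpace ℝ (Fin n))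
    (J : EuclideanSpace ℝ (Fin n) →L[ℝ] EuclideanSpace ℝ (Fin m))
    (hx : ∀ i, 0 ≤ x i)
    -- `dstar` minimizes `d ↦ ⟪g, d⟫` over `D₁`
    (dstar : EuclideanSpace ℝ (Fin n))
    (hd1 : J dstar = 0) (hd2 : ∀ i, 0 ≤ x i + dstar i) (hd3 : supNorm dstar ≤ 1)
    (hdmin : ∀ d : EuclideanSpace ℝ (Fin n),
      J d = 0 → (∀ i, 0 ≤ x i + d i) → supNorm d ≤ 1 → ⟪g, dstar⟫ ≤ ⟪g, d⟫)
    (ω : ℝ) (hω : ω = |⟪g, dstar⟫|)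
    (η α : ℝ) (hη : 0 < η) (hα : 0 < α) (hαω : α * ω ≤ η)
    (s : EuclideanSpace ℝ (Fin n))
    (hs :
      -- (i) `s` minimizes `⟪g, ·⟫` over `D(α·ω)`
      (J s = 0 ∧ (∀ i, 0 ≤ x i + s i) ∧ supNorm s ≤ α * ω ∧
        ∀ d : EuclideanSpace ℝ (Fin n),
          J d = 0 → (∀ i, 0 ≤ x i + d i) → supNorm d ≤ α * ω → ⟪g, s⟫ ≤ ⟪g, d⟫)
      ∨
      -- (ii) `s` is the rescaled `dstar`
      (dstar ≠ 0 ∧ s = (α * ω / supNorm dstar) • dstar)) :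
    (α / max η 1) * ω ^ 2 ≤ |⟪g, s⟫| := by
  have hgd : ⟪g, dstar⟫ ≤ 0 := by
    have h0 := hdmin 0 (map_zero J) (by simpa using hx) (by simp [supNorm])
    simpa using h0
  have hωnn : 0 ≤ ω := hω ▸ abs_nonneg _
  have hωval : ω = -⟪g, dstar⟫ := by rw [hω, abs_of_nonpos hgd]
  set M := max η 1 with hMdef
  have hM1 : (1 : ℝ) ≤ M := le_max_right _ _
  have hMη : η ≤ M := le_max_left _ _
  have hMpos : (0 : ℝ) < M := lt_of_lt_of_le one_pos hM1
  rcases hs with ⟨hs1, hs2, hs3, hs4⟩ | ⟨hne, hseq⟩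
  · -- case (i)
    set t := α * ω / M with htdef
    have ht0 : 0 ≤ t := div_nonneg (by positivity) hMpos.le
    have htαω : t ≤ α * ω := div_le_self (by positivity) hM1
    have ht1 : t ≤ 1 := by
      rw [htdef, div_le_one hMpos]
      exact hαω.trans hMη
    have hJd : J (t • dstar) = 0 := by rw [map_smul, hd1, smul_zero]
    have hxd : ∀ i, 0 ≤ x i + (t • dstar) i := by
      intro i
      have h1 := hx i
      have h2 := hd2 i
      have : (t • dstar) i = t * dstar i := rfl
      rw [this]
      nlinarith
    have hnd : supNorm (t • dstar) ≤ α * ω := by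
      rw [supNorm_smul, abs_of_nonneg ht0]
      calc t * supNorm dstar ≤ t * 1 := by
            apply mul_le_mul_of_nonneg_left hd3 ht0
        _ = t := mul_one t
        _ ≤ α * ω := htαω
    have hkey : ⟪g, s⟫ ≤ t * ⟪g, dstar⟫ := by
      have h := hs4 (t • dstar) hJd hxd hnd
      rwa [real_inner_smul_right] at h
    have : α / M * ω ^ 2 ≤ -⟪g, s⟫ := by
      have : -(t * ⟪g, dstar⟫) ≤ -⟪g, s⟫ := neg_le_neg hkey
      calc α / M * ω ^ 2 = t * ω := by rw [htdef]; ring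
        _ = -(t * ⟪g, dstar⟫) := by rw [hωval]; ring
        _ ≤ -⟪g, s⟫ := this
    exact this.trans (neg_le_abs _)
  · -- case (ii)
    have hN : 0 < supNorm dstar := supNorm_pos hne
    have hgs : ⟪g, s⟫ = (α * ω / supNorm dstar) * ⟪g, dstar⟫ := by
      rw [hseq, real_inner_smul_right]
    have hc0 : 0 ≤ α * ω / supNorm dstar := div_nonneg (by positivity) hN.le
    have habs : |⟪g, s⟫| = (α * ω / supNorm dstar) * ω := by
      rw [hgs, abs_of_nonpos (mul_nonpos_of_nonneg_of_nonpos hc0 hgd), hωval]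
      ring
    rw [habs]
    have h1 : α / M ≤ α / supNorm dstar :=
      div_le_div_of_nonneg_left hα.le hN (hd3.trans hM1)
    calc α / M * ω ^ 2 ≤ α / supNorm dstar * ω ^ 2 := by
          apply mul_le_mul_of_nonneg_right h1 (by positivity)
      _ = (α * ω / supNorm dstar) * ω := by ring
end

section
/- Let η > 0, ς ∈ (0,1/2], and α > 0 with α ≤ η/√ς. Let q ∈ K satisfy ‖(x − g) − q‖ ≤ ‖(x − g) − z‖ for all z ∈ K (i.e. q is the point of K closest to x − g), set p = q − x, π = ‖p‖, and s = min(α,1)·p. Then |⟨g,s⟩| ≥ (√ς/max(η,1))·α·π². -/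
open scoped RealInnerProductSpace

theorem stmt1 {n m : ℕ}
    (x g : EuclideanSpace ℝ (Fin n))
    (J : EuclideanSpace ℝ (Fin n) →L[ℝ] EuclideanSpace ℝ (Fin m))
    (hx : ∀ i, 0 ≤ x i)
    (η ς α : ℝ) (hη : 0 < η) (hς1 : 0 < ς) (hς2 : ς ≤ 1/2)
    (hα : 0 < α) (hαη : α ≤ η / Real.sqrt ς)
    (K : Set (EuclideanSpace ℝ (Fin n)))
    (hK : K = {z | J (z - x) = 0 ∧ ∀ i, 0 ≤ z i})
    -- `q` is the point of `K` closest to `x - g`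
    (q : EuclideanSpace ℝ (Fin n)) (hqK : q ∈ K)
    (hq : ∀ z ∈ K, ‖(x - g) - q‖ ≤ ‖(x - g) - z‖)
    (p : EuclideanSpace ℝ (Fin n)) (hp : p = q - x)
    (π : ℝ) (hπ : π = ‖p‖)
    (s : EuclideanSpace ℝ (Fin n)) (hs : s = min α 1 • p) :
    (Real.sqrt ς / max η 1) * α * π ^ 2 ≤ |⟪g, s⟫| := by
  subst hK hp hπ hs
  obtain ⟨hJq, hq0⟩ := hqK
  -- the variational inequality at z = x
  have key : ⟪(x - g) - q, x - q⟫ ≤ 0 := by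
    by_contra hcon
    push_neg at hcon
    set d := ⟪(x - g) - q, x - q⟫ with hd
    set c := ‖x - q‖ ^ 2 with hc
    have hstep : ∀ t : ℝ, 0 ≤ t → t ≤ 1 → 2 * t * d ≤ t ^ 2 * c := by
      intro t ht0 ht1
      have hzK : q + t • (x - q) ∈ {z | J (z - x) = 0 ∧ ∀ i, 0 ≤ z i} := by
        constructor
        · have hz : q + t • (x - q) - x = (1 - t) • (q - x) := by module
          rw [hz, map_smul, hJq, smul_zero]
        · intro i
          have hz : (q + t • (x - q)) i = q i + t * (x i - q i) := by
            simp [PiLp.add_apply, PiLp.smul_apply, PiLp.sub_apply]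
          rw [hz]
          nlinarith [hq0 i, hx i]
      have h1 := hq _ hzK
      have h2 : ‖(x - g) - q‖ ^ 2 ≤ ‖(x - g) - (q + t • (x - q))‖ ^ 2 := by
        have := norm_nonneg ((x - g) - q)
        nlinarith [h1]
      have h3 : (x - g) - (q + t • (x - q)) = ((x - g) - q) - t • (x - q) := by
        module
      have hexp : ‖((x - g) - q) - t • (x - q)‖ ^ 2
          = ‖(x - g) - q‖ ^ 2 - 2 * (t * d) + (‖t‖ * ‖x - q‖) ^ 2 := by
        rw [norm_sub_sq_real, real_inner_smul_right, norm_smul]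
      have h4 : ‖t‖ = t := by rw [Real.norm_eq_abs, abs_of_nonneg ht0]
      rw [h3, hexp, h4] at h2
      nlinarith [h2]
    have hc0 : 0 ≤ c := sq_nonneg _
    rcases eq_or_lt_of_le hc0 with hc' | hc'
    · -- c = 0 means x = q, so d = 0, contradiction
      have hx0 : x - q = 0 := by
        have : ‖x - q‖ = 0 := by nlinarith [norm_nonneg (x - q)]
        exact norm_eq_zero.mp this
      have : d = 0 := by rw [hd, hx0, inner_zero_right]
      linarith
    · set t₀ : ℝ := min 1 (d / c) with ht₀
      have ht0 : 0 < t₀ := lt_min one_pos (div_pos hcon hc')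
      have ht1 : t₀ ≤ 1 := min_le_left _ _
      have htc : t₀ * c ≤ d := by
        have : t₀ ≤ d / c := min_le_right _ _
        calc t₀ * c ≤ (d / c) * c := by nlinarith
          _ = d := by field_simp
      have := hstep t₀ ht0.le ht1
      nlinarith
  -- deduce ⟪g, q - x⟫ ≤ -‖q - x‖²
  have hgp : ⟪g, q - x⟫ ≤ -‖q - x‖ ^ 2 := by
    have h1 : (x - g) - q = (x - q) - g := by module
    rw [h1, inner_sub_left, real_inner_self_eq_norm_sq] at key
    have h2 : ⟪g, x - q⟫ = -⟪g, q - x⟫ := by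
      have : x - q = -(q - x) := by module
      rw [this, inner_neg_right]
    rw [h2] at key
    have h3 : ‖x - q‖ = ‖q - x‖ := norm_sub_rev _ _
    rw [h3] at key
    linarith
  -- inner product with s
  have hgs : ⟪g, min α 1 • (q - x)⟫ = min α 1 * ⟪g, q - x⟫ :=
    real_inner_smul_right _ _ _
  have hm0 : 0 < min α 1 := lt_min hα one_pos
  have hgsle : ⟪g, min α 1 • (q - x)⟫ ≤ -(min α 1 * ‖q - x‖ ^ 2) := by
    rw [hgs]; nlinarith [sq_nonneg ‖q - x‖]
  have habs : min α 1 * ‖q - x‖ ^ 2 ≤ |⟪g, min α 1 • (q - x)⟫| := by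
    have : min α 1 * ‖q - x‖ ^ 2 ≤ -⟪g, min α 1 • (q - x)⟫ := by linarith
    calc min α 1 * ‖q - x‖ ^ 2 ≤ -⟪g, min α 1 • (q - x)⟫ := this
      _ ≤ |⟪g, min α 1 • (q - x)⟫| := neg_le_abs _
  -- coefficient inequality
  have hsq0 : 0 < Real.sqrt ς := Real.sqrt_pos.mpr hς1
  have hsq1 : Real.sqrt ς ≤ 1 := Real.sqrt_le_one.mpr (by linarith)
  have hmax1 : (1 : ℝ) ≤ max η 1 := le_max_right _ _
  have hmaxη : η ≤ max η 1 := le_max_left _ _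
  have hmaxpos : (0 : ℝ) < max η 1 := lt_of_lt_of_le one_pos hmax1
  have hαs : α * Real.sqrt ς ≤ η := by
    rw [le_div_iff₀ hsq0] at hαη; exact hαη
  have hcoef : (Real.sqrt ς / max η 1) * α ≤ min α 1 := by
    rw [div_mul_eq_mul_div, div_le_iff₀ hmaxpos]
    rcases le_total α 1 with h | h
    · rw [min_eq_left h]
      calc Real.sqrt ς * α ≤ 1 * α := mul_le_mul_of_nonneg_right hsq1 hα.le
        _ = α := one_mul _
        _ ≤ α * max η 1 := le_mul_of_one_le_right hα.le hmax1
    · rw [min_eq_right h]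
      calc Real.sqrt ς * α = α * Real.sqrt ς := mul_comm _ _
        _ ≤ η := hαs
        _ ≤ max η 1 := hmaxη
        _ = 1 * max η 1 := (one_mul _).symm
  calc (Real.sqrt ς / max η 1) * α * ‖q - x‖ ^ 2
      ≤ min α 1 * ‖q - x‖ ^ 2 :=
        mul_le_mul_of_nonneg_right hcoef (sq_nonneg _)
    _ ≤ |⟪g, min α 1 • (q - x)⟫| := habs
end

section
/- Let g : ℝⁿ → ℝⁿ and, for each x, a linear map J(x) : ℝⁿ → ℝᵐ (adjoint J(x)*) satisfy, for all x, y ∈ O: ‖g(x)‖ ≤ κ_g, ‖g(x) − g(y)‖ ≤ L_g‖x − y‖, ‖J(x)‖ ≤ κ_J, ‖J(x) − J(y)‖ ≤ L_J‖x − y‖ (operator norms), and ‖J(x)*u‖ ≥ σ₀‖u‖ for all u ∈ ℝᵐ, where σ₀ ∈ (0,1] and κ_g, κ_J, L_g, L_J > 0. For x ∈ O let λ̂(x) ∈ ℝᵐ be the unique solution of J(x)J(x)*λ̂(x) = −J(x)g(x). Then for all x, y ∈ O, ‖λ̂(x) − λ̂(y)‖ ≤ L_λ‖x − y‖, where L_λ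 = (1/σ₀²)·(2κ_g·κ_J²·L_J/σ₀² + κ_g·L_J + κ_J·L_g). -/
open scoped RealInnerProductSpace

set_option maxHeartbeats 1000000

theorem stmt5 {n m : ℕ}
    (g : EuclideanSpace ℝ (Fin n) → EuclideanSpace ℝ (Fin n))
    (J : EuclideanSpace ℝ (Fin n) → (EuclideanSpace ℝ (Fin n) →L[ℝ] EuclideanSpace ℝ (Fin m)))
    -- `O` is the nonnegative orthant
    (O : Set (EuclideanSpace ℝ (Fin n))) (hO : O = {x | ∀ i, 0 ≤ x i})
    (σ₀ κg κJ Lg LJ : ℝ) (hσ0 : 0 < σ₀) (hσ1 : σ₀ ≤ 1)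
    (hκg : 0 < κg) (hκJ : 0 < κJ) (hLg : 0 < Lg) (hLJ : 0 < LJ)
    (hgb : ∀ x ∈ O, ‖g x‖ ≤ κg)
    (hgL : ∀ x ∈ O, ∀ y ∈ O, ‖g x - g y‖ ≤ Lg * ‖x - y‖)
    (hJb : ∀ x ∈ O, ‖J x‖ ≤ κJ)
    (hJL : ∀ x ∈ O, ∀ y ∈ O, ‖J x - J y‖ ≤ LJ * ‖x - y‖)
    (hJinj : ∀ x ∈ O, ∀ u : EuclideanSpace ℝ (Fin m),
      σ₀ * ‖u‖ ≤ ‖(ContinuousLinearMap.adjoint (J x)) u‖)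
    -- `lamhat x` is the (unique) least-squares multiplier at `x`
    (lamhat : EuclideanSpace ℝ (Fin n) → EuclideanSpace ℝ (Fin m))
    (hlam : ∀ x ∈ O,
      (J x) ((ContinuousLinearMap.adjoint (J x)) (lamhat x)) = -((J x) (g x))) :
    ∀ x ∈ O, ∀ y ∈ O,
      ‖lamhat x - lamhat y‖
        ≤ (1 / σ₀ ^ 2) * (2 * κg * κJ ^ 2 * LJ / σ₀ ^ 2 + κg * LJ + κJ * Lg) * ‖x - y‖ := by
  intro x hx y hy
  set A := J x with hAdef
  set B := J y with hBdef
  set l1 := lamhat x with hl1def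
  set l2 := lamhat y with hl2def
  have hA : A ((ContinuousLinearMap.adjoint A) l1) = -(A (g x)) := hlam x hx
  have hB : B ((ContinuousLinearMap.adjoint B) l2) = -(B (g y)) := hlam y hy
  have hAn : ‖A‖ ≤ κJ := hJb x hx
  have hBn : ‖B‖ ≤ κJ := hJb y hy
  have hABn : ‖A - B‖ ≤ LJ * ‖x - y‖ := hJL x hx y hy
  have hxy : (0:ℝ) ≤ ‖x - y‖ := norm_nonneg _
  have hBAn : ‖B - A‖ ≤ LJ * ‖x - y‖ := by rwa [norm_sub_rev] at hABn
  have hadjAB : ‖ContinuousLinearMap.adjoint B - ContinuousLinearMap.adjoint A‖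
      ≤ LJ * ‖x - y‖ := by
    rw [← map_sub (ContinuousLinearMap.adjoint :
      (EuclideanSpace ℝ (Fin n) →L[ℝ] EuclideanSpace ℝ (Fin m)) ≃ₗᵢ⋆[ℝ] _)]
    rw [LinearIsometryEquiv.norm_map]
    exact hBAn
  have hadjBn : ‖ContinuousLinearMap.adjoint B‖ ≤ κJ := by
    rw [show ‖ContinuousLinearMap.adjoint B‖ = ‖B‖ from
      LinearIsometryEquiv.norm_map _ B]
    exact hBn
  -- coercivity at x and y
  have keyA : ∀ u : EuclideanSpace ℝ (Fin m),
      σ₀ ^ 2 * ‖u‖ ^ 2 ≤ ⟪u, A ((ContinuousLinearMap.adjoint A) u)⟫ := by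
    intro u
    have h1 := hJinj x hx u
    have h2 : ⟪u, A ((ContinuousLinearMap.adjoint A) u)⟫
        = ‖(ContinuousLinearMap.adjoint A) u‖ ^ 2 := by
      rw [← real_inner_self_eq_norm_sq, ContinuousLinearMap.adjoint_inner_left]
    rw [h2]
    calc σ₀ ^ 2 * ‖u‖ ^ 2 = (σ₀ * ‖u‖) ^ 2 := by ring
    _ ≤ ‖(ContinuousLinearMap.adjoint A) u‖ ^ 2 := pow_le_pow_left₀ (by positivity) h1 2
  have keyB : ∀ u : EuclideanSpace ℝ (Fin m),
      σ₀ ^ 2 * ‖u‖ ^ 2 ≤ ⟪u, B ((ContinuousLinearMap.adjoint B) u)⟫ := by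
    intro u
    have h1 := hJinj y hy u
    have h2 : ⟪u, B ((ContinuousLinearMap.adjoint B) u)⟫
        = ‖(ContinuousLinearMap.adjoint B) u‖ ^ 2 := by
      rw [← real_inner_self_eq_norm_sq, ContinuousLinearMap.adjoint_inner_left]
    rw [h2]
    calc σ₀ ^ 2 * ‖u‖ ^ 2 = (σ₀ * ‖u‖) ^ 2 := by ring
    _ ≤ ‖(ContinuousLinearMap.adjoint B) u‖ ^ 2 := pow_le_pow_left₀ (by positivity) h1 2
  -- bound on ‖l2‖
  have hl2b : σ₀ ^ 2 * ‖l2‖ ≤ κJ * κg := by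
    have h1 := keyB l2
    rw [hB] at h1
    have h2 : ⟪l2, -(B (g y))⟫ ≤ ‖l2‖ * ‖B (g y)‖ := by
      calc ⟪l2, -(B (g y))⟫ ≤ ‖l2‖ * ‖-(B (g y))‖ := real_inner_le_norm _ _
      _ = ‖l2‖ * ‖B (g y)‖ := by rw [norm_neg]
    have h3 : ‖B (g y)‖ ≤ κJ * κg := by
      calc ‖B (g y)‖ ≤ ‖B‖ * ‖g y‖ := B.le_opNorm _
      _ ≤ κJ * κg := mul_le_mul hBn (hgb y hy) (norm_nonneg _) hκJ.le
    rcases eq_or_lt_of_le (norm_nonneg l2) with h | h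
    · nlinarith
    · nlinarith [mul_le_mul_of_nonneg_left h3 (norm_nonneg l2)]
  -- main estimate
  set d := l1 - l2 with hddef
  have hmain : σ₀ ^ 2 * ‖d‖ ^ 2 ≤ ‖d‖ *
      ((κg * LJ + κJ * Lg) * ‖x - y‖ + 2 * κJ * LJ * ‖x - y‖ * ‖l2‖) := by
    have h1 := keyA d
    have hexp : A ((ContinuousLinearMap.adjoint A) d)
        = (B (g y) - A (g x)) + (B ((ContinuousLinearMap.adjoint B) l2)
            - A ((ContinuousLinearMap.adjoint A) l2)) := by
      rw [hB]
      have : (ContinuousLinearMap.adjoint A) d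
          = (ContinuousLinearMap.adjoint A) l1 - (ContinuousLinearMap.adjoint A) l2 := by
        rw [hddef, map_sub]
      rw [this, map_sub, hA]
      abel
    rw [hexp] at h1
    have h2 : ⟪d, (B (g y) - A (g x)) + (B ((ContinuousLinearMap.adjoint B) l2)
            - A ((ContinuousLinearMap.adjoint A) l2))⟫
        ≤ ‖d‖ * (‖B (g y) - A (g x)‖ + ‖B ((ContinuousLinearMap.adjoint B) l2)
            - A ((ContinuousLinearMap.adjoint A) l2)‖) := by
      calc _ ≤ ‖d‖ * ‖(B (g y) - A (g x)) + (B ((ContinuousLinearMap.adjoint B) l2)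
            - A ((ContinuousLinearMap.adjoint A) l2))‖ := real_inner_le_norm _ _
      _ ≤ _ := by
        apply mul_le_mul_of_nonneg_left (norm_add_le _ _) (norm_nonneg d)
    have h3 : ‖B (g y) - A (g x)‖ ≤ (κg * LJ + κJ * Lg) * ‖x - y‖ := by
      have e : B (g y) - A (g x) = (B - A) (g y) + A (g y - g x) := by
        simp [ContinuousLinearMap.sub_apply, map_sub]
      rw [e]
      calc ‖(B - A) (g y) + A (g y - g x)‖
          ≤ ‖(B - A) (g y)‖ + ‖A (g y - g x)‖ := norm_add_le _ _
      _ ≤ ‖B - A‖ * ‖g y‖ + ‖A‖ * ‖g y - g x‖ :=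
          add_le_add ((B - A).le_opNorm _) (A.le_opNorm _)
      _ ≤ (LJ * ‖x - y‖) * κg + κJ * (Lg * ‖x - y‖) := by
          have hgyx : ‖g y - g x‖ ≤ Lg * ‖x - y‖ := by
            have h := hgL y hy x hx
            rwa [norm_sub_rev y x] at h
          apply add_le_add
          · exact mul_le_mul hBAn (hgb y hy) (norm_nonneg _) (by positivity)
          · exact mul_le_mul hAn hgyx (norm_nonneg _) hκJ.le
      _ = (κg * LJ + κJ * Lg) * ‖x - y‖ := by ring
    have h4 : ‖B ((ContinuousLinearMap.adjoint B) l2)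
        - A ((ContinuousLinearMap.adjoint A) l2)‖ ≤ 2 * κJ * LJ * ‖x - y‖ * ‖l2‖ := by
      have e : B ((ContinuousLinearMap.adjoint B) l2) - A ((ContinuousLinearMap.adjoint A) l2)
          = (B - A) ((ContinuousLinearMap.adjoint B) l2)
            + A ((ContinuousLinearMap.adjoint B - ContinuousLinearMap.adjoint A) l2) := by
        simp [ContinuousLinearMap.sub_apply, map_sub]
      rw [e]
      calc _ ≤ ‖(B - A) ((ContinuousLinearMap.adjoint B) l2)‖
            + ‖A ((ContinuousLinearMap.adjoint B - ContinuousLinearMap.adjoint A) l2)‖ :=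
          norm_add_le _ _
      _ ≤ ‖B - A‖ * (‖ContinuousLinearMap.adjoint B‖ * ‖l2‖)
            + ‖A‖ * (‖ContinuousLinearMap.adjoint B - ContinuousLinearMap.adjoint A‖ * ‖l2‖) := by
          apply add_le_add
          · exact le_trans ((B - A).le_opNorm _)
              (mul_le_mul_of_nonneg_left ((ContinuousLinearMap.adjoint B).le_opNorm _)
                (norm_nonneg _))
          · exact le_trans (A.le_opNorm _)
              (mul_le_mul_of_nonneg_left
                ((ContinuousLinearMap.adjoint B - ContinuousLinearMap.adjoint A).le_opNorm _)
                (norm_nonneg _))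
      _ ≤ (LJ * ‖x - y‖) * (κJ * ‖l2‖) + κJ * ((LJ * ‖x - y‖) * ‖l2‖) := by
          apply add_le_add
          · apply mul_le_mul hBAn (mul_le_mul_of_nonneg_right hadjBn (norm_nonneg _))
              (by positivity) (by positivity)
          · apply mul_le_mul hAn (mul_le_mul_of_nonneg_right hadjAB (norm_nonneg _))
              (by positivity) hκJ.le
      _ = 2 * κJ * LJ * ‖x - y‖ * ‖l2‖ := by ring
    calc σ₀ ^ 2 * ‖d‖ ^ 2 ≤ _ := h1
    _ ≤ _ := h2
    _ ≤ ‖d‖ * ((κg * LJ + κJ * Lg) * ‖x - y‖ + 2 * κJ * LJ * ‖x - y‖ * ‖l2‖) := by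
        apply mul_le_mul_of_nonneg_left (add_le_add h3 h4) (norm_nonneg d)
  -- conclude
  rcases eq_or_lt_of_le (norm_nonneg d) with h0 | h0
  · rw [← h0]
    positivity
  · have hstep : σ₀ ^ 2 * ‖d‖ ≤ (κg * LJ + κJ * Lg) * ‖x - y‖ + 2 * κJ * LJ * ‖x - y‖ * ‖l2‖ := by
      refine le_of_mul_le_mul_right ?_ h0
      calc (σ₀ ^ 2 * ‖d‖) * ‖d‖ = σ₀ ^ 2 * ‖d‖ ^ 2 := by ring
      _ ≤ ‖d‖ * ((κg * LJ + κJ * Lg) * ‖x - y‖ + 2 * κJ * LJ * ‖x - y‖ * ‖l2‖) := hmain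
      _ = ((κg * LJ + κJ * Lg) * ‖x - y‖ + 2 * κJ * LJ * ‖x - y‖ * ‖l2‖) * ‖d‖ := by ring
    have hσ2 : (0:ℝ) < σ₀ ^ 2 := by positivity
    have key : σ₀ ^ 2 * σ₀ ^ 2 * ‖d‖ ≤
        (2 * κg * κJ ^ 2 * LJ + (κg * LJ + κJ * Lg) * σ₀ ^ 2) * ‖x - y‖ := by
      have h5 := mul_le_mul_of_nonneg_left hstep hσ2.le
      have h6 := mul_le_mul_of_nonneg_left hl2b
        (by positivity : (0:ℝ) ≤ 2 * κJ * LJ * ‖x - y‖)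
      linarith [h5, h6]
    have hgoal : (1 / σ₀ ^ 2) * (2 * κg * κJ ^ 2 * LJ / σ₀ ^ 2 + κg * LJ + κJ * Lg)
        = (2 * κg * κJ ^ 2 * LJ + (κg * LJ + κJ * Lg) * σ₀ ^ 2) / (σ₀ ^ 2 * σ₀ ^ 2) := by
      field_simp
      ring
    rw [hgoal, div_mul_eq_mul_div, le_div_iff₀ (by positivity)]
    calc ‖d‖ * (σ₀ ^ 2 * σ₀ ^ 2) = σ₀ ^ 2 * σ₀ ^ 2 * ‖d‖ := by ring
    _ ≤ _ := key
end

section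
/- Let θ_N ≥ 1, κ_n ∈ (0,1/2), ξ ∈ (0,1], κ_ω > 0, η > 0, and set ρ = (1/(κ_n·ξ))·[(κ_g + κ_c·L_λ)·θ_N + (L_L/2 + L_λ·L_c)·θ_N²·κ_ω + η]. Suppose x ∈ O, ω ∈ ℝ with ξ‖c(x)‖ ≤ ω ≤ κ_ω, and s ∈ ℝⁿ satisfies x + s ∈ O, ‖s‖ ≤ θ_N·ω, and (1/2)‖c(x+s)‖² ≤ (1/2)‖c(x)‖² − κ_n·ω². Then ψ(x+s) − ψ(x) ≤ −η·ω. -/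
open scoped RealInnerProductSpace

open Set intervalIntegral in
lemma descent_lemma_aux {E : Type*} [NormedAddCommGroup E] [InnerProductSpace ℝ E]
    [CompleteSpace E]
    (φ : E → ℝ) (G : E → E) (x s : E) (L : ℝ)
    (hder : ∀ t ∈ Set.Icc (0:ℝ) 1, HasGradientAt φ (G (x + t • s)) (x + t • s))
    (hlip : ∀ t ∈ Set.Icc (0:ℝ) 1, ‖G (x + t • s) - G x‖ ≤ L * (t * ‖s‖))
    (hcont : ContinuousOn (fun t : ℝ => ⟪G (x + t • s), s⟫) (Set.Icc 0 1)) :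
    φ (x + s) ≤ φ x + ⟪G x, s⟫ + L / 2 * ‖s‖ ^ 2 := by
  set h' : ℝ → ℝ := fun t => ⟪G (x + t • s), s⟫ with hh'
  have hcurve : ∀ t : ℝ, HasDerivAt (fun u : ℝ => x + u • s) s t := by
    intro t
    simpa using ((hasDerivAt_id t).smul_const s).const_add x
  have hderiv : ∀ t ∈ Set.uIcc (0:ℝ) 1,
      HasDerivAt (fun u : ℝ => φ (x + u • s)) (h' t) t := by
    intro t ht
    rw [Set.uIcc_of_le zero_le_one] at ht
    have := ((hder t ht).hasFDerivAt.comp_hasDerivAt t (hcurve t))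
    simp [InnerProductSpace.toDual_apply_apply] at this
    exact this
  have hInt : IntervalIntegrable h' MeasureTheory.volume 0 1 := by
    apply ContinuousOn.intervalIntegrable
    rwa [Set.uIcc_of_le zero_le_one]
  have hftc : (∫ t in (0:ℝ)..1, h' t) = φ (x + s) - φ x := by
    have := intervalIntegral.integral_eq_sub_of_hasDerivAt hderiv hInt
    simpa using this
  have hmono : (∫ t in (0:ℝ)..1, h' t) ≤
      ∫ t in (0:ℝ)..1, (⟪G x, s⟫ + L * ‖s‖ ^ 2 * t) := by
    apply intervalIntegral.integral_mono_on zero_le_one hInt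
    · exact intervalIntegrable_const.add ((intervalIntegrable_id).const_mul _)
    · intro t ht
      have h1 : h' t = ⟪G x, s⟫ + ⟪G (x + t • s) - G x, s⟫ := by
        rw [hh']; simp [inner_sub_left]
      have h2 : ⟪G (x + t • s) - G x, s⟫ ≤ L * (t * ‖s‖) * ‖s‖ :=
        le_trans (real_inner_le_norm _ _)
          (mul_le_mul_of_nonneg_right (hlip t ht) (norm_nonneg s))
      rw [h1]
      have h3 : L * (t * ‖s‖) * ‖s‖ = L * ‖s‖ ^ 2 * t := by ring
      linarith [h3 ▸ h2]
  have hval : (∫ t in (0:ℝ)..1, (⟪G x, s⟫ + L * ‖s‖ ^ 2 * t))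
      = ⟪G x, s⟫ + L / 2 * ‖s‖ ^ 2 := by
    rw [intervalIntegral.integral_add intervalIntegrable_const
      ((intervalIntegrable_id).const_mul _),
      intervalIntegral.integral_const, intervalIntegral.integral_const_mul, integral_id]
    simp; ring
  linarith [hftc ▸ hmono, hval ▸ hmono]

set_option maxHeartbeats 1000000 in
theorem stmt9 {n m : ℕ}
    (f : EuclideanSpace ℝ (Fin n) → ℝ)
    (c : EuclideanSpace ℝ (Fin n) → EuclideanSpace ℝ (Fin m))
    (g : EuclideanSpace ℝ (Fin n) → EuclideanSpace ℝ (Fin n))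
    (J : EuclideanSpace ℝ (Fin n) → (EuclideanSpace ℝ (Fin n) →L[ℝ] EuclideanSpace ℝ (Fin m)))
    -- `O` is the nonnegative orthant
    (O : Set (EuclideanSpace ℝ (Fin n))) (hO : O = {x | ∀ i, 0 ≤ x i})
    -- `f` and `c` are continuously differentiable on an open set `U ⊇ O`,
    -- with gradient `g x` and derivative `J x`
    (U : Set (EuclideanSpace ℝ (Fin n))) (hU : IsOpen U) (hOU : O ⊆ U)
    (hf : ∀ x ∈ U, HasGradientAt f (g x) x) (hgcont : ContinuousOn g U)
    (hcder : ∀ x ∈ U, HasFDerivAt c (J x) x) (hJcont : ContinuousOn J U)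
    -- least-squares multiplier
    (lamhat : EuclideanSpace ℝ (Fin n) → EuclideanSpace ℝ (Fin m))
    (hlam : ∀ x ∈ O,
      (J x) ((ContinuousLinearMap.adjoint (J x)) (lamhat x)) = -((J x) (g x)))
    (κg κc κlam Lc Llam LL : ℝ)
    (hκg : 0 < κg) (hκc : 0 < κc) (hκlam : 0 < κlam)
    (hLc : 0 < Lc) (hLlam : 0 < Llam) (hLL : 0 < LL)
    (hgb : ∀ x ∈ O, ‖g x‖ ≤ κg)
    (hcb : ∀ x ∈ O, ‖c x‖ ≤ κc)
    (hcL : ∀ x ∈ O, ∀ y ∈ O, ‖c x - c y‖ ≤ Lc * ‖x - y‖)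
    (hlb : ∀ x ∈ O, ‖lamhat x‖ ≤ κlam)
    (hlL : ∀ x ∈ O, ∀ y ∈ O, ‖lamhat x - lamhat y‖ ≤ Llam * ‖x - y‖)
    (hLLip : ∀ lam : EuclideanSpace ℝ (Fin m), ‖lam‖ ≤ κlam →
      ∀ x ∈ O, ∀ y ∈ O,
        ‖(g x + (ContinuousLinearMap.adjoint (J x)) lam)
          - (g y + (ContinuousLinearMap.adjoint (J y)) lam)‖ ≤ LL * ‖x - y‖)
    (hgradL : ∀ x ∈ O, ‖g x + (ContinuousLinearMap.adjoint (J x)) (lamhat x)‖ ≤ κg)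
    (θN κn ξ κω η ρ : ℝ)
    (hθN : 1 ≤ θN) (hκn1 : 0 < κn) (hκn2 : κn < 1/2)
    (hξ1 : 0 < ξ) (hξ2 : ξ ≤ 1) (hκω : 0 < κω) (hη : 0 < η)
    (hρ : ρ = (1 / (κn * ξ)) *
      ((κg + κc * Llam) * θN + (LL / 2 + Llam * Lc) * θN ^ 2 * κω + η))
    (x : EuclideanSpace ℝ (Fin n)) (hx : x ∈ O)
    (ω : ℝ) (hω1 : ξ * ‖c x‖ ≤ ω) (hω2 : ω ≤ κω)
    (s : EuclideanSpace ℝ (Fin n)) (hxs : x + s ∈ O)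
    (hsb : ‖s‖ ≤ θN * ω)
    (hdec : (1/2) * ‖c (x + s)‖ ^ 2 ≤ (1/2) * ‖c x‖ ^ 2 - κn * ω ^ 2) :
    (f (x + s) + ⟪lamhat (x + s), c (x + s)⟫ + ρ * ‖c (x + s)‖)
      - (f x + ⟪lamhat x, c x⟫ + ρ * ‖c x‖) ≤ -(η * ω) := by
  have hωnn : 0 ≤ ω := le_trans (mul_nonneg hξ1.le (norm_nonneg _)) hω1
  rcases eq_or_lt_of_le hωnn with hω0 | hωpos
  · -- ω = 0 forces s = 0
    have hs0 : s = 0 := by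
      have : ‖s‖ ≤ 0 := by rw [← hω0] at hsb; simpa using hsb
      simpa using le_antisymm this (norm_nonneg s)
    subst hs0
    simp [← hω0]
  -- main case ω > 0
  set lam := lamhat x with hlamdef
  -- segment lies in O
  have hseg : ∀ t ∈ Set.Icc (0:ℝ) 1, x + t • s ∈ O := by
    intro t ht
    rw [hO] at hx hxs ⊢
    intro i
    have h1 := hx i
    have h2 := hxs i
    simp only [PiLp.add_apply, PiLp.smul_apply, smul_eq_mul] at *
    nlinarith [ht.1, ht.2]
  -- gradient of y ↦ f y + ⟪lam, c y⟫
  have hgrad : ∀ y ∈ U, HasGradientAt (fun z => f z + ⟪lam, c z⟫)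
      (g y + (ContinuousLinearMap.adjoint (J y)) lam) y := by
    intro y hy
    have h2 : HasFDerivAt (fun z => (⟪lam, c z⟫ : ℝ))
        ((innerSL ℝ lam).comp (J y)) y :=
      (innerSL ℝ lam).hasFDerivAt.comp y (hcder y hy)
    rw [hasGradientAt_iff_hasFDerivAt]
    have := (hf y hy).hasFDerivAt.add h2
    convert this using 1
    · rfl
    · rfl
    · rfl
    ext v
    simp [InnerProductSpace.toDual_apply_apply, inner_add_left,
      ContinuousLinearMap.adjoint_inner_left, real_inner_comm]
  set G : EuclideanSpace ℝ (Fin n) → EuclideanSpace ℝ (Fin n) :=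
    fun y => g y + (ContinuousLinearMap.adjoint (J y)) lam with hGdef
  -- continuity of the derivative along the segment
  have hγc : Continuous (fun t : ℝ => x + t • s) :=
    continuous_const.add (continuous_id.smul continuous_const)
  have hmaps : Set.MapsTo (fun t : ℝ => x + t • s) (Set.Icc 0 1) U :=
    fun t ht => hOU (hseg t ht)
  have hc2 : ContinuousOn
      (fun t : ℝ => (ContinuousLinearMap.adjoint (J (x + t • s))) lam)
      (Set.Icc 0 1) := by
    have hJ : ContinuousOn (fun t : ℝ => J (x + t • s)) (Set.Icc 0 1) :=
      hJcont.comp hγc.continuousOn hmaps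
    have hadj : Continuous (fun A : (EuclideanSpace ℝ (Fin n)) →L[ℝ] EuclideanSpace ℝ (Fin m)
        => (ContinuousLinearMap.adjoint A) lam) :=
      (ContinuousLinearMap.apply ℝ _ lam).continuous.comp
        (ContinuousLinearMap.adjoint :
          ((EuclideanSpace ℝ (Fin n)) →L[ℝ] EuclideanSpace ℝ (Fin m)) ≃ₗᵢ[ℝ] _).continuous
    exact hadj.comp_continuousOn hJ
  have hcont : ContinuousOn (fun t : ℝ => ⟪G (x + t • s), s⟫) (Set.Icc 0 1) := by
    apply ContinuousOn.inner
    · exact (hgcont.comp hγc.continuousOn hmaps).add hc2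
    · exact continuousOn_const
  -- Lipschitz bound along the segment
  have hlip : ∀ t ∈ Set.Icc (0:ℝ) 1, ‖G (x + t • s) - G x‖ ≤ LL * (t * ‖s‖) := by
    intro t ht
    have := hLLip lam (hlb x hx) (x + t • s) (hseg t ht) x hx
    have he : x + t • s - x = t • s := by abel
    rw [he] at this
    rw [norm_smul] at this
    simpa [abs_of_nonneg ht.1] using this
  -- the descent estimate
  have hdesc := descent_lemma_aux (fun z => f z + ⟪lam, c z⟫) G x s LL
    (fun t ht => hgrad _ (hOU (hseg t ht))) hlip hcont
  -- bound the linear term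
  have hGx : ⟪G x, s⟫ ≤ κg * ‖s‖ :=
    le_trans (real_inner_le_norm _ _)
      (mul_le_mul_of_nonneg_right (hgradL x hx) (norm_nonneg s))
  have ineq1 : f (x + s) + ⟪lam, c (x + s)⟫ ≤
      f x + ⟪lam, c x⟫ + κg * ‖s‖ + LL / 2 * ‖s‖ ^ 2 := by
    linarith
  -- multiplier difference term
  have hdl : ‖lamhat (x + s) - lam‖ ≤ Llam * ‖s‖ := by
    have := hlL (x + s) hxs x hx
    simpa using this
  have hcd : ‖c (x + s) - c x‖ ≤ Lc * ‖s‖ := by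
    have := hcL (x + s) hxs x hx
    simpa using this
  have ineq2 : ⟪lamhat (x + s) - lam, c (x + s)⟫ ≤
      Llam * ‖s‖ * κc + Llam * ‖s‖ * (Lc * ‖s‖) := by
    have hsplit : ⟪lamhat (x + s) - lam, c (x + s)⟫ =
        ⟪lamhat (x + s) - lam, c x⟫ + ⟪lamhat (x + s) - lam, c (x + s) - c x⟫ := by
      rw [← inner_add_right]
      congr 1
      abel
    have t1 : ⟪lamhat (x + s) - lam, c x⟫ ≤ Llam * ‖s‖ * κc := by
      refine le_trans (real_inner_le_norm _ _) ?_
      have := mul_le_mul hdl (hcb x hx) (norm_nonneg _)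
        (by positivity)
      linarith
    have t2 : ⟪lamhat (x + s) - lam, c (x + s) - c x⟫ ≤ Llam * ‖s‖ * (Lc * ‖s‖) := by
      refine le_trans (real_inner_le_norm _ _) ?_
      exact mul_le_mul hdl hcd (norm_nonneg _) (by positivity)
    rw [hsplit]; linarith
  -- penalty decrease
  have ha : 0 < ‖c x‖ := by
    nlinarith [sq_nonneg (‖c (x + s)‖), norm_nonneg (c x), mul_pos hκn1 (mul_pos hωpos hωpos)]
  have ineq3 : ‖c (x + s)‖ - ‖c x‖ ≤ -(κn * ξ * ω) := by
    nlinarith [sq_nonneg (‖c x‖ - ‖c (x + s)‖), norm_nonneg (c (x + s)),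
      mul_pos hκn1 hωpos, hω1, ha]
  have hρpos : 0 ≤ ρ := by
    rw [hρ]
    have h1 : 0 < 1 / (κn * ξ) := by positivity
    have h2 : 0 < θN := lt_of_lt_of_le one_pos hθN
    nlinarith [mul_pos (mul_pos hκc hLlam) h2, mul_pos hκg h2,
      mul_pos (mul_pos hLlam hLc) (mul_pos (mul_pos h2 h2) hκω),
      mul_pos hLL (mul_pos (mul_pos h2 h2) hκω)]
  have hX : κn * ξ * ρ = (κg + κc * Llam) * θN + (LL / 2 + Llam * Lc) * θN ^ 2 * κω + η := by
    rw [hρ]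
    field_simp
  have hns2 : ‖s‖ ^ 2 ≤ θN ^ 2 * ω ^ 2 := by
    nlinarith [mul_self_le_mul_self (norm_nonneg s) hsb]
  have hωκ : ω ^ 2 ≤ ω * κω := by nlinarith
  have t5 : ρ * (‖c (x + s)‖ - ‖c x‖) ≤ -(ρ * (κn * ξ * ω)) := by
    have := mul_le_mul_of_nonneg_left ineq3 hρpos
    linarith
  have A1 : κg * ‖s‖ ≤ κg * (θN * ω) := mul_le_mul_of_nonneg_left hsb hκg.le
  have A2 : LL / 2 * ‖s‖ ^ 2 ≤ LL / 2 * (θN ^ 2 * ω ^ 2) :=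
    mul_le_mul_of_nonneg_left hns2 (by positivity)
  have A3 : Llam * ‖s‖ * κc ≤ Llam * (θN * ω) * κc :=
    mul_le_mul_of_nonneg_right (mul_le_mul_of_nonneg_left hsb hLlam.le) hκc.le
  have A4 : Llam * Lc * ‖s‖ ^ 2 ≤ Llam * Lc * (θN ^ 2 * ω ^ 2) :=
    mul_le_mul_of_nonneg_left hns2 (mul_nonneg hLlam.le hLc.le)
  have A5 : (LL / 2 + Llam * Lc) * θN ^ 2 * (ω ^ 2) ≤
      (LL / 2 + Llam * Lc) * θN ^ 2 * (ω * κω) := by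
    apply mul_le_mul_of_nonneg_left hωκ
    positivity
  have A7 : ρ * (κn * ξ * ω) =
      ((κg + κc * Llam) * θN + (LL / 2 + Llam * Lc) * θN ^ 2 * κω + η) * ω := by
    rw [← hX]; ring
  have hsplit2 : ⟪lamhat (x + s), c (x + s)⟫ =
      ⟪lam, c (x + s)⟫ + ⟪lamhat (x + s) - lam, c (x + s)⟫ := by
    rw [inner_sub_left]; ring
  rw [hsplit2]
  linarith [ineq1, ineq2, t5, A1, A2, A3, A4, A5, A7]
end

section
/- Let θ_N ≥ 1, θ_T ≥ 1, κ_n ∈ (0,1/2), κ_t ∈ (0,1/2], ξ ∈ (0,1], β > 0, ρ > 0, and set κ_tan = (θ_T²/2)(L_L + ρ·L_c) + β·θ_N·θ_T·(L_L + κ_J·L_λ + ρ·L_J) + β·θ_T·L_λ/ξ + θ_T²·L_c·L_λ. Suppose x ∈ O, α > 0, ω_T ≥ 0, ω_N ≥ 0 with ξ‖c(x)‖ ≤ ω_N ≤ β·α·ω_T; s_N ∈ ℝⁿ satisfies x + s_N ∈ O and either s_N = 0 or (‖s_N‖ ≤ θ_N·ω_N and (1/2)‖c(x+s_N)‖² ≤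 (1/2)‖c(x)‖² − κ_n·ω_N²); and s_T ∈ ℝⁿ satisfies x + s_N + s_T ∈ O, J(x)s_T = 0, ⟨g(x), s_T⟩ ≤ −κ_t·α·ω_T², and ‖s_T‖ ≤ θ_T·α·ω_T. Then ψ(x + s_N + s_T) − ψ(x + s_N) ≤ −κ_t·α·ω_T² + κ_tan·α²·ω_T². -/
open scoped RealInnerProductSpace

set_option maxHeartbeats 1600000 in
theorem stmt10 {n m : ℕ}
    (f : EuclideanSpace ℝ (Fin n) → ℝ)
    (c : EuclideanSpace ℝ (Fin n) → EuclideanSpace ℝ (Fin m))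
    (g : EuclideanSpace ℝ (Fin n) → EuclideanSpace ℝ (Fin n))
    (J : EuclideanSpace ℝ (Fin n) → (EuclideanSpace ℝ (Fin n) →L[ℝ] EuclideanSpace ℝ (Fin m)))
    -- `O` is the nonnegative orthant
    (O : Set (EuclideanSpace ℝ (Fin n))) (hO : O = {x | ∀ i, 0 ≤ x i})
    -- `f` and `c` are continuously differentiable on an open set `U ⊇ O`,
    -- with gradient `g x` and derivative `J x`
    (U : Set (EuclideanSpace ℝ (Fin n))) (hU : IsOpen U) (hOU : O ⊆ U)
    (hf : ∀ x ∈ U, HasGradientAt f (g x) x) (hgcont : ContinuousOn g U)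
    (hcder : ∀ x ∈ U, HasFDerivAt c (J x) x) (hJcont : ContinuousOn J U)
    -- least-squares multiplier
    (lamhat : EuclideanSpace ℝ (Fin n) → EuclideanSpace ℝ (Fin m))
    (hlam : ∀ x ∈ O,
      (J x) ((ContinuousLinearMap.adjoint (J x)) (lamhat x)) = -((J x) (g x)))
    (κg κc κlam κJ Lc Llam LL LJ : ℝ)
    (hκg : 0 < κg) (hκc : 0 < κc) (hκlam : 0 < κlam) (hκJ : 0 < κJ)
    (hLc : 0 < Lc) (hLlam : 0 < Llam) (hLL : 0 < LL) (hLJ : 0 < LJ)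
    (hgb : ∀ x ∈ O, ‖g x‖ ≤ κg)
    (hcb : ∀ x ∈ O, ‖c x‖ ≤ κc)
    (hcL : ∀ x ∈ O, ∀ y ∈ O, ‖c x - c y‖ ≤ Lc * ‖x - y‖)
    (hlb : ∀ x ∈ O, ‖lamhat x‖ ≤ κlam)
    (hlL : ∀ x ∈ O, ∀ y ∈ O, ‖lamhat x - lamhat y‖ ≤ Llam * ‖x - y‖)
    (hLLip : ∀ lam : EuclideanSpace ℝ (Fin m), ‖lam‖ ≤ κlam →
      ∀ x ∈ O, ∀ y ∈ O,
        ‖(g x + (ContinuousLinearMap.adjoint (J x)) lam)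
          - (g y + (ContinuousLinearMap.adjoint (J y)) lam)‖ ≤ LL * ‖x - y‖)
    (hJb : ∀ x ∈ O, ‖J x‖ ≤ κJ)
    (hJL : ∀ x ∈ O, ∀ y ∈ O, ‖J x - J y‖ ≤ LJ * ‖x - y‖)
    -- Taylor bound for `c`
    (hTaylor : ∀ x ∈ O, ∀ y ∈ O,
      ‖c y - c x - (J x) (y - x)‖ ≤ (Lc / 2) * ‖y - x‖ ^ 2)
    (θN θT κn κt ξ β ρ κtan : ℝ)
    (hθN : 1 ≤ θN) (hθT : 1 ≤ θT) (hκn1 : 0 < κn) (hκn2 : κn < 1/2)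
    (hκt1 : 0 < κt) (hκt2 : κt ≤ 1/2) (hξ1 : 0 < ξ) (hξ2 : ξ ≤ 1)
    (hβ : 0 < β) (hρ : 0 < ρ)
    (hκtan : κtan = (θT ^ 2 / 2) * (LL + ρ * Lc)
      + β * θN * θT * (LL + κJ * Llam + ρ * LJ)
      + β * θT * Llam / ξ + θT ^ 2 * Lc * Llam)
    (x : EuclideanSpace ℝ (Fin n)) (hx : x ∈ O)
    (α ωT ωN : ℝ) (hα : 0 < α) (hωT : 0 ≤ ωT) (hωN : 0 ≤ ωN)
    (hωN1 : ξ * ‖c x‖ ≤ ωN) (hωN2 : ωN ≤ β * α * ωT)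
    (sN : EuclideanSpace ℝ (Fin n)) (hsNO : x + sN ∈ O)
    (hsN : sN = 0 ∨
      (‖sN‖ ≤ θN * ωN ∧
        (1/2) * ‖c (x + sN)‖ ^ 2 ≤ (1/2) * ‖c x‖ ^ 2 - κn * ωN ^ 2))
    (sT : EuclideanSpace ℝ (Fin n)) (hsTO : x + sN + sT ∈ O)
    (hsT1 : (J x) sT = 0)
    (hsT2 : ⟪g x, sT⟫ ≤ -(κt * α * ωT ^ 2))
    (hsT3 : ‖sT‖ ≤ θT * α * ωT) :
    (f (x + sN + sT) + ⟪lamhat (x + sN + sT), c (x + sN + sT)⟫ + ρ * ‖c (x + sN + sT)‖)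
      - (f (x + sN) + ⟪lamhat (x + sN), c (x + sN)⟫ + ρ * ‖c (x + sN)‖)
      ≤ -(κt * α * ωT ^ 2) + κtan * α ^ 2 * ωT ^ 2 := by
  set y := x + sN with hy_def
  set z := y + sT with hz_def
  have hyO : y ∈ O := hsNO
  have hzO : z ∈ O := hsTO
  set lam := lamhat y with hlam_def
  have hlamb : ‖lam‖ ≤ κlam := hlb y hyO
  have hymx : y - x = sN := add_sub_cancel_left x sN
  have hzmy : z - y = sT := add_sub_cancel_left y sT
  -- the segment from y to z lies in O, hence in U
  have hseg : ∀ t ∈ Set.Icc (0:ℝ) 1, y + t • sT ∈ O := by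
    intro t ht
    have hyO' := hyO
    have hzO' := hzO
    rw [hO] at hyO' hzO' ⊢
    intro i
    have h1 : 0 ≤ y i := hyO' i
    have h2 : 0 ≤ y i + sT i := by simpa [hz_def, PiLp.add_apply] using hzO' i
    have : (y + t • sT) i = y i + t * sT i := by
      simp [PiLp.add_apply, PiLp.smul_apply, smul_eq_mul]
    rw [this]
    have h3 := mul_nonneg ht.1 h2
    have h4 := mul_nonneg (by linarith [ht.2] : (0:ℝ) ≤ 1 - t) h1
    linarith
  have hsegU : ∀ t ∈ Set.Icc (0:ℝ) 1, y + t • sT ∈ U := fun t ht => hOU (hseg t ht)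
  -- derivative of the restricted Lagrangian along the tangential segment
  have hderiv : ∀ t : ℝ, y + t • sT ∈ U →
      HasDerivAt (fun t : ℝ => f (y + t • sT) + ⟪lam, c (y + t • sT)⟫)
        (⟪g (y + t • sT) + (ContinuousLinearMap.adjoint (J (y + t • sT))) lam, sT⟫) t := by
    intro t hw
    set w := y + t • sT with hw_def
    have hγ : HasDerivAt (fun t : ℝ => y + t • sT) sT t := by
      simpa using ((hasDerivAt_id t).smul_const sT).const_add y
    have h1 : HasDerivAt (fun t : ℝ => f (y + t • sT)) ⟪g w, sT⟫ t := by
      have := (hf w hw).hasFDerivAt.comp_hasDerivAt t hγ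
      simpa [InnerProductSpace.toDual_apply_apply, Function.comp_def] using this
    have h2 : HasDerivAt (fun t : ℝ => c (y + t • sT)) ((J w) sT) t :=
      (hcder w hw).comp_hasDerivAt t hγ
    have h3 : HasDerivAt (fun t : ℝ => ⟪lam, c (y + t • sT)⟫) ⟪lam, (J w) sT⟫ t := by
      have := (innerSL ℝ lam).hasFDerivAt.comp_hasDerivAt t h2
      simpa [Function.comp_def] using this
    have hadj : ⟪g w + (ContinuousLinearMap.adjoint (J w)) lam, sT⟫
        = ⟪g w, sT⟫ + ⟪lam, (J w) sT⟫ := by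
      rw [inner_add_left, ContinuousLinearMap.adjoint_inner_left]
    rw [hadj]
    exact h1.add h3
  set K := ⟪g y + (ContinuousLinearMap.adjoint (J y)) lam, sT⟫ with hK_def
  -- quadratic Taylor-type bound for the Lagrangian with frozen multiplier
  have key : f z + ⟪lam, c z⟫ - (f y + ⟪lam, c y⟫) ≤ K + LL / 2 * ‖sT‖ ^ 2 := by
    set h := fun t : ℝ => f (y + t • sT) + ⟪lam, c (y + t • sT)⟫
      - t * K - LL / 2 * t ^ 2 * ‖sT‖ ^ 2 with hh_def
    have hhder : ∀ t ∈ Set.Icc (0:ℝ) 1, HasDerivAt h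
        (⟪g (y + t • sT) + (ContinuousLinearMap.adjoint (J (y + t • sT))) lam, sT⟫
          - K - LL * t * ‖sT‖ ^ 2) t := by
      intro t ht
      have h1 := hderiv t (hsegU t ht)
      have h2 : HasDerivAt (fun t : ℝ => t * K + LL / 2 * t ^ 2 * ‖sT‖ ^ 2)
          (K + LL * t * ‖sT‖ ^ 2) t := by
        have ha : HasDerivAt (fun t : ℝ => t * K) K t := by
          simpa using (hasDerivAt_id t).mul_const K
        have hb : HasDerivAt (fun t : ℝ => LL / 2 * t ^ 2 * ‖sT‖ ^ 2)
            (LL * t * ‖sT‖ ^ 2) t := by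
          have := ((hasDerivAt_pow 2 t).const_mul (LL / 2)).mul_const (‖sT‖ ^ 2)
          convert this using 1
          · rfl
          · rfl
          · ring
        simpa [Pi.add_def] using ha.add hb
      have h3 := h1.sub h2
      rw [hh_def]
      simpa [sub_sub, Pi.sub_def] using h3
    have hanti : AntitoneOn h (Set.Icc (0:ℝ) 1) := by
      apply antitoneOn_of_deriv_nonpos (convex_Icc 0 1)
      · intro t ht
        exact ((hhder t ht).continuousAt).continuousWithinAt
      · intro t ht
        rw [interior_Icc] at ht
        exact ((hhder t ⟨le_of_lt ht.1, le_of_lt ht.2⟩).differentiableAt).differentiableWithinAt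
      · intro t ht
        rw [interior_Icc] at ht
        have ht' : t ∈ Set.Icc (0:ℝ) 1 := ⟨le_of_lt ht.1, le_of_lt ht.2⟩
        rw [(hhder t ht').deriv]
        set w := y + t • sT with hw_def
        have hdiff : ⟪g w + (ContinuousLinearMap.adjoint (J w)) lam, sT⟫ - K
            = ⟪(g w + (ContinuousLinearMap.adjoint (J w)) lam)
              - (g y + (ContinuousLinearMap.adjoint (J y)) lam), sT⟫ := by
          rw [inner_sub_left]
        have hbd : ⟪(g w + (ContinuousLinearMap.adjoint (J w)) lam)
              - (g y + (ContinuousLinearMap.adjoint (J y)) lam), sT⟫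
            ≤ LL * t * ‖sT‖ ^ 2 := by
          have hle := real_inner_le_norm ((g w + (ContinuousLinearMap.adjoint (J w)) lam)
              - (g y + (ContinuousLinearMap.adjoint (J y)) lam)) sT
          have hlip := hLLip lam hlamb w (hseg t ht') y hyO
          have hwy : ‖w - y‖ = t * ‖sT‖ := by
            rw [hw_def, add_sub_cancel_left, norm_smul]
            simp [abs_of_pos ht.1]
          rw [hwy] at hlip
          have h6 := mul_le_mul_of_nonneg_right hlip (norm_nonneg sT)
          have h7 : LL * (t * ‖sT‖) * ‖sT‖ = LL * t * ‖sT‖ ^ 2 := by ring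
          linarith
        rw [hdiff] at *
        linarith
    have h10 := hanti (Set.left_mem_Icc.mpr zero_le_one) (Set.right_mem_Icc.mpr zero_le_one)
      zero_le_one
    have h0 : h 0 = f y + ⟪lam, c y⟫ := by simp [hh_def]
    have h1 : h 1 = f z + ⟪lam, c z⟫ - K - LL / 2 * ‖sT‖ ^ 2 := by
      simp [hh_def, hz_def]
    rw [h0, h1] at h10
    linarith
  -- bound the frozen-multiplier directional derivative
  have hKb : K ≤ ⟪g x, sT⟫ + LL * ‖sN‖ * ‖sT‖ := by
    have h1 : ⟪g x + (ContinuousLinearMap.adjoint (J x)) lam, sT⟫ = ⟪g x, sT⟫ := by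
      rw [inner_add_left, ContinuousLinearMap.adjoint_inner_left, hsT1, inner_zero_right,
        add_zero]
    have h2 : K - ⟪g x + (ContinuousLinearMap.adjoint (J x)) lam, sT⟫
        = ⟪(g y + (ContinuousLinearMap.adjoint (J y)) lam)
          - (g x + (ContinuousLinearMap.adjoint (J x)) lam), sT⟫ := by
      rw [inner_sub_left]
    have h3 := real_inner_le_norm ((g y + (ContinuousLinearMap.adjoint (J y)) lam)
      - (g x + (ContinuousLinearMap.adjoint (J x)) lam)) sT
    have h4 := hLLip lam hlamb y hyO x hx
    rw [hymx] at h4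
    have h5 : ‖(g y + (ContinuousLinearMap.adjoint (J y)) lam)
        - (g x + (ContinuousLinearMap.adjoint (J x)) lam)‖ * ‖sT‖ ≤ LL * ‖sN‖ * ‖sT‖ :=
      mul_le_mul_of_nonneg_right h4 (norm_nonneg sT)
    linarith [h2, h3, h5]
  -- bound on ‖c y‖
  have hcy_le : ‖c y‖ ≤ ‖c x‖ := by
    rcases hsN with h | h
    · simp [hy_def, h]
    · have h1 : ‖c y‖ ^ 2 ≤ ‖c x‖ ^ 2 := by
        have h2 : 0 ≤ κn * ωN ^ 2 := mul_nonneg hκn1.le (sq_nonneg ωN)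
        linarith [h.2]
      exact (pow_le_pow_iff_left₀ (norm_nonneg _) (norm_nonneg _) two_ne_zero).mp h1
  -- ‖c z‖ bounds
  have hczy : ‖c z‖ ≤ ‖c y‖ + Lc * ‖sT‖ := by
    have h1 := hcL z hzO y hyO
    rw [hzmy] at h1
    have := norm_sub_norm_le (c z) (c y)
    linarith
  have hJysT : ‖(J y) sT‖ ≤ LJ * ‖sN‖ * ‖sT‖ := by
    have h1 : (J y) sT = (J y - J x) sT := by
      rw [ContinuousLinearMap.sub_apply, hsT1, sub_zero]
    rw [h1]
    calc ‖(J y - J x) sT‖ ≤ ‖J y - J x‖ * ‖sT‖ := (J y - J x).le_opNorm sT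
      _ ≤ (LJ * ‖sN‖) * ‖sT‖ := by
          apply mul_le_mul_of_nonneg_right _ (norm_nonneg sT)
          have := hJL y hyO x hx
          rwa [hymx] at this
      _ = LJ * ‖sN‖ * ‖sT‖ := by ring
  have hczb : ‖c z‖ ≤ ‖c y‖ + Lc / 2 * ‖sT‖ ^ 2 + LJ * ‖sN‖ * ‖sT‖ := by
    have h1 := hTaylor y hyO z hzO
    rw [hzmy] at h1
    have h2 : c z = (c z - c y - (J y) sT) + (J y) sT + c y := by abel
    calc ‖c z‖ = ‖(c z - c y - (J y) sT) + (J y) sT + c y‖ := by rw [← h2]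
      _ ≤ ‖(c z - c y - (J y) sT) + (J y) sT‖ + ‖c y‖ := norm_add_le _ _
      _ ≤ ‖c z - c y - (J y) sT‖ + ‖(J y) sT‖ + ‖c y‖ := by
          linarith [norm_add_le (c z - c y - (J y) sT) ((J y) sT)]
      _ ≤ ‖c y‖ + Lc / 2 * ‖sT‖ ^ 2 + LJ * ‖sN‖ * ‖sT‖ := by linarith
  -- multiplier difference term
  have hBb : ⟪lamhat z - lam, c z⟫ ≤ Llam * ‖sT‖ * (‖c y‖ + Lc * ‖sT‖) := by
    have h1 := real_inner_le_norm (lamhat z - lam) (c z)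
    have h2 := hlL z hzO y hyO
    rw [hzmy] at h2
    have h3 : ‖lamhat z - lam‖ * ‖c z‖ ≤ (Llam * ‖sT‖) * (‖c y‖ + Lc * ‖sT‖) := by
      apply mul_le_mul h2 hczy (norm_nonneg (c z))
      positivity
    calc ⟪lamhat z - lam, c z⟫ ≤ ‖lamhat z - lam‖ * ‖c z‖ := h1
      _ ≤ (Llam * ‖sT‖) * (‖c y‖ + Lc * ‖sT‖) := h3
      _ = Llam * ‖sT‖ * (‖c y‖ + Lc * ‖sT‖) := by ring
  -- scalar abbreviations and bounds
  have ha : 0 ≤ α * ωT := mul_nonneg hα.le hωT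
  have hsTb : ‖sT‖ ≤ θT * (α * ωT) := by linarith [hsT3]
  have hsNb : ‖sN‖ ≤ θN * β * (α * ωT) := by
    rcases hsN with h | h
    · rw [h]
      simp only [norm_zero]
      positivity
    · have h1 : ‖sN‖ ≤ θN * ωN := h.1
      have h2 : θN * ωN ≤ θN * (β * α * ωT) :=
        mul_le_mul_of_nonneg_left hωN2 (by linarith : (0:ℝ) ≤ θN)
      have h3 : θN * (β * α * ωT) = θN * β * (α * ωT) := by ring
      linarith
  have hcyb : ξ * ‖c y‖ ≤ β * (α * ωT) := by
    have h1 : ξ * ‖c y‖ ≤ ξ * ‖c x‖ := mul_le_mul_of_nonneg_left hcy_le hξ1.le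
    have h2 : β * α * ωT = β * (α * ωT) := by ring
    linarith [hωN1, hωN2]
  -- decomposition identity
  have decomp : (f z + ⟪lamhat z, c z⟫ + ρ * ‖c z‖) - (f y + ⟪lamhat y, c y⟫ + ρ * ‖c y‖)
      = (f z + ⟪lam, c z⟫ - (f y + ⟪lam, c y⟫)) + ⟪lamhat z - lam, c z⟫
        + ρ * (‖c z‖ - ‖c y‖) := by
    rw [inner_sub_left, ← hlam_def]
    ring
  rw [decomp]
  -- collect everything
  have hT2 : ‖sT‖ ^ 2 ≤ θT ^ 2 * (α ^ 2 * ωT ^ 2) := by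
    have h1 := pow_le_pow_left₀ (norm_nonneg sT) hsTb 2
    calc ‖sT‖ ^ 2 ≤ (θT * (α * ωT)) ^ 2 := h1
      _ = θT ^ 2 * (α ^ 2 * ωT ^ 2) := by ring
  have hNT : ‖sN‖ * ‖sT‖ ≤ θN * β * θT * (α ^ 2 * ωT ^ 2) := by
    have h1 : ‖sN‖ * ‖sT‖ ≤ (θN * β * (α * ωT)) * (θT * (α * ωT)) :=
      mul_le_mul hsNb hsTb (norm_nonneg sT) (by positivity)
    calc ‖sN‖ * ‖sT‖ ≤ (θN * β * (α * ωT)) * (θT * (α * ωT)) := h1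
      _ = θN * β * θT * (α ^ 2 * ωT ^ 2) := by ring
  have hcyT : ‖sT‖ * ‖c y‖ ≤ θT * β * (α ^ 2 * ωT ^ 2) / ξ := by
    have hcy' : ‖c y‖ ≤ β * (α * ωT) / ξ := by
      rw [le_div_iff₀ hξ1]
      linarith [hcyb]
    have h1 : ‖sT‖ * ‖c y‖ ≤ (θT * (α * ωT)) * (β * (α * ωT) / ξ) :=
      mul_le_mul hsTb hcy' (norm_nonneg (c y)) (by positivity)
    calc ‖sT‖ * ‖c y‖ ≤ (θT * (α * ωT)) * (β * (α * ωT) / ξ) := h1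
      _ = θT * β * (α ^ 2 * ωT ^ 2) / ξ := by ring
  have E1 : LL / 2 * ‖sT‖ ^ 2 ≤ LL / 2 * (θT ^ 2 * (α ^ 2 * ωT ^ 2)) :=
    mul_le_mul_of_nonneg_left hT2 (by positivity)
  have E2 : LL * (‖sN‖ * ‖sT‖) ≤ LL * (θN * β * θT * (α ^ 2 * ωT ^ 2)) :=
    mul_le_mul_of_nonneg_left hNT hLL.le
  have E3 : Llam * (‖sT‖ * ‖c y‖) ≤ Llam * (θT * β * (α ^ 2 * ωT ^ 2) / ξ) :=
    mul_le_mul_of_nonneg_left hcyT hLlam.le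
  have E4 : Llam * Lc * (‖sT‖ ^ 2) ≤ Llam * Lc * (θT ^ 2 * (α ^ 2 * ωT ^ 2)) :=
    mul_le_mul_of_nonneg_left hT2 (by positivity)
  have E5 : ρ * (Lc / 2) * ‖sT‖ ^ 2 ≤ ρ * (Lc / 2) * (θT ^ 2 * (α ^ 2 * ωT ^ 2)) :=
    mul_le_mul_of_nonneg_left hT2 (by positivity)
  have E6 : ρ * LJ * (‖sN‖ * ‖sT‖) ≤ ρ * LJ * (θN * β * θT * (α ^ 2 * ωT ^ 2)) :=
    mul_le_mul_of_nonneg_left hNT (by positivity)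
  have E7 : (0:ℝ) ≤ β * θN * θT * (κJ * Llam) * (α ^ 2 * ωT ^ 2) := by positivity
  have hBb' : ⟪lamhat z - lam, c z⟫ ≤ Llam * (‖sT‖ * ‖c y‖) + Llam * Lc * ‖sT‖ ^ 2 := by
    have h1 : Llam * ‖sT‖ * (‖c y‖ + Lc * ‖sT‖) = Llam * (‖sT‖ * ‖c y‖) + Llam * Lc * ‖sT‖ ^ 2 := by
      ring
    linarith [hBb]
  have hCb : ρ * (‖c z‖ - ‖c y‖) ≤ ρ * (Lc / 2) * ‖sT‖ ^ 2 + ρ * LJ * (‖sN‖ * ‖sT‖) := by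
    have h1 : ‖c z‖ - ‖c y‖ ≤ Lc / 2 * ‖sT‖ ^ 2 + LJ * (‖sN‖ * ‖sT‖) := by linarith
    have h2 := mul_le_mul_of_nonneg_left h1 hρ.le
    have h3 : ρ * (Lc / 2 * ‖sT‖ ^ 2 + LJ * (‖sN‖ * ‖sT‖))
        = ρ * (Lc / 2) * ‖sT‖ ^ 2 + ρ * LJ * (‖sN‖ * ‖sT‖) := by ring
    linarith
  rw [hκtan]
  have Ediv : β * θT * Llam / ξ * α ^ 2 * ωT ^ 2
      = Llam * (θT * β * (α ^ 2 * ωT ^ 2) / ξ) := by ring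
  linarith [key, hKb, hsT2, hBb', hCb, E1, E2, E3, E4, E5, E6, E7, Ediv]
end

section
/- For every m ∈ ℕ, the sum from τ = 0 to m of α(τ)·ω(τ)² is at least η·√ς·(√(1 + Γ(m+1)/ς) − 1). -/
theorem stmt11
    (η ς : ℝ) (hη : 0 < η) (hς : 0 < ς)
    (ω Γ α : ℕ → ℝ)
    (hΓ0 : Γ 0 = 0)
    (hΓ : ∀ τ, Γ (τ + 1) = Γ τ + ω τ ^ 2)
    (hα : ∀ τ, α τ = η / Real.sqrt (ς + Γ (τ + 1))) :
    ∀ m : ℕ,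
      η * Real.sqrt ς * (Real.sqrt (1 + Γ (m + 1) / ς) - 1)
        ≤ ∑ τ ∈ Finset.range (m + 1), α τ * ω τ ^ 2 := by
  have hΓnn : ∀ τ, 0 ≤ Γ τ := by
    intro τ
    induction τ with
    | zero => simp [hΓ0]
    | succ n ih => rw [hΓ]; positivity
  have step : ∀ τ, η * (Real.sqrt (ς + Γ (τ + 1)) - Real.sqrt (ς + Γ τ))
      ≤ α τ * ω τ ^ 2 := by
    intro τ
    set a := Real.sqrt (ς + Γ (τ + 1)) with ha
    set b := Real.sqrt (ς + Γ τ) with hb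
    have hapos : 0 < a := Real.sqrt_pos.2 (by have := hΓnn (τ + 1); linarith)
    have hbnn : 0 ≤ b := Real.sqrt_nonneg _
    have ha2 : a ^ 2 = ς + Γ (τ + 1) := Real.sq_sqrt (by have := hΓnn (τ + 1); linarith)
    have hb2 : b ^ 2 = ς + Γ τ := Real.sq_sqrt (by have := hΓnn τ; linarith)
    have hdiff : a ^ 2 - b ^ 2 = ω τ ^ 2 := by rw [ha2, hb2, hΓ]; ring
    have hab : b ≤ a := Real.sqrt_le_sqrt (by rw [hΓ]; nlinarith [sq_nonneg (ω τ)])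
    rw [hα, div_mul_eq_mul_div, le_div_iff₀ hapos]
    nlinarith [mul_nonneg (mul_nonneg hη.le (sub_nonneg.2 hab)) hbnn]
  have key : ∀ m : ℕ, η * (Real.sqrt (ς + Γ (m + 1)) - Real.sqrt ς)
      ≤ ∑ τ ∈ Finset.range (m + 1), α τ * ω τ ^ 2 := by
    intro m
    induction m with
    | zero =>
      simpa [hΓ0] using step 0
    | succ n ih =>
      rw [Finset.sum_range_succ]
      have := step (n + 1)
      linarith
  intro m
  have hrw : Real.sqrt ς * Real.sqrt (1 + Γ (m + 1) / ς)
      = Real.sqrt (ς + Γ (m + 1)) := by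
    rw [← Real.sqrt_mul hς.le]
    congr 1
    field_simp
  calc η * Real.sqrt ς * (Real.sqrt (1 + Γ (m + 1) / ς) - 1)
      = η * (Real.sqrt ς * Real.sqrt (1 + Γ (m + 1) / ς) - Real.sqrt ς) := by ring
    _ = η * (Real.sqrt (ς + Γ (m + 1)) - Real.sqrt ς) := by rw [hrw]
    _ ≤ _ := key m
end

section
/- For every m ∈ ℕ, the sum from τ = 0 to m of α(τ)²·ω(τ)² is at most η²·log(1 + Γ(m+1)/ς). -/
theorem stmt12
    (η ς : ℝ) (hη : 0 < η) (hς : 0 < ς)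
    (ω Γ α : ℕ → ℝ)
    (hΓ0 : Γ 0 = 0)
    (hΓ : ∀ τ, Γ (τ + 1) = Γ τ + ω τ ^ 2)
    (hα : ∀ τ, α τ = η / Real.sqrt (ς + Γ (τ + 1))) :
    ∀ m : ℕ,
      ∑ τ ∈ Finset.range (m + 1), α τ ^ 2 * ω τ ^ 2
        ≤ η ^ 2 * Real.log (1 + Γ (m + 1) / ς) := by
  have hΓnn : ∀ τ, 0 ≤ Γ τ := by
    intro τ
    induction τ with
    | zero => simp [hΓ0]
    | succ n ih => rw [hΓ]; positivity
  have hpos : ∀ τ, 0 < ς + Γ τ := fun τ => by have := hΓnn τ; linarith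
  have key : ∀ τ, α τ ^ 2 * ω τ ^ 2
      ≤ η ^ 2 * (Real.log (ς + Γ (τ + 1)) - Real.log (ς + Γ τ)) := by
    intro τ
    have hb := hpos (τ + 1)
    have ha := hpos τ
    have hα2 : α τ ^ 2 = η ^ 2 / (ς + Γ (τ + 1)) := by
      rw [hα, div_pow, Real.sq_sqrt hb.le]
    have hlog : Real.log ((ς + Γ τ) / (ς + Γ (τ + 1))) ≤
        (ς + Γ τ) / (ς + Γ (τ + 1)) - 1 :=
      Real.log_le_sub_one_of_pos (by positivity)
    rw [Real.log_div ha.ne' hb.ne'] at hlog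
    have h1 : ω τ ^ 2 / (ς + Γ (τ + 1))
        ≤ Real.log (ς + Γ (τ + 1)) - Real.log (ς + Γ τ) := by
      have hb' := hΓ τ
      have : (ς + Γ τ) / (ς + Γ (τ + 1)) = 1 - ω τ ^ 2 / (ς + Γ (τ + 1)) := by
        field_simp; linarith
      rw [this] at hlog; linarith
    rw [hα2]
    calc η ^ 2 / (ς + Γ (τ + 1)) * ω τ ^ 2
        = η ^ 2 * (ω τ ^ 2 / (ς + Γ (τ + 1))) := by ring
      _ ≤ η ^ 2 * (Real.log (ς + Γ (τ + 1)) - Real.log (ς + Γ τ)) := by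
          apply mul_le_mul_of_nonneg_left h1 (by positivity)
  intro m
  have hrhs : η ^ 2 * Real.log (1 + Γ (m + 1) / ς)
      = η ^ 2 * (Real.log (ς + Γ (m + 1)) - Real.log ς) := by
    rw [← Real.log_div (hpos (m + 1)).ne' hς.ne']
    congr 2
    field_simp
  rw [hrhs]
  calc ∑ τ ∈ Finset.range (m + 1), α τ ^ 2 * ω τ ^ 2
      ≤ ∑ τ ∈ Finset.range (m + 1),
          η ^ 2 * (Real.log (ς + Γ (τ + 1)) - Real.log (ς + Γ τ)) :=
        Finset.sum_le_sum fun τ _ => key τ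
    _ = η ^ 2 * (Real.log (ς + Γ (m + 1)) - Real.log (ς + Γ 0)) := by
        rw [← Finset.mul_sum, Finset.sum_range_sub (fun n => Real.log (ς + Γ n))]
    _ = η ^ 2 * (Real.log (ς + Γ (m + 1)) - Real.log ς) := by rw [hΓ0]; ring_nf
end

section
/- For every k ∈ ℕ: √(1 + Γ(k+1)/ς) + Σ_{ν ≤ k, ν ∈ N} ω_N(ν) ≤ κ_gap + (κ_tan/(κ_t·√ς))·log(1 + Γ(k+1)/ς). -/
lemma aux_sqrt14 {a b : ℝ} (hb : 0 < b) (hab : b ≤ a) :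
    Real.sqrt a - Real.sqrt b ≤ (a - b) / Real.sqrt a := by
  have ha : 0 < a := lt_of_lt_of_le hb hab
  have hsa : 0 < Real.sqrt a := Real.sqrt_pos.mpr ha
  rw [le_div_iff₀ hsa]
  nlinarith [Real.sq_sqrt ha.le, Real.sq_sqrt hb.le,
    mul_nonneg (Real.sqrt_nonneg b) (sub_nonneg.mpr (Real.sqrt_le_sqrt hab))]

lemma aux_log14 {a b : ℝ} (hb : 0 < b) (hab : b ≤ a) :
    (a - b) / a ≤ Real.log a - Real.log b := by
  have ha : 0 < a := lt_of_lt_of_le hb hab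
  have h := Real.log_le_sub_one_of_pos (div_pos hb ha)
  rw [Real.log_div hb.ne' ha.ne'] at h
  have h2 : (a - b) / a = 1 - b / a := by field_simp
  linarith

theorem stmt14
    (η ς β κt κtan ξ : ℝ)
    (hη1 : 0 < η) (hη2 : η ≤ 1) (hς1 : 0 < ς) (hς2 : ς ≤ 1/2) (hβ : 0 < β)
    (hκt1 : 0 < κt) (hκt2 : κt ≤ 1/2) (hκtan : 0 < κtan)
    (hξ1 : 0 < ξ) (hξ2 : ξ ≤ 1)
    (hκtς : κt * Real.sqrt ς ≤ 1)
    (ωT ωN : ℕ → ℝ) (hωT : ∀ k, 0 ≤ ωT k) (hωN : ∀ k, 0 ≤ ωN k)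
    (T N : Set ℕ) [DecidablePred (· ∈ T)] [DecidablePred (· ∈ N)]
    (Γ α : ℕ → ℝ)
    (hΓ0 : Γ 0 = 0)
    (hΓT : ∀ k ∈ T, Γ (k + 1) = Γ k + ωT k ^ 2)
    (hΓN : ∀ k, k ∉ T → Γ (k + 1) = Γ k)
    (hα : ∀ k, α k = η / Real.sqrt (Γ k + ωT k ^ 2 + ς))
    (hswitch : ∀ k, k ∈ T ↔ ωN k ≤ β * α k * ωT k)
    (hTN : ∀ k, k ∉ T → k ∈ N)
    (ψ ψp : ℕ → ℝ)
    (hψN : ∀ k ∈ N, ψp k - ψ k ≤ -(η * ωN k))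
    (hψN' : ∀ k, k ∉ N → ψp k = ψ k)
    (hψT : ∀ k ∈ T, ψ (k + 1) - ψp k ≤ -(κt * α k * ωT k ^ 2) + κtan * α k ^ 2 * ωT k ^ 2)
    (hψT' : ∀ k, k ∉ T → ψ (k + 1) = ψp k)
    (ψlow : ℝ) (hlow : ∀ k, ψlow ≤ ψ k)
    (κgap : ℝ) (hκgap : κgap = (1 + ψ 0 - ψlow) / (η * κt * Real.sqrt ς)) :
    ∀ k : ℕ,
      Real.sqrt (1 + Γ (k + 1) / ς)
          + ∑ ν ∈ (Finset.range (k + 1)).filter (· ∈ N), ωN ν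
        ≤ κgap + (κtan / (κt * Real.sqrt ς)) * Real.log (1 + Γ (k + 1) / ς) := by
  have hsς : 0 < Real.sqrt ς := Real.sqrt_pos.mpr hς1
  -- Γ is nonnegative
  have hΓnn : ∀ k, 0 ≤ Γ k := by
    intro k
    induction k with
    | zero => rw [hΓ0]
    | succ n ih =>
      by_cases hT : n ∈ T
      · rw [hΓT n hT]; nlinarith [sq_nonneg (ωT n)]
      · rw [hΓN n hT]; exact ih
  -- ψ descent per step
  have hψp : ∀ k, ψp k ≤ ψ k - η * (if k ∈ N then ωN k else 0) := by
    intro k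
    by_cases hN : k ∈ N
    · simp only [hN, if_pos]; linarith [hψN k hN]
    · simp only [hN, if_neg, not_false_iff]; rw [hψN' k hN]; simp
  -- main potential inequality by induction
  have hmain : ∀ k,
      η * (∑ ν ∈ (Finset.range k).filter (· ∈ N), ωN ν)
        + κt * η * (Real.sqrt (Γ k + ς) - Real.sqrt ς)
      ≤ ψ 0 - ψ k + κtan * η ^ 2 * (Real.log (Γ k + ς) - Real.log ς) := by
    intro k
    induction k with
    | zero => simp [hΓ0]
    | succ n ih =>
      have hsum : ∀ m : ℕ, ∑ ν ∈ (Finset.range m).filter (· ∈ N), ωN ν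
          = ∑ ν ∈ Finset.range m, if ν ∈ N then ωN ν else 0 := by
        intro m; exact Finset.sum_filter _ _
      rw [hsum, Finset.sum_range_succ, ← hsum]
      -- step inequality
      have hstep : η * (if n ∈ N then ωN n else 0)
          + κt * η * (Real.sqrt (Γ (n + 1) + ς) - Real.sqrt (Γ n + ς))
          ≤ ψ n - ψ (n + 1)
            + κtan * η ^ 2 * (Real.log (Γ (n + 1) + ς) - Real.log (Γ n + ς)) := by
        by_cases hT : n ∈ T
        · -- tangential step
          have hA : Γ (n + 1) + ς = (Γ n + ς) + ωT n ^ 2 := by rw [hΓT n hT]; ring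
          set B := Γ n + ς with hBdef
          have hBpos : 0 < B := by have := hΓnn n; simp only [hBdef]; linarith
          have hBA : B ≤ B + ωT n ^ 2 := by nlinarith [sq_nonneg (ωT n)]
          have hApos : 0 < B + ωT n ^ 2 := lt_of_lt_of_le hBpos hBA
          have hsA : 0 < Real.sqrt (B + ωT n ^ 2) := Real.sqrt_pos.mpr hApos
          have hαval : α n = η / Real.sqrt (B + ωT n ^ 2) := by
            rw [hα n]; congr 1; congr 1; ring
          have hsqrt := aux_sqrt14 hBpos hBA
          have hlog := aux_log14 hBpos hBA
          have hdiff : B + ωT n ^ 2 - B = ωT n ^ 2 := by ring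
          rw [hdiff] at hsqrt hlog
          have hψstep := hψT n hT
          rw [hαval] at hψstep
          have hsq : (η / Real.sqrt (B + ωT n ^ 2)) ^ 2 = η ^ 2 / (B + ωT n ^ 2) := by
            rw [div_pow, Real.sq_sqrt hApos.le]
          rw [hsq] at hψstep
          have hψpn := hψp n
          rw [hA]
          have h1 : κt * η * (Real.sqrt (B + ωT n ^ 2) - Real.sqrt B)
              ≤ κt * (η / Real.sqrt (B + ωT n ^ 2)) * ωT n ^ 2 := by
            have := mul_le_mul_of_nonneg_left hsqrt (by positivity : (0:ℝ) ≤ κt * η)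
            calc κt * η * (Real.sqrt (B + ωT n ^ 2) - Real.sqrt B)
                ≤ κt * η * (ωT n ^ 2 / Real.sqrt (B + ωT n ^ 2)) := this
              _ = κt * (η / Real.sqrt (B + ωT n ^ 2)) * ωT n ^ 2 := by ring
          have h2 : κtan * (η ^ 2 / (B + ωT n ^ 2)) * ωT n ^ 2
              ≤ κtan * η ^ 2 * (Real.log (B + ωT n ^ 2) - Real.log B) := by
            have := mul_le_mul_of_nonneg_left hlog (by positivity : (0:ℝ) ≤ κtan * η ^ 2)
            calc κtan * (η ^ 2 / (B + ωT n ^ 2)) * ωT n ^ 2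
                = κtan * η ^ 2 * (ωT n ^ 2 / (B + ωT n ^ 2)) := by ring
              _ ≤ κtan * η ^ 2 * (Real.log (B + ωT n ^ 2) - Real.log B) := this
          linarith
        · -- normal step
          have hN : n ∈ N := hTN n hT
          have hΓeq : Γ (n + 1) = Γ n := hΓN n hT
          have hψeq : ψ (n + 1) = ψp n := hψT' n hT
          have hψpn := hψp n
          simp only [hN, if_pos] at hψpn ⊢
          rw [hΓeq, hψeq]
          simp only [sub_self, mul_zero]
          linarith
      linarith
  -- conclude
  intro k
  set S := ∑ ν ∈ (Finset.range (k + 1)).filter (· ∈ N), ωN ν with hSdef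
  have hSnn : 0 ≤ S := Finset.sum_nonneg fun ν _ => hωN ν
  set A := Γ (k + 1) + ς with hAdef
  have hApos : 0 < A := by have := hΓnn (k + 1); positivity
  have hςA : ς ≤ A := by have := hΓnn (k + 1); simp [hAdef]; linarith
  have hform : 1 + Γ (k + 1) / ς = A / ς := by
    field_simp [hAdef]; ring
  have hsqrtform : Real.sqrt (1 + Γ (k + 1) / ς) = Real.sqrt A / Real.sqrt ς := by
    rw [hform, Real.sqrt_div hApos.le]
  have hlogform : Real.log (1 + Γ (k + 1) / ς) = Real.log A - Real.log ς := by
    rw [hform, Real.log_div hApos.ne' hς1.ne']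
  have hL : 0 ≤ Real.log A - Real.log ς :=
    sub_nonneg.mpr (Real.log_le_log hς1 hςA)
  have hmk := hmain (k + 1)
  rw [← hAdef] at hmk
  rw [← hSdef] at hmk
  have hlk := hlow (k + 1)
  rw [hsqrtform, hlogform]
  -- multiply through by η * κt * √ς
  have hc : 0 < η * κt * Real.sqrt ς := by positivity
  rw [← mul_le_mul_iff_right₀ hc]
  have e1 : η * κt * Real.sqrt ς * (Real.sqrt A / Real.sqrt ς + S)
      = η * κt * Real.sqrt A + η * κt * Real.sqrt ς * S := by
    field_simp
  have e2 : η * κt * Real.sqrt ς * (κgap + κtan / (κt * Real.sqrt ς) * (Real.log A - Real.log ς))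
      = (1 + ψ 0 - ψlow) + η * κtan * (Real.log A - Real.log ς) := by
    rw [hκgap]; field_simp
  rw [e1, e2]
  have hη2' : η * κt * Real.sqrt ς * S ≤ η * S := by
    have h := mul_le_mul_of_nonneg_left hκtς (mul_nonneg hη1.le hSnn)
    linarith only [h]
  have hκς : η * κt * Real.sqrt ς ≤ 1 := by
    have h := mul_le_mul hη2 hκtς (mul_nonneg hκt1.le hsς.le) zero_le_one
    linarith only [h]
  have hLη : κtan * η ^ 2 * (Real.log A - Real.log ς) ≤ η * κtan * (Real.log A - Real.log ς) := by
    have h := mul_le_mul_of_nonneg_right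
      (mul_le_mul_of_nonneg_left hη2 (mul_nonneg hη1.le hκtan.le)) hL
    calc κtan * η ^ 2 * (Real.log A - Real.log ς)
        = η * κtan * η * (Real.log A - Real.log ς) := by ring
      _ ≤ η * κtan * 1 * (Real.log A - Real.log ς) := h
      _ = η * κtan * (Real.log A - Real.log ς) := by ring
  linarith only [hmk, hlk, hη2', hκς, hLη]
end

section
/- For every k ∈ ℕ: √(ς + Γ(k+1)) ≤ κ_T, where κ_T = 2·κ_gap·√ς + (4κ_tan/κ_t)·[log(4κ_tan/(κ_t·√ς)) − 1]. -/
/-- `1 - 1/x ≤ log x` for `x > 0`. -/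
lemma aux_log_lb (x : ℝ) (hx : 0 < x) : 1 - 1/x ≤ Real.log x := by
  have h := Real.log_le_sub_one_of_pos (show (0:ℝ) < 1/x by positivity)
  rw [Real.log_div one_ne_zero (ne_of_gt hx), Real.log_one] at h
  linarith

/-- For `0 < t ≤ T`, `t log t - t ≤ T log T - T + 1`. -/
lemma aux_h (t Tb : ℝ) (ht : 0 < t) (htT : t ≤ Tb) :
    t * Real.log t - t ≤ Tb * Real.log Tb - Tb + 1 := by
  have hT : 0 < Tb := lt_of_lt_of_le ht htT
  have hTinv : Tb * (1/Tb) = 1 := by field_simp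
  have hlbT := aux_log_lb Tb hT
  have hTlog : Tb - 1 ≤ Tb * Real.log Tb := by nlinarith
  by_cases h1 : t ≤ 1
  · have hlt : Real.log t ≤ 0 := Real.log_nonpos (le_of_lt ht) h1
    have : t * Real.log t ≤ 0 := mul_nonpos_of_nonneg_of_nonpos (le_of_lt ht) hlt
    linarith
  · push_neg at h1
    have hlog : Real.log t ≤ Real.log Tb := Real.log_le_log ht htT
    have h2 : t * Real.log t ≤ t * Real.log Tb :=
      mul_le_mul_of_nonneg_left hlog (le_of_lt ht)
    -- need: t log Tb - t ≤ Tb log Tb - Tb + 1, i.e. (Tb - t)(1 - log Tb) ≤ 1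
    have h3 : (Tb - t) * (1 - Real.log Tb) ≤ (Tb - t) * (1/Tb) := by
      apply mul_le_mul_of_nonneg_left (by linarith) (by linarith)
    have h4 : (Tb - t) * (1/Tb) ≤ Tb * (1/Tb) := by
      apply mul_le_mul_of_nonneg_right (by linarith) (by positivity)
    nlinarith

set_option maxHeartbeats 1000000 in
theorem stmt15
    (η ς β κt κtan ξ : ℝ)
    (hη1 : 0 < η) (hη2 : η ≤ 1) (hς1 : 0 < ς) (hς2 : ς ≤ 1/2) (hβ : 0 < β)
    (hκt1 : 0 < κt) (hκt2 : κt ≤ 1/2) (hκtan : 0 < κtan)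
    (hξ1 : 0 < ξ) (hξ2 : ξ ≤ 1)
    (hκtς : κt * Real.sqrt ς ≤ 1)
    (ωT ωN : ℕ → ℝ) (hωT : ∀ k, 0 ≤ ωT k) (hωN : ∀ k, 0 ≤ ωN k)
    (T N : Set ℕ) [DecidablePred (· ∈ T)] [DecidablePred (· ∈ N)]
    (Γ α : ℕ → ℝ)
    (hΓ0 : Γ 0 = 0)
    (hΓT : ∀ k ∈ T, Γ (k + 1) = Γ k + ωT k ^ 2)
    (hΓN : ∀ k, k ∉ T → Γ (k + 1) = Γ k)
    (hα : ∀ k, α k = η / Real.sqrt (Γ k + ωT k ^ 2 + ς))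
    (hswitch : ∀ k, k ∈ T ↔ ωN k ≤ β * α k * ωT k)
    (hTN : ∀ k, k ∉ T → k ∈ N)
    (ψ ψp : ℕ → ℝ)
    (hψN : ∀ k ∈ N, ψp k - ψ k ≤ -(η * ωN k))
    (hψN' : ∀ k, k ∉ N → ψp k = ψ k)
    (hψT : ∀ k ∈ T, ψ (k + 1) - ψp k ≤ -(κt * α k * ωT k ^ 2) + κtan * α k ^ 2 * ωT k ^ 2)
    (hψT' : ∀ k, k ∉ T → ψ (k + 1) = ψp k)
    (ψlow : ℝ) (hlow : ∀ k, ψlow ≤ ψ k)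
    (κgap : ℝ) (hκgap : κgap = (1 + ψ 0 - ψlow) / (η * κt * Real.sqrt ς))
    (κT : ℝ)
    (hκT : κT = 2 * κgap * Real.sqrt ς
      + (4 * κtan / κt) * (Real.log (4 * κtan / (κt * Real.sqrt ς)) - 1)) :
    ∀ k : ℕ, Real.sqrt (ς + Γ (k + 1)) ≤ κT := by
  -- basic positivity facts
  have hsς : 0 < Real.sqrt ς := Real.sqrt_pos.mpr hς1
  have hsς1 : Real.sqrt ς ≤ 1 := Real.sqrt_le_one.mpr (by linarith)
  -- Γ is nonnegative
  have hΓnn : ∀ k, 0 ≤ Γ k := by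
    intro k
    induction k with
    | zero => rw [hΓ0]
    | succ n ih =>
      by_cases h : n ∈ T
      · rw [hΓT n h]; nlinarith [sq_nonneg (ωT n)]
      · rw [hΓN n h]; exact ih
  set s : ℕ → ℝ := fun k => Real.sqrt (ς + Γ k) with hs
  have hspos : ∀ k, 0 < s k := fun k => Real.sqrt_pos.mpr (by nlinarith [hΓnn k])
  have hssq : ∀ k, s k ^ 2 = ς + Γ k := fun k => Real.sq_sqrt (by nlinarith [hΓnn k])
  have hs0 : s 0 = Real.sqrt ς := by simp [hs, hΓ0]
  -- step: ψ decreases outside T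
  have hψoutT : ∀ k, k ∉ T → ψ (k + 1) ≤ ψ k := by
    intro k hk
    have h1 := hψN k (hTN k hk)
    have h2 := hψT' k hk
    have h3 := mul_nonneg (le_of_lt hη1) (hωN k)
    linarith
  -- step: combined decrease on T
  have hψinT : ∀ k, k ∈ T →
      ψ (k + 1) ≤ ψ k - κt * α k * ωT k ^ 2 + κtan * α k ^ 2 * ωT k ^ 2 := by
    intro k hk
    have h1 := hψT k hk
    have h2 : ψp k ≤ ψ k := by
      by_cases hn : k ∈ N
      · have := hψN k hn
        have := mul_nonneg (le_of_lt hη1) (hωN k)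
        linarith
      · rw [hψN' k hn]
    linarith
  -- key inductive inequality
  have key : ∀ K, κt * η * s K ≤ κt * η * Real.sqrt ς + (ψ 0 - ψ K)
      + 2 * κtan * η ^ 2 * Real.log (s K / Real.sqrt ς) := by
    intro K
    induction K with
    | zero =>
      rw [hs0, div_self (ne_of_gt hsς), Real.log_one]
      ring_nf
      · linarith
    | succ k ih =>
      by_cases hk : k ∈ T
      · -- tangential step
        have hΓeq := hΓT k hk
        have hs1sq : s (k+1) ^ 2 = s k ^ 2 + ωT k ^ 2 := by
          rw [hssq, hssq, hΓeq]; ring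
        have hs0pos := hspos k
        have hs1pos := hspos (k+1)
        have hs01 : s k ≤ s (k+1) := by nlinarith [sq_nonneg (ωT k)]
        have hαk : α k = η / s (k+1) := by
          rw [hα k, hs]
          congr 2
          rw [hΓeq]; ring
        -- fact1 : κt*η*(s(k+1) - s k) ≤ κt * α k * ωT k ^ 2
        have hf1 : κt * η * (s (k+1) - s k) ≤ κt * α k * ωT k ^ 2 := by
          have h1 : (s (k+1) - s k) * s (k+1) ≤ ωT k ^ 2 := by
            nlinarith [mul_nonneg (le_of_lt hs0pos) (sub_nonneg.mpr hs01)]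
          have h2 : s (k+1) - s k ≤ ωT k ^ 2 / s (k+1) :=
            (le_div_iff₀ hs1pos).mpr h1
          have h3 : κt * α k * ωT k ^ 2 = κt * η * (ωT k ^ 2 / s (k+1)) := by
            rw [hαk]; ring
          rw [h3]
          exact mul_le_mul_of_nonneg_left h2 (by positivity)
        -- fact2 : κtan * α k ^2 * ωT k^2 ≤ 2 κtan η² (log(s(k+1)) - log(s k))
        have hf2 : κtan * α k ^ 2 * ωT k ^ 2
            ≤ 2 * κtan * η ^ 2 * (Real.log (s (k+1)) - Real.log (s k)) := by
          have hxpos : 0 < s k ^ 2 / s (k+1) ^ 2 := by positivity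
          have hlog := Real.log_le_sub_one_of_pos hxpos
          rw [Real.log_div (by positivity) (by positivity), Real.log_pow, Real.log_pow] at hlog
          push_cast at hlog
          -- hlog : 2 log (s k) - 2 log (s (k+1)) ≤ s k^2 / s (k+1)^2 - 1
          have hratio : ωT k ^ 2 / s (k+1) ^ 2 ≤ 2 * (Real.log (s (k+1)) - Real.log (s k)) := by
            have : ωT k ^ 2 / s (k+1) ^ 2 = 1 - s k ^ 2 / s (k+1) ^ 2 := by
              rw [eq_sub_iff_add_eq, ← add_div]
              have e : ωT k ^ 2 + s k ^ 2 = s (k+1) ^ 2 := by linarith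
              rw [e, div_self (by positivity)]
            rw [this]; linarith
          have hα2 : κtan * α k ^ 2 * ωT k ^ 2 = κtan * η ^ 2 * (ωT k ^ 2 / s (k+1) ^ 2) := by
            rw [hαk]
            field_simp
            try ring
          rw [hα2]
          nlinarith [mul_le_mul_of_nonneg_left hratio (show (0:ℝ) ≤ κtan * η ^ 2 by positivity)]
        have hψs := hψinT k hk
        have hLdiff : Real.log (s (k+1) / Real.sqrt ς) - Real.log (s k / Real.sqrt ς)
            = Real.log (s (k+1)) - Real.log (s k) := by
          rw [Real.log_div (ne_of_gt hs1pos) (ne_of_gt hsς),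
              Real.log_div (ne_of_gt hs0pos) (ne_of_gt hsς)]
          ring
        have hf2' : κtan * α k ^ 2 * ωT k ^ 2 ≤ 2 * κtan * η ^ 2 *
            (Real.log (s (k+1) / Real.sqrt ς) - Real.log (s k / Real.sqrt ς)) := by
          rw [hLdiff]; exact hf2
        linarith [hf1, hf2', hψs, ih]
      · -- non-tangential step
        have hΓeq := hΓN k hk
        have hseq : s (k+1) = s k := by rw [hs]; simp [hΓeq]
        have := hψoutT k hk
        rw [hseq]
        linarith
  -- conclude for each k
  intro k
  have hx := key (k+1)
  set x : ℝ := s (k+1) with hxdef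
  have hxpos : 0 < x := hspos (k+1)
  have hP : 0 ≤ ψ 0 - ψlow := by linarith [hlow 0]
  have hψk : ψ 0 - ψ (k+1) ≤ ψ 0 - ψlow := by linarith [hlow (k+1)]
  -- tangent-line bound for log at m
  set m : ℝ := 4 * κtan * η / (κt * Real.sqrt ς) with hmdef
  have hmpos : 0 < m := by positivity
  have htan : Real.log (x / Real.sqrt ς) ≤ (x / Real.sqrt ς) / m + Real.log m - 1 := by
    have h := Real.log_le_sub_one_of_pos (show 0 < (x / Real.sqrt ς) / m by positivity)
    rw [Real.log_div (by positivity) (ne_of_gt hmpos)] at h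
    linarith
  have hsimp : 2 * κtan * η ^ 2 * ((x / Real.sqrt ς) / m) = κt * η * x / 2 := by
    rw [hmdef]
    field_simp
    ring
  have h2 : 2 * κtan * η ^ 2 * Real.log (x / Real.sqrt ς)
      ≤ κt * η * x / 2 + 2 * κtan * η ^ 2 * (Real.log m - 1) := by
    nlinarith [mul_le_mul_of_nonneg_left htan (show (0:ℝ) ≤ 2 * κtan * η ^ 2 by positivity)]
  -- main numeric inequality so far:
  have hmain : κt * η * x / 2 ≤ κt * η * Real.sqrt ς + (ψ 0 - ψlow)
      + 2 * κtan * η ^ 2 * (Real.log m - 1) := by linarith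
  -- apply aux_h with t = m, Tb = 4κtan/(κt√ς)
  set Tb : ℝ := 4 * κtan / (κt * Real.sqrt ς) with hTbdef
  have hTbpos : 0 < Tb := by positivity
  have hmTb : m ≤ Tb := by
    rw [hmdef, hTbdef, div_le_div_iff₀ (by positivity) (by positivity)]
    have h := mul_nonneg (sub_nonneg.mpr hη2)
      (le_of_lt (mul_pos hκtan (mul_pos hκt1 hsς)))
    nlinarith [h]
  have hh := aux_h m Tb hmpos hmTb
  -- multiply by √ς
  have hhs : Real.sqrt ς * (m * Real.log m - m)
      ≤ Real.sqrt ς * (Tb * Real.log Tb - Tb + 1) :=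
    mul_le_mul_of_nonneg_left hh (le_of_lt hsς)
  have hsm : Real.sqrt ς * m = 4 * κtan * η / κt := by
    rw [hmdef]; field_simp
  have hsTb : Real.sqrt ς * Tb = 4 * κtan / κt := by
    rw [hTbdef]; field_simp
  -- so (4κtanη/κt)(log m - 1) ≤ (4κtan/κt)(log Tb - 1) + √ς
  have hgb : (4 * κtan * η / κt) * (Real.log m - 1)
      ≤ (4 * κtan / κt) * (Real.log Tb - 1) + Real.sqrt ς := by
    have e1 : (4 * κtan * η / κt) * (Real.log m - 1)
        = Real.sqrt ς * (m * Real.log m - m) := by rw [← hsm]; ring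
    have e2 : (4 * κtan / κt) * (Real.log Tb - 1) + Real.sqrt ς
        = Real.sqrt ς * (Tb * Real.log Tb - Tb + 1) := by rw [← hsTb]; ring
    rw [e1, e2]; exact hhs
  -- rewrite 2κtanη²(log m - 1) = (η κt/2) * (4κtanη/κt)(log m -1)... rather clear denominators
  -- From hmain: multiply by 2/(κt η)
  have hκtη : 0 < κt * η := mul_pos hκt1 hη1
  set G : ℝ := (4 * κtan * η / κt) * (Real.log m - 1) with hGdef
  have hx2 : x ≤ 2 * Real.sqrt ς + 2 * (ψ 0 - ψlow) / (κt * η) + G := by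
    apply le_of_mul_le_mul_left _ hκtη
    have e1 : 2 * κtan * η ^ 2 * (Real.log m - 1) = κt * η / 2 * G := by
      rw [hGdef]; field_simp; ring
    have e2 : κt * η * (2 * Real.sqrt ς + 2 * (ψ 0 - ψlow) / (κt * η) + G)
        = 2 * (κt * η * Real.sqrt ς) + 2 * (ψ 0 - ψlow) + 2 * (κt * η / 2 * G) := by
      field_simp
    rw [e2]
    linarith [hmain, e1]
  have hfinal : x ≤ 3 * Real.sqrt ς + 2 * (ψ 0 - ψlow) / (κt * η)
      + (4 * κtan / κt) * (Real.log Tb - 1) := by linarith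
  -- compare with κT
  have hκgap2 : 2 * κgap * Real.sqrt ς = 2 * (1 + ψ 0 - ψlow) / (η * κt) := by
    rw [hκgap]; field_simp
  have hslack : 3 * Real.sqrt ς + 2 * (ψ 0 - ψlow) / (κt * η)
      ≤ 2 * (1 + ψ 0 - ψlow) / (η * κt) := by
    have h1 : 2 * (1 + ψ 0 - ψlow) / (η * κt)
        = 2 / (η * κt) + 2 * (ψ 0 - ψlow) / (κt * η) := by
      field_simp; ring
    have h2 : (4:ℝ) ≤ 2 / (η * κt) := by
      rw [le_div_iff₀ (by positivity)]
      nlinarith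
    linarith
  rw [hκT, hκgap2]
  calc Real.sqrt (ς + Γ (k+1)) = x := rfl
    _ ≤ _ := hfinal
    _ ≤ _ := by linarith
end

section
/- Suppose in addition there is a sequence c̄ : ℕ → ℝ with 0 ≤ c̄(k) and ω_N(k) ≥ ξ·c̄(k) for all k. Then for every k ∈ ℕ: ξ·Σ_{τ ≤ k, τ ∈ T}(ω_T(τ) + c̄(τ)) ≤ Σ_{τ ≤ k, τ ∈ T}(ω_T(τ) + ω_N(τ)) ≤ κ_T·√(card{τ ∈ T : τ ≤ k})·(1 + β·η/√ς), where κ_T = 2·κ_gap·√ς + (4κ_tan/κ_t)·[log(4κ_tan/(κ_t·√ς)) − 1]. -/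
set_option maxHeartbeats 2000000 in
theorem stmt16
    (η ς β κt κtan ξ : ℝ)
    (hη1 : 0 < η) (hη2 : η ≤ 1) (hς1 : 0 < ς) (hς2 : ς ≤ 1/2) (hβ : 0 < β)
    (hκt1 : 0 < κt) (hκt2 : κt ≤ 1/2) (hκtan : 0 < κtan)
    (hξ1 : 0 < ξ) (hξ2 : ξ ≤ 1)
    (hκtς : κt * Real.sqrt ς ≤ 1)
    (ωT ωN : ℕ → ℝ) (hωT : ∀ k, 0 ≤ ωT k) (hωN : ∀ k, 0 ≤ ωN k)
    (T N : Set ℕ) [DecidablePred (· ∈ T)] [DecidablePred (· ∈ N)]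
    (Γ α : ℕ → ℝ)
    (hΓ0 : Γ 0 = 0)
    (hΓT : ∀ k ∈ T, Γ (k + 1) = Γ k + ωT k ^ 2)
    (hΓN : ∀ k, k ∉ T → Γ (k + 1) = Γ k)
    (hα : ∀ k, α k = η / Real.sqrt (Γ k + ωT k ^ 2 + ς))
    (hswitch : ∀ k, k ∈ T ↔ ωN k ≤ β * α k * ωT k)
    (hTN : ∀ k, k ∉ T → k ∈ N)
    (ψ ψp : ℕ → ℝ)
    (hψN : ∀ k ∈ N, ψp k - ψ k ≤ -(η * ωN k))
    (hψN' : ∀ k, k ∉ N → ψp k = ψ k)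
    (hψT : ∀ k ∈ T, ψ (k + 1) - ψp k ≤ -(κt * α k * ωT k ^ 2) + κtan * α k ^ 2 * ωT k ^ 2)
    (hψT' : ∀ k, k ∉ T → ψ (k + 1) = ψp k)
    (ψlow : ℝ) (hlow : ∀ k, ψlow ≤ ψ k)
    (κgap : ℝ) (hκgap : κgap = (1 + ψ 0 - ψlow) / (η * κt * Real.sqrt ς))
    (cbar : ℕ → ℝ) (hcbar : ∀ k, 0 ≤ cbar k) (hcbarN : ∀ k, ξ * cbar k ≤ ωN k)
    (κT : ℝ)
    (hκT : κT = 2 * κgap * Real.sqrt ς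
      + (4 * κtan / κt) * (Real.log (4 * κtan / (κt * Real.sqrt ς)) - 1)) :
    ∀ k : ℕ,
      ξ * ∑ τ ∈ (Finset.range (k + 1)).filter (· ∈ T), (ωT τ + cbar τ)
          ≤ ∑ τ ∈ (Finset.range (k + 1)).filter (· ∈ T), (ωT τ + ωN τ)
      ∧ ∑ τ ∈ (Finset.range (k + 1)).filter (· ∈ T), (ωT τ + ωN τ)
          ≤ κT * Real.sqrt (((Finset.range (k + 1)).filter (· ∈ T)).card)
              * (1 + β * η / Real.sqrt ς) := by
  set s := Real.sqrt ς with hsdef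
  have hs0 : 0 < s := Real.sqrt_pos.mpr hς1
  have hs1 : s ≤ 1 := by
    rw [hsdef, show (1:ℝ) = Real.sqrt 1 by simp]
    exact Real.sqrt_le_sqrt (by linarith)
  have hss : s ^ 2 = ς := Real.sq_sqrt hς1.le
  -- Γ is nonnegative
  have hΓnn : ∀ n, 0 ≤ Γ n := by
    intro n
    induction n with
    | zero => simp [hΓ0]
    | succ n ih =>
      by_cases hn : n ∈ T
      · rw [hΓT n hn]; nlinarith [sq_nonneg (ωT n)]
      · rw [hΓN n hn]; exact ih
  have hSpos : ∀ n, 0 < Γ n + ωT n ^ 2 + ς := by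
    intro n; nlinarith [hΓnn n, sq_nonneg (ωT n)]
  have hαpos : ∀ n, 0 < α n := by
    intro n; rw [hα n]
    exact div_pos hη1 (Real.sqrt_pos.mpr (hSpos n))
  have hαle : ∀ n, α n ≤ η / s := by
    intro n; rw [hα n]
    apply div_le_div_of_nonneg_left hη1.le hs0
    rw [hsdef]
    exact Real.sqrt_le_sqrt (by nlinarith [hΓnn n, sq_nonneg (ωT n)])
  -- Γ as a sum
  have hΓsum : ∀ n, Γ n = ∑ τ ∈ (Finset.range n).filter (· ∈ T), ωT τ ^ 2 := by
    intro n
    induction n with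
    | zero => simpa using hΓ0
    | succ n ih =>
      rw [Finset.range_add_one, Finset.filter_insert]
      by_cases hn : n ∈ T
      · rw [if_pos hn, Finset.sum_insert (by simp), hΓT n hn, ih]; ring
      · rw [if_neg hn, hΓN n hn, ih]
  -- descent
  have descent : ∀ n, ψ (n + 1) ≤ ψ n +
      (if n ∈ T then κtan * α n ^ 2 * ωT n ^ 2 - κt * α n * ωT n ^ 2 else 0) := by
    intro n
    have hψpn : ψp n ≤ ψ n := by
      by_cases hn : n ∈ N
      · have := hψN n hn
        nlinarith [hωN n, hη1.le]
      · rw [hψN' n hn]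
    by_cases hn : n ∈ T
    · rw [if_pos hn]
      have := hψT n hn
      nlinarith
    · rw [if_neg hn, hψT' n hn]
      linarith
  have tsum : ∀ n, ψ n ≤ ψ 0 + ∑ τ ∈ Finset.range n,
      (if τ ∈ T then κtan * α τ ^ 2 * ωT τ ^ 2 - κt * α τ * ωT τ ^ 2 else 0) := by
    intro n
    induction n with
    | zero => simp
    | succ n ih =>
      rw [Finset.sum_range_succ]
      have := descent n
      linarith
  -- lower bound for the weighted sum
  have lowerC : ∀ n, η * (Real.sqrt (Γ n + ς) - s) ≤
      ∑ τ ∈ (Finset.range n).filter (· ∈ T), α τ * ωT τ ^ 2 := by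
    intro n
    induction n with
    | zero => simp [hΓ0, hsdef]
    | succ n ih =>
      rw [Finset.range_add_one, Finset.filter_insert]
      by_cases hn : n ∈ T
      · rw [if_pos hn, Finset.sum_insert (by simp), hΓT n hn]
        have hb : (0:ℝ) < Γ n + ς := by nlinarith [hΓnn n]
        have hS : (0:ℝ) < Γ n + ωT n ^ 2 + ς := hSpos n
        have hXpos : 0 < Real.sqrt (Γ n + ωT n ^ 2 + ς) := Real.sqrt_pos.mpr hS
        have h1 : Real.sqrt (Γ n + ς) ≤ Real.sqrt (Γ n + ωT n ^ 2 + ς) :=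
          Real.sqrt_le_sqrt (by nlinarith [sq_nonneg (ωT n)])
        have hsqS := Real.sq_sqrt hS.le
        have hsqb := Real.sq_sqrt hb.le
        have h2 : Real.sqrt (Γ n + ωT n ^ 2 + ς) - Real.sqrt (Γ n + ς) ≤
            ωT n ^ 2 / Real.sqrt (Γ n + ωT n ^ 2 + ς) := by
          rw [le_div_iff₀ hXpos]
          nlinarith [Real.sqrt_nonneg (Γ n + ς)]
        have h3 : η * (Real.sqrt (Γ n + ωT n ^ 2 + ς) - Real.sqrt (Γ n + ς)) ≤
            α n * ωT n ^ 2 := by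
          rw [hα n]
          calc η * (Real.sqrt (Γ n + ωT n ^ 2 + ς) - Real.sqrt (Γ n + ς))
              ≤ η * (ωT n ^ 2 / Real.sqrt (Γ n + ωT n ^ 2 + ς)) :=
                mul_le_mul_of_nonneg_left h2 hη1.le
            _ = η / Real.sqrt (Γ n + ωT n ^ 2 + ς) * ωT n ^ 2 := by ring
        have : Γ n + ωT n ^ 2 + ς = Γ n + (ωT n ^ 2 + ς) := by ring
        rw [show Γ n + ωT n ^ 2 + ς = Γ n + ωT n ^ 2 + ς from rfl]
        have expand : η * (Real.sqrt (Γ n + ωT n ^ 2 + ς) - s) =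
            η * (Real.sqrt (Γ n + ωT n ^ 2 + ς) - Real.sqrt (Γ n + ς)) +
            η * (Real.sqrt (Γ n + ς) - s) := by ring
        rw [expand]
        exact add_le_add h3 ih
      · rw [if_neg hn, hΓN n hn]; exact ih
  -- upper bound for the squared weighted sum
  have upperD : ∀ n, (∑ τ ∈ (Finset.range n).filter (· ∈ T), α τ ^ 2 * ωT τ ^ 2) ≤
      η ^ 2 * Real.log ((Γ n + ς) / ς) := by
    intro n
    induction n with
    | zero => simp [hΓ0, div_self hς1.ne']
    | succ n ih =>
      rw [Finset.range_add_one, Finset.filter_insert]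
      by_cases hn : n ∈ T
      · rw [if_pos hn, Finset.sum_insert (by simp), hΓT n hn]
        have hb : (0:ℝ) < Γ n + ς := by nlinarith [hΓnn n]
        have hS : (0:ℝ) < Γ n + ωT n ^ 2 + ς := hSpos n
        have hα2 : α n ^ 2 = η ^ 2 / (Γ n + ωT n ^ 2 + ς) := by
          rw [hα n, div_pow, Real.sq_sqrt hS.le]
        have hlog : Real.log ((Γ n + ς) / (Γ n + ωT n ^ 2 + ς)) ≤
            (Γ n + ς) / (Γ n + ωT n ^ 2 + ς) - 1 :=
          Real.log_le_sub_one_of_pos (by positivity)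
        have hlogdiff : ωT n ^ 2 / (Γ n + ωT n ^ 2 + ς) ≤
            Real.log ((Γ n + ωT n ^ 2 + ς) / ς) - Real.log ((Γ n + ς) / ς) := by
          rw [Real.log_div hb.ne' hS.ne'] at hlog
          rw [Real.log_div hS.ne' hς1.ne', Real.log_div hb.ne' hς1.ne']
          have harith : (Γ n + ς) / (Γ n + ωT n ^ 2 + ς) - 1 =
              -(ωT n ^ 2 / (Γ n + ωT n ^ 2 + ς)) := by
            field_simp
            ring
          rw [harith] at hlog
          linarith
        have hterm : α n ^ 2 * ωT n ^ 2 ≤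
            η ^ 2 * (Real.log ((Γ n + ωT n ^ 2 + ς) / ς) - Real.log ((Γ n + ς) / ς)) := by
          rw [hα2]
          calc η ^ 2 / (Γ n + ωT n ^ 2 + ς) * ωT n ^ 2
              = η ^ 2 * (ωT n ^ 2 / (Γ n + ωT n ^ 2 + ς)) := by ring
            _ ≤ η ^ 2 * (Real.log ((Γ n + ωT n ^ 2 + ς) / ς) - Real.log ((Γ n + ς) / ς)) :=
                mul_le_mul_of_nonneg_left hlogdiff (by positivity)
        linarith
      · rw [if_neg hn, hΓN n hn]; exact ih
  -- key bound: sqrt (Γ (k+1) + ς) ≤ κT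
  have keybound : ∀ m, Real.sqrt (Γ m + ς) ≤ κT := by
    intro m
    set X := Real.sqrt (Γ m + ς) with hXdef
    have hΓm : (0:ℝ) < Γ m + ς := by nlinarith [hΓnn m]
    have hX0 : 0 < X := Real.sqrt_pos.mpr hΓm
    have hXs : s ≤ X := by rw [hXdef, hsdef]; exact Real.sqrt_le_sqrt (by nlinarith [hΓnn m])
    set M := 4 * κtan / (κt * s) with hMdef
    have hM0 : 0 < M := by positivity
    set D := ψ 0 - ψlow with hDdef
    have hD0 : 0 ≤ D := by have := hlow 0; linarith
    -- the telescoped inequality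
    have hsum : ψlow ≤ ψ 0 + κtan * (∑ τ ∈ (Finset.range m).filter (· ∈ T), α τ ^ 2 * ωT τ ^ 2)
        - κt * (∑ τ ∈ (Finset.range m).filter (· ∈ T), α τ * ωT τ ^ 2) := by
      have h1 := tsum m
      have h2 : (∑ τ ∈ Finset.range m,
          (if τ ∈ T then κtan * α τ ^ 2 * ωT τ ^ 2 - κt * α τ * ωT τ ^ 2 else 0)) =
          κtan * (∑ τ ∈ (Finset.range m).filter (· ∈ T), α τ ^ 2 * ωT τ ^ 2)
          - κt * (∑ τ ∈ (Finset.range m).filter (· ∈ T), α τ * ωT τ ^ 2) := by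
        rw [Finset.mul_sum, Finset.mul_sum, ← Finset.sum_sub_distrib, Finset.sum_filter]
        exact Finset.sum_congr rfl fun τ _ => by by_cases hτ : τ ∈ T <;> simp [hτ] <;> ring
      rw [h2] at h1
      linarith [hlow m]
    -- log bound: log((Γ m + ς)/ς) ≤ 2 * (X/(M*s) + log M - 1)
    have hlogX : Real.log ((Γ m + ς) / ς) ≤ 2 * (X / (M * s) + Real.log M - 1) := by
      have hXsq : X ^ 2 = Γ m + ς := Real.sq_sqrt hΓm.le
      have h1 : (Γ m + ς) / ς = (X / s) ^ 2 := by
        rw [div_pow, hXsq, hss]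
      rw [h1, Real.log_pow]
      have h2 : Real.log (X / s / M) ≤ X / s / M - 1 :=
        Real.log_le_sub_one_of_pos (by positivity)
      rw [Real.log_div (by positivity) hM0.ne'] at h2
      have h3 : X / s / M = X / (M * s) := by ring
      rw [h3] at h2
      push_cast
      linarith
    have hC := lowerC m
    have hDd := upperD m
    -- combine
    have hcomb : κt * η * (X - s) ≤ D + κtan * η ^ 2 * (2 * (X / (M * s) + Real.log M - 1)) := by
      have e1 : κt * (∑ τ ∈ (Finset.range m).filter (· ∈ T), α τ * ωT τ ^ 2) ≥
          κt * (η * (X - s)) := mul_le_mul_of_nonneg_left hC hκt1.le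
      have e2 : κtan * (∑ τ ∈ (Finset.range m).filter (· ∈ T), α τ ^ 2 * ωT τ ^ 2) ≤
          κtan * (η ^ 2 * (2 * (X / (M * s) + Real.log M - 1))) := by
        apply mul_le_mul_of_nonneg_left _ hκtan.le
        calc (∑ τ ∈ (Finset.range m).filter (· ∈ T), α τ ^ 2 * ωT τ ^ 2)
            ≤ η ^ 2 * Real.log ((Γ m + ς) / ς) := hDd
          _ ≤ η ^ 2 * (2 * (X / (M * s) + Real.log M - 1)) :=
              mul_le_mul_of_nonneg_left hlogX (by positivity)
      nlinarith [hsum]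
    -- simplify: κtan * η^2 * 2 * X/(M*s) = κt * η^2 * X / 2 ≤ κt * η * X / 2
    have hmain : κt * η / 2 * X ≤ D + κt * η * s + 2 * κtan * η ^ 2 * (Real.log M - 1) := by
      have hXdiv : κtan * η ^ 2 * (2 * (X / (M * s))) = κt * η ^ 2 * X / 2 := by
        rw [hMdef]
        field_simp
        ring
      have hXX : κt * η ^ 2 * X / 2 ≤ κt * η * X / 2 := by
        have hnn : 0 ≤ κt * X * (η * (1 - η)) :=
          mul_nonneg (mul_nonneg hκt1.le hX0.le) (mul_nonneg hη1.le (by linarith))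
        nlinarith [hnn]
      nlinarith [hcomb]
    -- relate to κT
    have hκTval : κt * η / 2 * κT = (1 + D) + 2 * κtan * η * (Real.log M - 1) := by
      rw [hκT, hκgap, hDdef, hMdef]
      field_simp
      ring
    have hlogM : Real.log M ≥ 1 - 1 / M := by
      have := Real.log_le_sub_one_of_pos (show (0:ℝ) < 1 / M by positivity)
      rw [Real.log_div one_ne_zero hM0.ne', Real.log_one] at this
      linarith
    have hfinal : D + κt * η * s + 2 * κtan * η ^ 2 * (Real.log M - 1) ≤
        (1 + D) + 2 * κtan * η * (Real.log M - 1) := by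
      have hκη : κt * η ≤ 1 / 2 := by nlinarith
      have g1 : κt * η * s ≤ 1 / 2 := by
        have : 0 ≤ κt * η * (1 - s) :=
          mul_nonneg (mul_nonneg hκt1.le hη1.le) (by linarith)
        nlinarith [this]
      rcases le_or_gt 1 (Real.log M) with hL | hL
      · have hA : 2 * κtan * η ^ 2 * (Real.log M - 1) ≤ 2 * κtan * η * (Real.log M - 1) := by
          have : 0 ≤ 2 * κtan * (η * (1 - η)) * (Real.log M - 1) :=
            mul_nonneg (mul_nonneg (by linarith) (mul_nonneg hη1.le (by linarith)))
              (by linarith)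
          nlinarith [this]
        linarith
      · have hMinv : 1 - Real.log M ≤ 1 / M := by linarith
        have h1M : 1 / M = κt * s / (4 * κtan) := by
          rw [hMdef]; field_simp
        rw [h1M] at hMinv
        have hexp : 2 * κtan * η ^ 2 * (Real.log M - 1) - 2 * κtan * η * (Real.log M - 1)
            = 2 * κtan * η * (1 - η) * (1 - Real.log M) := by ring
        have hb1 : 2 * κtan * η * (1 - η) * (1 - Real.log M) ≤
            2 * κtan * η * (1 - η) * (κt * s / (4 * κtan)) := by
          apply mul_le_mul_of_nonneg_left hMinv
          exact mul_nonneg (mul_nonneg (by linarith) hη1.le) (by linarith)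
        have hb2 : 2 * κtan * η * (1 - η) * (κt * s / (4 * κtan)) = η * (1 - η) * (κt * s) / 2 := by
          field_simp; ring
        have hη14 : η * (1 - η) ≤ 1 / 4 := by nlinarith [sq_nonneg (1 - 2 * η)]
        have hη1η : 0 ≤ η * (1 - η) := mul_nonneg hη1.le (by linarith)
        have hkts : 0 ≤ κt * s := mul_nonneg hκt1.le hs0.le
        have g2 : η * (1 - η) * (κt * s) ≤ 1 / 4 := by nlinarith
        linarith [hexp, hb1, hb2 ▸ hb1, g1, g2]
    have : κt * η / 2 * X ≤ κt * η / 2 * κT := by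
      rw [hκTval]; linarith
    have hpos : 0 < κt * η / 2 := by positivity
    exact le_of_mul_le_mul_left this hpos
  -- now the main statement
  intro k
  set F := (Finset.range (k + 1)).filter (· ∈ T) with hF
  constructor
  · rw [Finset.mul_sum]
    apply Finset.sum_le_sum
    intro i hi
    have h1 : ξ * ωT i ≤ ωT i := by nlinarith [hωT i]
    have h2 : ξ * cbar i ≤ ωN i := hcbarN i
    nlinarith [h1, h2]
  · have hterm : ∀ i ∈ F, ωT i + ωN i ≤ (1 + β * η / s) * ωT i := by
      intro i hi
      have hiT : i ∈ T := (Finset.mem_filter.mp hi).2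
      have h1 : ωN i ≤ β * α i * ωT i := (hswitch i).mp hiT
      have h2 : β * α i * ωT i ≤ β * (η / s) * ωT i := by
        apply mul_le_mul_of_nonneg_right _ (hωT i)
        exact mul_le_mul_of_nonneg_left (hαle i) hβ.le
      have hexp2 : (1 + β * η / s) * ωT i = ωT i + β * (η / s) * ωT i := by ring
      linarith [h1, h2, hexp2.ge]
    have hsum1 : (∑ τ ∈ F, (ωT τ + ωN τ)) ≤ (1 + β * η / s) * ∑ τ ∈ F, ωT τ := by
      rw [Finset.mul_sum]
      exact Finset.sum_le_sum hterm
    -- Cauchy–Schwarz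
    have hCS := Finset.sum_mul_sq_le_sq_mul_sq F (fun _ => 1) ωT
    simp only [one_pow, one_mul, Finset.sum_const, nsmul_eq_mul, mul_one] at hCS
    have hΓkk : Γ (k + 1) = ∑ τ ∈ F, ωT τ ^ 2 := hΓsum (k + 1)
    have hsum2 : (∑ τ ∈ F, ωT τ) ≤ Real.sqrt (F.card) * Real.sqrt (Γ (k + 1)) := by
      rw [← Real.sqrt_mul (x := (F.card : ℝ)) (Nat.cast_nonneg _)]
      rw [Real.le_sqrt (Finset.sum_nonneg fun i _ => hωT i) (mul_nonneg (Nat.cast_nonneg _) (hΓnn _))]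
      rw [hΓkk]
      exact_mod_cast hCS
    have hsq : Real.sqrt (Γ (k + 1)) ≤ κT := by
      calc Real.sqrt (Γ (k + 1)) ≤ Real.sqrt (Γ (k + 1) + ς) :=
          Real.sqrt_le_sqrt (by linarith)
        _ ≤ κT := keybound (k + 1)
    have hbηs : 0 ≤ 1 + β * η / s := by positivity
    calc (∑ τ ∈ F, (ωT τ + ωN τ)) ≤ (1 + β * η / s) * ∑ τ ∈ F, ωT τ := hsum1
      _ ≤ (1 + β * η / s) * (Real.sqrt (F.card) * Real.sqrt (Γ (k + 1))) :=
          mul_le_mul_of_nonneg_left hsum2 hbηs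
      _ ≤ (1 + β * η / s) * (Real.sqrt (F.card) * κT) := by
          apply mul_le_mul_of_nonneg_left _ hbηs
          exact mul_le_mul_of_nonneg_left hsq (Real.sqrt_nonneg _)
      _ = κT * Real.sqrt (F.card) * (1 + β * η / s) := by ring
end

section
/- Suppose in addition there is a sequence c̄ : ℕ → ℝ with 0 ≤ c̄(k) and ω_N(k) ≥ ξ·c̄(k) for all k. Then for every k ∈ ℕ: ξ·Σ_{ν ≤ k, ν ∈ N} c̄(ν) ≤ Σ_{ν ≤ k, ν ∈ N} ω_N(ν) ≤ κ_N, where κ_N = κ_gap + (κ_tan/(κ_t·√ς))·log(1 + κ_T²/ς) and κ_T = 2·κ_gap·√ς + (4κ_tan/κ_t)·[log(4κ_tan/(κ_t·√ς)) − 1]. -/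
private lemma sum_filter_succ' {p : ℕ → Prop} [DecidablePred p] (f : ℕ → ℝ) (m : ℕ) :
    ∑ ν ∈ (Finset.range (m+1)).filter p, f ν
      = (∑ ν ∈ (Finset.range m).filter p, f ν) + (if p m then f m else 0) := by
  rw [Finset.range_add_one, Finset.filter_insert]
  split_ifs with h
  · rw [Finset.sum_insert (by simp)]; ring
  · simp

private lemma log_le_aux {x c : ℝ} (hx : 0 < x) (hc : 0 < c) :
    Real.log x ≤ x / c + Real.log c - 1 := by
  have h := Real.log_le_sub_one_of_pos (show 0 < x / c by positivity)
  rw [Real.log_div (ne_of_gt hx) (ne_of_gt hc)] at h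
  linarith

private lemma selfbound {ς A B G : ℝ} (hς : 0 < ς) (hB : 0 < B) (hG : ς ≤ G)
    (h : Real.sqrt G ≤ A + B * Real.log (G / ς)) :
    Real.sqrt G ≤ 2*A + 4*B*(Real.log (4*B/Real.sqrt ς) - 1) := by
  have hςs : 0 < Real.sqrt ς := Real.sqrt_pos.mpr hς
  have hGpos : 0 < G := lt_of_lt_of_le hς hG
  have hGc : 0 < G / ς := by positivity
  set c := 4*B/Real.sqrt ς with hc
  have hcpos : 0 < c := by positivity
  have h1 : Real.log (G/ς) = 2 * Real.log (Real.sqrt (G/ς)) := by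
    rw [Real.log_sqrt (le_of_lt hGc)]; ring
  have hsq : Real.sqrt (G/ς) = Real.sqrt G / Real.sqrt ς := by
    rw [Real.sqrt_div (le_of_lt hGpos)]
  have h2 : Real.log (Real.sqrt (G/ς)) ≤ Real.sqrt (G/ς) / c + Real.log c - 1 :=
    log_le_aux (Real.sqrt_pos.mpr hGc) hcpos
  have h3 : Real.sqrt (G/ς) / c = Real.sqrt G / (4*B) := by
    rw [hsq, hc]; field_simp
  have e1 : 2*B*(Real.sqrt G/(4*B)) = Real.sqrt G/2 := by
    field_simp; ring
  have h4 : B * Real.log (G/ς) ≤ Real.sqrt G / 2 + 2*B*(Real.log c - 1) := by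
    have h5 := mul_le_mul_of_nonneg_left h2 (by linarith : (0:ℝ) ≤ 2*B)
    rw [h3] at h5
    calc B * Real.log (G/ς) = 2*B*Real.log (Real.sqrt (G/ς)) := by rw [h1]; ring
    _ ≤ 2*B*(Real.sqrt G/(4*B) + Real.log c - 1) := by linarith [h5]
    _ = 2*B*(Real.sqrt G/(4*B)) + 2*B*(Real.log c - 1) := by ring
    _ = Real.sqrt G/2 + 2*B*(Real.log c - 1) := by rw [e1]
  linarith

set_option maxHeartbeats 1000000 in
theorem stmt17
    (η ς β κt κtan ξ : ℝ)
    (hη1 : 0 < η) (hη2 : η ≤ 1) (hς1 : 0 < ς) (hς2 : ς ≤ 1/2) (hβ : 0 < β)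
    (hκt1 : 0 < κt) (hκt2 : κt ≤ 1/2) (hκtan : 0 < κtan)
    (hξ1 : 0 < ξ) (hξ2 : ξ ≤ 1)
    (hκtς : κt * Real.sqrt ς ≤ 1)
    (ωT ωN : ℕ → ℝ) (hωT : ∀ k, 0 ≤ ωT k) (hωN : ∀ k, 0 ≤ ωN k)
    (T N : Set ℕ) [DecidablePred (· ∈ T)] [DecidablePred (· ∈ N)]
    (Γ α : ℕ → ℝ)
    (hΓ0 : Γ 0 = 0)
    (hΓT : ∀ k ∈ T, Γ (k + 1) = Γ k + ωT k ^ 2)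
    (hΓN : ∀ k, k ∉ T → Γ (k + 1) = Γ k)
    (hα : ∀ k, α k = η / Real.sqrt (Γ k + ωT k ^ 2 + ς))
    (hswitch : ∀ k, k ∈ T ↔ ωN k ≤ β * α k * ωT k)
    (hTN : ∀ k, k ∉ T → k ∈ N)
    (ψ ψp : ℕ → ℝ)
    (hψN : ∀ k ∈ N, ψp k - ψ k ≤ -(η * ωN k))
    (hψN' : ∀ k, k ∉ N → ψp k = ψ k)
    (hψT : ∀ k ∈ T, ψ (k + 1) - ψp k ≤ -(κt * α k * ωT k ^ 2) + κtan * α k ^ 2 * ωT k ^ 2)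
    (hψT' : ∀ k, k ∉ T → ψ (k + 1) = ψp k)
    (ψlow : ℝ) (hlow : ∀ k, ψlow ≤ ψ k)
    (κgap : ℝ) (hκgap : κgap = (1 + ψ 0 - ψlow) / (η * κt * Real.sqrt ς))
    (cbar : ℕ → ℝ) (hcbar : ∀ k, 0 ≤ cbar k) (hcbarN : ∀ k, ξ * cbar k ≤ ωN k)
    (κT κN : ℝ)
    (hκT : κT = 2 * κgap * Real.sqrt ς
      + (4 * κtan / κt) * (Real.log (4 * κtan / (κt * Real.sqrt ς)) - 1))
    (hκN : κN = κgap + (κtan / (κt * Real.sqrt ς)) * Real.log (1 + κT ^ 2 / ς)) :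
    ∀ k : ℕ,
      ξ * ∑ ν ∈ (Finset.range (k + 1)).filter (· ∈ N), cbar ν
          ≤ ∑ ν ∈ (Finset.range (k + 1)).filter (· ∈ N), ωN ν
      ∧ ∑ ν ∈ (Finset.range (k + 1)).filter (· ∈ N), ωN ν ≤ κN := by
  have hςs : 0 < Real.sqrt ς := Real.sqrt_pos.mpr hς1
  -- Γ nonneg
  have hΓnn : ∀ m, 0 ≤ Γ m := by
    intro m
    induction m with
    | zero => simp [hΓ0]
    | succ m ih =>
      by_cases hT : m ∈ T
      · rw [hΓT m hT]; nlinarith [sq_nonneg (ωT m)]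
      · rw [hΓN m hT]; exact ih
  have hden : ∀ k, 0 < Γ k + ωT k ^ 2 + ς := by
    intro k; nlinarith [hΓnn k, sq_nonneg (ωT k)]
  have hαpos : ∀ k, 0 < α k := by
    intro k; rw [hα k]
    exact div_pos hη1 (Real.sqrt_pos.mpr (hden k))
  -- notation
  set SN : ℕ → ℝ := fun m => ∑ ν ∈ (Finset.range m).filter (· ∈ N), ωN ν with hSN
  set ST1 : ℕ → ℝ := fun m => ∑ ν ∈ (Finset.range m).filter (· ∈ T), α ν * ωT ν ^ 2 with hST1
  set ST2 : ℕ → ℝ := fun m => ∑ ν ∈ (Finset.range m).filter (· ∈ T), α ν ^ 2 * ωT ν ^ 2 with hST2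
  have hSNnn : ∀ m, 0 ≤ SN m := by
    intro m; apply Finset.sum_nonneg; intro ν _; exact hωN ν
  have hST1nn : ∀ m, 0 ≤ ST1 m := by
    intro m; apply Finset.sum_nonneg; intro ν _
    exact mul_nonneg (le_of_lt (hαpos ν)) (sq_nonneg _)
  -- per-step decrease
  have step : ∀ k, ψ (k+1) ≤ ψ k - (if k ∈ N then η * ωN k else 0)
      - (if k ∈ T then κt * α k * ωT k ^ 2 - κtan * α k ^ 2 * ωT k ^ 2 else 0) := by
    intro k
    by_cases hT : k ∈ T <;> by_cases hN : k ∈ N <;> simp only [hT, hN, if_pos, if_neg,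
      if_true, if_false]
    · have h1 := hψT k hT; have h2 := hψN k hN; linarith
    · have h1 := hψT k hT; have h2 := hψN' k hN; linarith
    · have h1 := hψT' k hT; have h2 := hψN k hN; linarith
    · exact absurd (hTN k hT) hN
  -- key telescoped inequality
  have key : ∀ m, ψ m + η * SN m + κt * ST1 m ≤ ψ 0 + κtan * ST2 m := by
    intro m
    induction m with
    | zero => simp [hSN, hST1, hST2]
    | succ m ih =>
      have e1 : SN (m+1) = SN m + (if m ∈ N then ωN m else 0) := sum_filter_succ' _ m
      have e2 : ST1 (m+1) = ST1 m + (if m ∈ T then α m * ωT m ^ 2 else 0) :=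
        sum_filter_succ' _ m
      have e3 : ST2 (m+1) = ST2 m + (if m ∈ T then α m ^ 2 * ωT m ^ 2 else 0) :=
        sum_filter_succ' _ m
      have hs := step m
      rw [e1, e2, e3]
      split_ifs at hs ⊢ <;> nlinarith [hs, ih]
  -- lower bound on ST1
  have lower : ∀ m, η * (Real.sqrt (Γ m + ς) - Real.sqrt ς) ≤ ST1 m := by
    intro m
    induction m with
    | zero => simp [hΓ0, hSN, hST1]
    | succ m ih =>
      have e2 : ST1 (m+1) = ST1 m + (if m ∈ T then α m * ωT m ^ 2 else 0) :=
        sum_filter_succ' _ m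
      rw [e2]
      by_cases hT : m ∈ T
      · rw [if_pos hT, hΓT m hT]
        have ha : (0:ℝ) < Γ m + ς := by linarith [hΓnn m]
        have hd : (0:ℝ) < Γ m + ωT m ^ 2 + ς := hden m
        have had : Γ m + ς ≤ Γ m + ωT m ^ 2 + ς := by nlinarith [sq_nonneg (ωT m)]
        set sa := Real.sqrt (Γ m + ς) with hsa
        set sd := Real.sqrt (Γ m + ωT m ^ 2 + ς) with hsd
        have hsa2 : sa ^ 2 = Γ m + ς := Real.sq_sqrt (le_of_lt ha)
        have hsd2 : sd ^ 2 = Γ m + ωT m ^ 2 + ς := Real.sq_sqrt (le_of_lt hd)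
        have hsale : sa ≤ sd := Real.sqrt_le_sqrt had
        have hsann : 0 ≤ sa := Real.sqrt_nonneg _
        have hsdpos : 0 < sd := Real.sqrt_pos.mpr hd
        have hkey2 : sd - sa ≤ ωT m ^ 2 / sd := by
          rw [le_div_iff₀ hsdpos]
          nlinarith [mul_le_mul_of_nonneg_left hsale hsann]
        have : α m * ωT m ^ 2 = η * (ωT m ^ 2 / sd) := by
          rw [hα m, ← hsd]; ring
        rw [this]
        have h7 := mul_le_mul_of_nonneg_left hkey2 (le_of_lt hη1)
        nlinarith [ih, h7]
      · rw [if_neg hT, hΓN m hT]; linarith [ih]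
  -- upper bound on ST2
  have upper : ∀ m, ST2 m ≤ η ^ 2 * Real.log ((Γ m + ς) / ς) := by
    intro m
    induction m with
    | zero =>
      simp [hΓ0, hST2, div_self (ne_of_gt hς1)]
    | succ m ih =>
      have e3 : ST2 (m+1) = ST2 m + (if m ∈ T then α m ^ 2 * ωT m ^ 2 else 0) :=
        sum_filter_succ' _ m
      rw [e3]
      by_cases hT : m ∈ T
      · rw [if_pos hT, hΓT m hT]
        have ha : (0:ℝ) < Γ m + ς := by linarith [hΓnn m]
        have hd : (0:ℝ) < Γ m + ωT m ^ 2 + ς := hden m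
        have hα2 : α m ^ 2 = η ^ 2 / (Γ m + ωT m ^ 2 + ς) := by
          rw [hα m, div_pow, Real.sq_sqrt (le_of_lt hd)]
        have hlog : ωT m ^ 2 / (Γ m + ωT m ^ 2 + ς)
            ≤ Real.log (Γ m + ωT m ^ 2 + ς) - Real.log (Γ m + ς) := by
          have h := Real.log_le_sub_one_of_pos (show (0:ℝ) < (Γ m + ς)/(Γ m + ωT m ^ 2 + ς)
            by positivity)
          rw [Real.log_div (ne_of_gt ha) (ne_of_gt hd)] at h
          have : (Γ m + ς) / (Γ m + ωT m ^ 2 + ς) - 1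
              = -(ωT m ^ 2 / (Γ m + ωT m ^ 2 + ς)) := by
            field_simp; ring
          rw [this] at h
          linarith
        have hlq : Real.log ((Γ m + ωT m ^ 2 + ς)/ς) - Real.log ((Γ m + ς)/ς)
            = Real.log (Γ m + ωT m ^ 2 + ς) - Real.log (Γ m + ς) := by
          rw [Real.log_div (ne_of_gt hd) (ne_of_gt hς1),
            Real.log_div (ne_of_gt ha) (ne_of_gt hς1)]
          ring
        have hterm : α m ^ 2 * ωT m ^ 2
            ≤ η ^ 2 * (Real.log ((Γ m + ωT m ^ 2 + ς)/ς) - Real.log ((Γ m + ς)/ς)) := by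
          rw [hα2, hlq]
          have : η ^ 2 / (Γ m + ωT m ^ 2 + ς) * ωT m ^ 2
              = η ^ 2 * (ωT m ^ 2 / (Γ m + ωT m ^ 2 + ς)) := by ring
          rw [this]
          exact mul_le_mul_of_nonneg_left hlog (sq_nonneg η)
        linarith [ih, hterm]
      · rw [if_neg hT, hΓN m hT]; linarith [ih]
  -- main bound on sqrt(Γ m + ς)
  have D := ψ 0 - ψlow
  have hD : 0 ≤ ψ 0 - ψlow := by linarith [hlow 0]
  have hsdκT : ∀ m, Real.sqrt (Γ m + ς) ≤ κT := by
    intro m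
    have ha : (0:ℝ) < Γ m + ς := by linarith [hΓnn m]
    have hGge : ς ≤ Γ m + ς := by linarith [hΓnn m]
    have hLnn : 0 ≤ Real.log ((Γ m + ς)/ς) := by
      apply Real.log_nonneg
      rw [le_div_iff₀ hς1]; linarith
    set L := Real.log ((Γ m + ς)/ς) with hL
    set sd := Real.sqrt (Γ m + ς) with hsd
    have h1 : κt * η * (sd - Real.sqrt ς) ≤ ψ 0 - ψlow + κtan * η ^ 2 * L := by
      have hk := key m
      have hl := lower m
      have hu := upper m
      have hlo := hlow m
      have hsn := hSNnn m
      linarith [mul_le_mul_of_nonneg_left hl (le_of_lt hκt1),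
        mul_le_mul_of_nonneg_left hu (le_of_lt hκtan),
        mul_nonneg (le_of_lt hη1) hsn]
    have h2 : κtan * η ^ 2 * L ≤ κtan * η * L := by
      linarith [mul_nonneg (mul_nonneg (mul_nonneg (le_of_lt hκtan) hLnn)
        (le_of_lt hη1)) (sub_nonneg.mpr hη2)]
    have h3 : κt * η * sd ≤ κt * η * Real.sqrt ς + (ψ 0 - ψlow) + κtan * η * L := by
      linarith
    have hκtη : (0:ℝ) < κt * η := mul_pos hκt1 hη1
    have h4 : sd ≤ (Real.sqrt ς + (ψ 0 - ψlow)/(κt*η)) + (κtan/κt) * L := by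
      have e1 : ((Real.sqrt ς + (ψ 0 - ψlow)/(κt*η)) + (κtan/κt) * L) * (κt*η)
          = κt * η * Real.sqrt ς + (ψ 0 - ψlow) + κtan * η * L := by
        field_simp
      have h4' : sd * (κt*η) ≤ ((Real.sqrt ς + (ψ 0 - ψlow)/(κt*η)) + (κtan/κt) * L) * (κt*η) := by
        rw [e1]; linarith [h3]
      exact le_of_mul_le_mul_right h4' hκtη
    have hB : (0:ℝ) < κtan/κt := by positivity
    have h5 := selfbound hς1 hB hGge h4
    -- now show RHS ≤ κT
    have earg : 4*(κtan/κt)/Real.sqrt ς = 4*κtan/(κt*Real.sqrt ς) := by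
      field_simp
    have ekgap : κgap * (κt * Real.sqrt ς) = (1 + (ψ 0 - ψlow)) / η := by
      rw [hκgap]; field_simp; ring
    have hηκtς : η * κt * Real.sqrt ς ≤ 1 := by
      nlinarith [mul_pos hκt1 hςs]
    have hA : 2*(Real.sqrt ς + (ψ 0 - ψlow)/(κt*η)) ≤ 2 * κgap * Real.sqrt ς := by
      have e2 : (ψ 0 - ψlow)/(κt*η) * (κt*η) = ψ 0 - ψlow :=
        div_mul_cancel₀ _ (ne_of_gt hκtη)
      have e3 : κgap * Real.sqrt ς * (κt * η) = (1 + (ψ 0 - ψlow)) := by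
        have : κgap * Real.sqrt ς * (κt * η) = (κgap * (κt * Real.sqrt ς)) * η := by ring
        rw [this, ekgap]
        field_simp
      have h6 : 2*(Real.sqrt ς + (ψ 0 - ψlow)/(κt*η)) * (κt*η)
          ≤ 2 * κgap * Real.sqrt ς * (κt*η) := by
        have h7 : Real.sqrt ς * (κt * η) ≤ 1 := by nlinarith [mul_pos hκt1 hςs]
        nlinarith [e2, e3]
      exact le_of_mul_le_mul_right h6 hκtη
    have hfinal : 2*(Real.sqrt ς + (ψ 0 - ψlow)/(κt*η))
        + 4*(κtan/κt)*(Real.log (4*(κtan/κt)/Real.sqrt ς) - 1) ≤ κT := by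
      rw [hκT, earg]
      have : 4*(κtan/κt)*(Real.log (4*κtan/(κt*Real.sqrt ς)) - 1)
          = (4 * κtan / κt) * (Real.log (4 * κtan / (κt * Real.sqrt ς)) - 1) := by ring
      rw [this]
      linarith [hA]
    linarith [h5, hfinal]
  -- conclude
  intro k
  set m := k + 1
  constructor
  · rw [Finset.mul_sum]
    apply Finset.sum_le_sum
    intro ν _
    exact hcbarN ν
  · have ha : (0:ℝ) < Γ m + ς := by linarith [hΓnn m]
    have hsdnn : 0 ≤ Real.sqrt (Γ m + ς) := Real.sqrt_nonneg _
    have hκTnn : 0 ≤ κT := le_trans hsdnn (hsdκT m)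
    have hG2 : Γ m + ς ≤ κT ^ 2 := by
      have := Real.sq_sqrt (le_of_lt ha)
      nlinarith [hsdκT m]
    have hLog2 : Real.log ((Γ m + ς)/ς) ≤ Real.log (1 + κT ^ 2/ς) := by
      apply Real.log_le_log (by positivity)
      have e : 1 + κT ^ 2/ς = (ς + κT ^ 2)/ς := by field_simp
      rw [e, div_le_div_iff₀ hς1 hς1]
      nlinarith
    have hLL : 0 ≤ Real.log (1 + κT ^ 2/ς) := by
      apply Real.log_nonneg
      have : 0 ≤ κT ^ 2/ς := by positivity
      linarith
    have hk := key m
    have hu := upper m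
    have h1s : η * SN m ≤ (ψ 0 - ψlow) + κtan * η ^ 2 * Real.log (1 + κT ^ 2/ς) := by
      have hb1 : κtan * ST2 m ≤ κtan * (η ^ 2 * Real.log ((Γ m + ς)/ς)) :=
        mul_le_mul_of_nonneg_left hu (le_of_lt hκtan)
      have hb2 : κtan * η ^ 2 * Real.log ((Γ m + ς)/ς)
          ≤ κtan * η ^ 2 * Real.log (1 + κT ^ 2/ς) :=
        mul_le_mul_of_nonneg_left hLog2 (by positivity)
      have hb3 : 0 ≤ κt * ST1 m := mul_nonneg (le_of_lt hκt1) (hST1nn m)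
      linarith [hlow m, hk]
    have h2s : SN m ≤ (ψ 0 - ψlow)/η + κtan * η * Real.log (1 + κT ^ 2/ς) := by
      have e2 : ((ψ 0 - ψlow)/η + κtan * η * Real.log (1 + κT ^ 2/ς)) * η
          = (ψ 0 - ψlow) + κtan * η ^ 2 * Real.log (1 + κT ^ 2/ς) := by
        field_simp
      have h2s' : SN m * η ≤ ((ψ 0 - ψlow)/η + κtan * η * Real.log (1 + κT ^ 2/ς)) * η := by
        rw [e2]; linarith [h1s]
      exact le_of_mul_le_mul_right h2s' hη1
    -- bound each piece by κN parts
    have hκgapnn : 0 < κgap := by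
      rw [hκgap]
      have : 0 < η * κt * Real.sqrt ς := by positivity
      have h1 : (0:ℝ) < 1 + ψ 0 - ψlow := by linarith
      positivity
    have hpiece1 : (ψ 0 - ψlow)/η ≤ κgap := by
      have ekgap : κgap * (κt * Real.sqrt ς) * η = 1 + (ψ 0 - ψlow) := by
        rw [hκgap]; field_simp; ring
      have hkts : 0 < κt * Real.sqrt ς := mul_pos hκt1 hςs
      have h1 : κgap * (κt * Real.sqrt ς) ≤ κgap := by
        nlinarith [mul_le_mul_of_nonneg_left hκtς (le_of_lt hκgapnn)]
      rw [div_le_iff₀ hη1]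
      linarith [mul_le_mul_of_nonneg_right h1 (le_of_lt hη1), ekgap]
    have hpiece2 : κtan * η * Real.log (1 + κT ^ 2/ς)
        ≤ (κtan / (κt * Real.sqrt ς)) * Real.log (1 + κT ^ 2/ς) := by
      apply mul_le_mul_of_nonneg_right _ hLL
      have hkts : 0 < κt * Real.sqrt ς := mul_pos hκt1 hςs
      rw [le_div_iff₀ hkts]
      have h8 : η * (κt * Real.sqrt ς) ≤ 1 := by
        linarith [mul_le_mul_of_nonneg_right hη2 (le_of_lt hkts)]
      linarith [mul_le_mul_of_nonneg_left h8 (le_of_lt hκtan)]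
    rw [hκN]
    calc ∑ ν ∈ (Finset.range m).filter (· ∈ N), ωN ν = SN m := rfl
    _ ≤ (ψ 0 - ψlow)/η + κtan * η * Real.log (1 + κT ^ 2/ς) := h2s
    _ ≤ κgap + (κtan / (κt * Real.sqrt ς)) * Real.log (1 + κT ^ 2 / ς) := by
        linarith
end

section
/- Suppose in addition there are a sequence c̄ : ℕ → ℝ with 0 ≤ c̄(k) and ω_N(k) ≥ ξ·c̄(k) for all k, and a constant κ_ω > 0 with ω_T(k) ≤ κ_ω for all k. Then for every k ∈ ℕ: ξ·Σ_{ν ≤ k, ν ∈ N∖T}(ω_T(ν) + c̄(ν)) ≤ Σ_{ν ≤ k, ν ∈ N∖T}(ω_T(ν) + ω_N(ν)) ≤ κ_N·(1 + √(κ_T² + κ_ω²)/(β·η)), where κ_T = 2·κ_gap·√ς + (4κ_tan/κ_t)·[log(4κ_tan/(κ_t·√ς)) − 1] and κ_N = κ_gap + (κ_tan/(κ_t·√ς))·log(1 + κ_T²/ς). -/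
lemma aux_sqrt_diff {a b : ℝ} (ha : 0 ≤ a) (hab : a ≤ b) (hb : 0 < b) :
    Real.sqrt b - Real.sqrt a ≤ (b - a) / Real.sqrt b := by
  have hsb : 0 < Real.sqrt b := Real.sqrt_pos.mpr hb
  rw [le_div_iff₀ hsb]
  nlinarith [Real.sq_sqrt ha, Real.sq_sqrt (ha.trans hab), Real.sqrt_nonneg a,
    Real.sqrt_nonneg b, Real.sqrt_le_sqrt hab]

lemma aux_log_diff {a b : ℝ} (ha : 0 < a) (hab : a ≤ b) :
    (b - a) / b ≤ Real.log b - Real.log a := by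
  have hb : 0 < b := ha.trans_le hab
  have h := Real.log_le_sub_one_of_pos (show 0 < a / b by positivity)
  rw [Real.log_div ha.ne' hb.ne'] at h
  have h2 : (b - a) / b = 1 - a / b := by field_simp
  linarith

lemma aux_u {u : ℝ} (hu : 0 < u) : u * (1 - Real.log u) ≤ 1 := by
  have h := Real.log_le_sub_one_of_pos (show 0 < 1 / u by positivity)
  rw [Real.log_div one_ne_zero hu.ne', Real.log_one] at h
  have h2 := mul_le_mul_of_nonneg_left h hu.le
  have h3 : u * (1 / u) = 1 := by field_simp
  nlinarith

lemma aux_logA {t A : ℝ} (ht : 0 < t) (hA : 0 < A) :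
    Real.log t ≤ t / A + Real.log A - 1 := by
  have h := Real.log_le_sub_one_of_pos (show 0 < t / A by positivity)
  rw [Real.log_div ht.ne' hA.ne'] at h
  linarith

set_option maxHeartbeats 1000000 in
theorem stmt18
    (η ς β κt κtan ξ : ℝ)
    (hη1 : 0 < η) (hη2 : η ≤ 1) (hς1 : 0 < ς) (hς2 : ς ≤ 1/2) (hβ : 0 < β)
    (hκt1 : 0 < κt) (hκt2 : κt ≤ 1/2) (hκtan : 0 < κtan)
    (hξ1 : 0 < ξ) (hξ2 : ξ ≤ 1)
    (hκtς : κt * Real.sqrt ς ≤ 1)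
    (ωT ωN : ℕ → ℝ) (hωT : ∀ k, 0 ≤ ωT k) (hωN : ∀ k, 0 ≤ ωN k)
    (T N : Set ℕ) [DecidablePred (· ∈ T)] [DecidablePred (· ∈ N)]
    (Γ α : ℕ → ℝ)
    (hΓ0 : Γ 0 = 0)
    (hΓT : ∀ k ∈ T, Γ (k + 1) = Γ k + ωT k ^ 2)
    (hΓN : ∀ k, k ∉ T → Γ (k + 1) = Γ k)
    (hα : ∀ k, α k = η / Real.sqrt (Γ k + ωT k ^ 2 + ς))
    (hswitch : ∀ k, k ∈ T ↔ ωN k ≤ β * α k * ωT k)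
    (hTN : ∀ k, k ∉ T → k ∈ N)
    (ψ ψp : ℕ → ℝ)
    (hψN : ∀ k ∈ N, ψp k - ψ k ≤ -(η * ωN k))
    (hψN' : ∀ k, k ∉ N → ψp k = ψ k)
    (hψT : ∀ k ∈ T, ψ (k + 1) - ψp k ≤ -(κt * α k * ωT k ^ 2) + κtan * α k ^ 2 * ωT k ^ 2)
    (hψT' : ∀ k, k ∉ T → ψ (k + 1) = ψp k)
    (ψlow : ℝ) (hlow : ∀ k, ψlow ≤ ψ k)
    (κgap : ℝ) (hκgap : κgap = (1 + ψ 0 - ψlow) / (η * κt * Real.sqrt ς))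
    (cbar : ℕ → ℝ) (hcbar : ∀ k, 0 ≤ cbar k) (hcbarN : ∀ k, ξ * cbar k ≤ ωN k)
    (κω : ℝ) (hκω : 0 < κω) (hωTb : ∀ k, ωT k ≤ κω)
    (κT κN : ℝ)
    (hκT : κT = 2 * κgap * Real.sqrt ς
      + (4 * κtan / κt) * (Real.log (4 * κtan / (κt * Real.sqrt ς)) - 1))
    (hκN : κN = κgap + (κtan / (κt * Real.sqrt ς)) * Real.log (1 + κT ^ 2 / ς)) :
    ∀ k : ℕ,
      ξ * ∑ ν ∈ (Finset.range (k + 1)).filter (fun ν => ν ∈ N ∧ ν ∉ T), (ωT ν + cbar ν)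
          ≤ ∑ ν ∈ (Finset.range (k + 1)).filter (fun ν => ν ∈ N ∧ ν ∉ T), (ωT ν + ωN ν)
      ∧ ∑ ν ∈ (Finset.range (k + 1)).filter (fun ν => ν ∈ N ∧ ν ∉ T), (ωT ν + ωN ν)
          ≤ κN * (1 + Real.sqrt (κT ^ 2 + κω ^ 2) / (β * η)) := by
  have hςs : 0 < Real.sqrt ς := Real.sqrt_pos.mpr hς1
  have hςs1 : Real.sqrt ς ≤ 1 := by
    rw [show (1:ℝ) = Real.sqrt 1 by simp]
    exact Real.sqrt_le_sqrt (by linarith)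
  have hΓnn : ∀ k, 0 ≤ Γ k := by
    intro k
    induction k with
    | zero => rw [hΓ0]
    | succ n ih =>
      by_cases h : n ∈ T
      · rw [hΓT n h]; nlinarith [sq_nonneg (ωT n)]
      · rw [hΓN n h]; exact ih
  have hden : ∀ k, 0 < Γ k + ωT k ^ 2 + ς := fun k => by nlinarith [hΓnn k, sq_nonneg (ωT k)]
  have hdenς : ∀ k, 0 < Γ k + ς := fun k => by nlinarith [hΓnn k]
  -- per-step bounds on tangential iterations
  have step1 : ∀ k ∈ T, η * (Real.sqrt (Γ (k+1) + ς) - Real.sqrt (Γ k + ς))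
      ≤ α k * ωT k ^ 2 := by
    intro k hk
    have hcomm : Γ k + ωT k ^ 2 + ς = Γ k + ς + ωT k ^ 2 := by ring
    have hb : 0 < Γ k + ς + ωT k ^ 2 := by rw [← hcomm]; exact hden k
    have h := aux_sqrt_diff (hdenς k).le
      (show Γ k + ς ≤ Γ k + ς + ωT k ^ 2 by nlinarith [sq_nonneg (ωT k)]) hb
    rw [add_sub_cancel_left] at h
    rw [hΓT k hk, hα k, hcomm]
    have hsb : 0 < Real.sqrt (Γ k + ς + ωT k ^ 2) := Real.sqrt_pos.mpr hb
    rw [show η / Real.sqrt (Γ k + ς + ωT k ^ 2) * ωT k ^ 2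
      = η * (ωT k ^ 2 / Real.sqrt (Γ k + ς + ωT k ^ 2)) by ring]
    exact mul_le_mul_of_nonneg_left h hη1.le
  have step2 : ∀ k ∈ T, α k ^ 2 * ωT k ^ 2
      ≤ η ^ 2 * (Real.log (Γ (k+1) + ς) - Real.log (Γ k + ς)) := by
    intro k hk
    have hcomm : Γ k + ωT k ^ 2 + ς = Γ k + ς + ωT k ^ 2 := by ring
    have hb : 0 < Γ k + ς + ωT k ^ 2 := by rw [← hcomm]; exact hden k
    have h := aux_log_diff (hdenς k)
      (show Γ k + ς ≤ Γ k + ς + ωT k ^ 2 by nlinarith [sq_nonneg (ωT k)])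
    rw [add_sub_cancel_left] at h
    rw [hΓT k hk, hα k, hcomm]
    have hsq : Real.sqrt (Γ k + ς + ωT k ^ 2) ^ 2 = Γ k + ς + ωT k ^ 2 :=
      Real.sq_sqrt hb.le
    rw [show (η / Real.sqrt (Γ k + ς + ωT k ^ 2)) ^ 2 * ωT k ^ 2
      = η ^ 2 * (ωT k ^ 2 / (Real.sqrt (Γ k + ς + ωT k ^ 2)) ^ 2) by rw [div_pow]; ring,
      hsq]
    exact mul_le_mul_of_nonneg_left h (by positivity)
  -- lower bound for S1
  have L1 : ∀ k, η * (Real.sqrt (Γ k + ς) - Real.sqrt ς)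
      ≤ ∑ ν ∈ (Finset.range k).filter (· ∈ T), α ν * ωT ν ^ 2 := by
    intro k
    induction k with
    | zero => simp [hΓ0]
    | succ n ih =>
      rw [Finset.range_add_one, Finset.filter_insert]
      by_cases h : n ∈ T
      · rw [if_pos h, Finset.sum_insert (by simp)]
        have := step1 n h
        linarith
      · rw [if_neg h, hΓN n h]
        exact ih
  have L2 : ∀ k, ∑ ν ∈ (Finset.range k).filter (· ∈ T), α ν ^ 2 * ωT ν ^ 2
      ≤ η ^ 2 * (Real.log (Γ k + ς) - Real.log ς) := by
    intro k
    induction k with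
    | zero => simp [hΓ0]
    | succ n ih =>
      rw [Finset.range_add_one, Finset.filter_insert]
      by_cases h : n ∈ T
      · rw [if_pos h, Finset.sum_insert (by simp)]
        have := step2 n h
        linarith
      · rw [if_neg h, hΓN n h]
        exact ih
  -- master inequality
  have M : ∀ k, ψ k + η * (∑ ν ∈ (Finset.range k).filter (· ∈ N), ωN ν)
      + κt * (∑ ν ∈ (Finset.range k).filter (· ∈ T), α ν * ωT ν ^ 2)
      ≤ ψ 0 + κtan * (∑ ν ∈ (Finset.range k).filter (· ∈ T), α ν ^ 2 * ωT ν ^ 2) := by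
    intro k
    induction k with
    | zero => simp
    | succ n ih =>
      have hnN : n ∉ (Finset.range n).filter (· ∈ N) := by simp
      have hnT : n ∉ (Finset.range n).filter (· ∈ T) := by simp
      simp only [Finset.range_add_one, Finset.filter_insert]
      by_cases hT : n ∈ T
      · have h1 := hψT n hT
        simp only [if_pos hT]
        rw [Finset.sum_insert hnT, Finset.sum_insert hnT]
        by_cases hN : n ∈ N
        · have h2 := hψN n hN
          rw [if_pos hN, Finset.sum_insert hnN]
          linarith
        · have h2 := hψN' n hN
          rw [if_neg hN]
          linarith
      · have hN : n ∈ N := hTN n hT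
        have h1 := hψT' n hT
        have h2 := hψN n hN
        simp only [if_neg hT, if_pos hN]
        rw [Finset.sum_insert hnN]
        linarith
  have hD : 0 ≤ ψ 0 - ψlow := by linarith [hlow 0]
  have hSNnn : ∀ k, 0 ≤ ∑ ν ∈ (Finset.range k).filter (· ∈ N), ωN ν :=
    fun k => Finset.sum_nonneg fun ν _ => hωN ν
  -- the key combined inequality
  have key : ∀ k, κt * η * (Real.sqrt (Γ k + ς) - Real.sqrt ς)
      + η * (∑ ν ∈ (Finset.range k).filter (· ∈ N), ωN ν)
      ≤ (ψ 0 - ψlow) + κtan * η ^ 2 * (Real.log (Γ k + ς) - Real.log ς) := by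
    intro k
    have h1 := mul_le_mul_of_nonneg_left (L1 k) hκt1.le
    have h2 := mul_le_mul_of_nonneg_left (L2 k) hκtan.le
    have h3 := M k
    have h4 := hlow k
    linarith
  -- bound on sqrt(Γ k + ς)
  set A : ℝ := 4 * κtan / (κt * Real.sqrt ς) with hA
  have hApos : 0 < A := by positivity
  have hκgap' : κgap * (η * κt * Real.sqrt ς) = 1 + ψ 0 - ψlow := by
    rw [hκgap]; field_simp
  have hsbound : ∀ k, Real.sqrt (Γ k + ς) ≤ κT := by
    intro k
    set s : ℝ := Real.sqrt (Γ k + ς) with hs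
    have hspos : 0 < s := Real.sqrt_pos.mpr (hdenς k)
    have hlogeq : Real.log (Γ k + ς) = 2 * Real.log s := by
      rw [show Γ k + ς = s ^ 2 from (Real.sq_sqrt (hdenς k).le).symm, Real.log_pow]
      push_cast; ring
    have hlogς : Real.log ς = 2 * Real.log (Real.sqrt ς) := by
      nth_rewrite 1 [show ς = Real.sqrt ς ^ 2 from (Real.sq_sqrt hς1.le).symm]
      rw [Real.log_pow]; push_cast; ring
    have hk := key k
    rw [hlogeq, hlogς] at hk
    have hk2 : κt * η * (s - Real.sqrt ς)
        ≤ (ψ 0 - ψlow) + 2 * κtan * η ^ 2 * (Real.log s - Real.log (Real.sqrt ς)) := by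
      have := mul_nonneg hη1.le (hSNnn k)
      linarith
    have hA2 := aux_logA (show 0 < s / Real.sqrt ς by positivity) hApos
    have hA3 : s / Real.sqrt ς / A = s * κt / (4 * κtan) := by
      rw [hA]; field_simp
    rw [hA3, Real.log_div hspos.ne' hςs.ne'] at hA2
    have hmul := mul_le_mul_of_nonneg_left hA2
      (show (0:ℝ) ≤ 2 * κtan * η ^ 2 by positivity)
    have heq : 2 * κtan * η ^ 2 * (s * κt / (4 * κtan) + Real.log A - 1)
        = κt * η ^ 2 * s / 2 + 2 * κtan * η ^ 2 * (Real.log A - 1) := by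
      field_simp; ring
    rw [heq] at hmul
    have hηs : κt * η ^ 2 * s ≤ κt * η * s := by
      nlinarith [mul_nonneg (mul_nonneg (mul_pos hκt1 hη1).le hspos.le)
        (show (0:ℝ) ≤ 1 - η by linarith)]
    have hstep2 : κt * η * s / 2 ≤ (ψ 0 - ψlow) + κt * η * Real.sqrt ς
        + 2 * κtan * η ^ 2 * (Real.log A - 1) := by linarith
    -- deficiency control
    have hu2 : (4 * κtan / κt) * (1 - Real.log A) ≤ Real.sqrt ς := by
      have h5 : (4 * κtan / κt) = Real.sqrt ς * A := by
        rw [hA]; field_simp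
      rw [h5]
      calc Real.sqrt ς * A * (1 - Real.log A)
          = Real.sqrt ς * (A * (1 - Real.log A)) := by ring
        _ ≤ Real.sqrt ς * 1 := mul_le_mul_of_nonneg_left (aux_u hApos) hςs.le
        _ = Real.sqrt ς := by ring
    have hc3 : 2 * κtan * η ^ 2 * (Real.log A - 1)
        ≤ 2 * κtan * η * (Real.log A - 1) + (1 - η) * (κt * η / 2) * Real.sqrt ς := by
      have h6 : (2 * κtan * η) * (1 - Real.log A)
          = (κt * η / 2) * ((4 * κtan / κt) * (1 - Real.log A)) := by
        field_simp; ring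
      have h7 : (κt * η / 2) * ((4 * κtan / κt) * (1 - Real.log A))
          ≤ (κt * η / 2) * Real.sqrt ς :=
        mul_le_mul_of_nonneg_left hu2 (by positivity)
      have h8 : (1 - η) * ((2 * κtan * η) * (1 - Real.log A))
          ≤ (1 - η) * ((κt * η / 2) * Real.sqrt ς) := by
        apply mul_le_mul_of_nonneg_left _ (by linarith)
        rw [h6]; exact h7
      nlinarith [h8]
    -- multiply target by κt η / 2
    have hgap2 : 2 * κgap * Real.sqrt ς * (κt * η / 2) = 1 + ψ 0 - ψlow := by
      linear_combination hκgap'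
    have hc2 : κt * η / 2 * ((4 * κtan / κt) * (Real.log A - 1))
        = 2 * κtan * η * (Real.log A - 1) := by
      field_simp; ring
    have hx1 : κt * η * Real.sqrt ς ≤ 1 / 2 := by nlinarith [mul_pos hκt1 hη1]
    have hx2 : (1 - η) * (κt * η / 2) * Real.sqrt ς ≤ 1 / 2 := by
      nlinarith [mul_pos hκt1 hη1, mul_nonneg (mul_pos hκt1 hη1).le hςs.le]
    have hrhs : κt * η / 2 * (2 * κgap * Real.sqrt ς
          + (4 * κtan / κt) * (Real.log A - 1))
        = (1 + ψ 0 - ψlow) + 2 * κtan * η * (Real.log A - 1) := by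
      rw [mul_add, hc2, show κt * η / 2 * (2 * κgap * Real.sqrt ς)
        = 2 * κgap * Real.sqrt ς * (κt * η / 2) by ring, hgap2]
    have hper : κt * η / 2 * s ≤ κt * η / 2 * (2 * κgap * Real.sqrt ς
        + (4 * κtan / κt) * (Real.log A - 1)) := by
      rw [hrhs]
      linarith [hstep2, hc3, hx1, hx2]
    rw [hκT]
    exact le_of_mul_le_mul_left hper (by positivity)
  have hΓbd : ∀ k, Γ k + ς ≤ κT ^ 2 := by
    intro k
    nlinarith [hsbound k, Real.sqrt_nonneg (Γ k + ς), Real.sq_sqrt (hdenς k).le]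
  have hLpos : 0 ≤ Real.log (1 + κT ^ 2 / ς) :=
    Real.log_nonneg (by have : 0 ≤ κT ^ 2 / ς := by positivity
                        linarith)
  have hκtς0 : 0 < κt * Real.sqrt ς := mul_pos hκt1 hςs
  have hκgappos : 0 < κgap := by
    rw [hκgap]
    exact div_pos (by linarith) (by positivity)
  -- bound on cumulative ωN
  have hSN : ∀ k, ∑ ν ∈ (Finset.range k).filter (· ∈ N), ωN ν ≤ κN := by
    intro k
    have hk := key k
    have h1 : Real.log (Γ k + ς) - Real.log ς ≤ Real.log (1 + κT ^ 2 / ς) := by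
      have h2 : Γ k + ς ≤ ς * (1 + κT ^ 2 / ς) := by
        have he : ς * (1 + κT ^ 2 / ς) = ς + κT ^ 2 := by field_simp
        rw [he]; nlinarith [hΓbd k]
      have h3 := Real.log_le_log (hdenς k) h2
      rw [Real.log_mul hς1.ne' (by positivity)] at h3
      linarith
    have h4 : 0 ≤ Real.sqrt (Γ k + ς) - Real.sqrt ς := by
      have := Real.sqrt_le_sqrt (show ς ≤ Γ k + ς by nlinarith [hΓnn k])
      linarith
    have h5 : η * (∑ ν ∈ (Finset.range k).filter (· ∈ N), ωN ν)
        ≤ (ψ 0 - ψlow) + κtan * η ^ 2 * Real.log (1 + κT ^ 2 / ς) := by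
      have ha := mul_nonneg (mul_pos hκt1 hη1).le h4
      have hb := mul_le_mul_of_nonneg_left h1 (show (0:ℝ) ≤ κtan * η ^ 2 by positivity)
      linarith
    have h6 : ψ 0 - ψlow ≤ κgap * η := by
      have hG : 0 < κgap * η := mul_pos hκgappos hη1
      have h7 := mul_le_mul_of_nonneg_left hκtς hG.le
      have h7' : κgap * η * (κt * Real.sqrt ς) = 1 + ψ 0 - ψlow := by
        linear_combination hκgap'
      linarith [h7, h7']
    have h8 : κtan * η ^ 2 * Real.log (1 + κT ^ 2 / ς)
        ≤ η * ((κtan / (κt * Real.sqrt ς)) * Real.log (1 + κT ^ 2 / ς)) := by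
      have h9 : κtan * η ≤ κtan / (κt * Real.sqrt ς) := by
        rw [le_div_iff₀ hκtς0]
        have h9a : η * (κt * Real.sqrt ς) ≤ 1 := by
          calc η * (κt * Real.sqrt ς) ≤ 1 * 1 :=
                mul_le_mul hη2 hκtς hκtς0.le zero_le_one
            _ = 1 := one_mul 1
        linarith [mul_le_mul_of_nonneg_left h9a hκtan.le]
      calc κtan * η ^ 2 * Real.log (1 + κT ^ 2 / ς)
          = η * ((κtan * η) * Real.log (1 + κT ^ 2 / ς)) := by ring
        _ ≤ η * ((κtan / (κt * Real.sqrt ς)) * Real.log (1 + κT ^ 2 / ς)) :=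
            mul_le_mul_of_nonneg_left (mul_le_mul_of_nonneg_right h9 hLpos) hη1.le
    have h10 : η * (∑ ν ∈ (Finset.range k).filter (· ∈ N), ωN ν)
        ≤ η * (κgap + (κtan / (κt * Real.sqrt ς)) * Real.log (1 + κT ^ 2 / ς)) := by
      rw [mul_add]
      linarith
    rw [hκN]
    exact le_of_mul_le_mul_left h10 hη1
  -- pointwise bound on normal-only iterations
  set C : ℝ := Real.sqrt (κT ^ 2 + κω ^ 2) with hC
  have hCpos : 0 ≤ C := Real.sqrt_nonneg _
  have hκNpos : 0 ≤ κN := le_trans (hSNnn 0) (hSN 0)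
  have hβη : 0 < β * η := mul_pos hβ hη1
  have hpt : ∀ ν, ν ∈ N → ν ∉ T → ωT ν + ωN ν ≤ (1 + C / (β * η)) * ωN ν := by
    intro ν _ hνT
    have hsw := (not_iff_not.mpr (hswitch ν)).mp hνT
    push_neg at hsw
    have hb : 0 < Γ ν + ωT ν ^ 2 + ς := hden ν
    have hsb : 0 < Real.sqrt (Γ ν + ωT ν ^ 2 + ς) := Real.sqrt_pos.mpr hb
    have hle : Real.sqrt (Γ ν + ωT ν ^ 2 + ς) ≤ C := by
      rw [hC]
      apply Real.sqrt_le_sqrt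
      have hsq : ωT ν ^ 2 ≤ κω ^ 2 := pow_le_pow_left₀ (hωT ν) (hωTb ν) 2
      linarith [hΓbd ν]
    have h1 : β * (η / Real.sqrt (Γ ν + ωT ν ^ 2 + ς)) * ωT ν ≤ ωN ν := by
      rw [← hα ν]; exact hsw.le
    have h2 : β * η * ωT ν ≤ ωN ν * Real.sqrt (Γ ν + ωT ν ^ 2 + ς) := by
      have h2a := mul_le_mul_of_nonneg_right h1 hsb.le
      have heq : β * (η / Real.sqrt (Γ ν + ωT ν ^ 2 + ς)) * ωT ν
          * Real.sqrt (Γ ν + ωT ν ^ 2 + ς) = β * η * ωT ν := by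
        field_simp
      rw [heq] at h2a
      exact h2a
    have h3 : β * η * ωT ν ≤ ωN ν * C :=
      h2.trans (mul_le_mul_of_nonneg_left hle (hωN ν))
    have h4 : ωT ν ≤ ωN ν * C / (β * η) := by
      rw [le_div_iff₀ hβη]; linarith [h3]
    have h5 : (1 + C / (β * η)) * ωN ν = ωN ν + ωN ν * C / (β * η) := by ring
    rw [h5]
    linarith
  intro k
  constructor
  · rw [Finset.mul_sum]
    apply Finset.sum_le_sum
    intro ν _
    have h1 := hcbarN ν
    linarith [h1, mul_nonneg (show (0:ℝ) ≤ 1 - ξ by linarith) (hωT ν)]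
  · calc ∑ ν ∈ (Finset.range (k + 1)).filter (fun ν => ν ∈ N ∧ ν ∉ T), (ωT ν + ωN ν)
        ≤ ∑ ν ∈ (Finset.range (k + 1)).filter (fun ν => ν ∈ N ∧ ν ∉ T),
            (1 + C / (β * η)) * ωN ν := by
          apply Finset.sum_le_sum
          intro ν hν
          rw [Finset.mem_filter] at hν
          exact hpt ν hν.2.1 hν.2.2
      _ = (1 + C / (β * η)) * ∑ ν ∈ (Finset.range (k + 1)).filter (fun ν => ν ∈ N ∧ ν ∉ T),
            ωN ν := by rw [Finset.mul_sum]
      _ ≤ (1 + C / (β * η)) * ∑ ν ∈ (Finset.range (k + 1)).filter (· ∈ N), ωN ν := by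
          apply mul_le_mul_of_nonneg_left _ (by positivity)
          apply Finset.sum_le_sum_of_subset_of_nonneg
          · intro ν hν
            rw [Finset.mem_filter] at hν ⊢
            exact ⟨hν.1, hν.2.1⟩
          · intro ν _ _; exact hωN ν
      _ ≤ (1 + C / (β * η)) * κN :=
          mul_le_mul_of_nonneg_left (hSN (k+1)) (by positivity)
      _ = κN * (1 + Real.sqrt (κT ^ 2 + κω ^ 2) / (β * η)) := by rw [hC]; ring
end

section
/- Suppose in addition there are a sequence c̄ : ℕ → ℝ with 0 ≤ c̄(k) and ω_N(k) ≥ ξ·c̄(k) for all k, and a constant κ_ω > 0 with ω_T(k) ≤ κ_ω for all k. Then for every k ∈ ℕ: (1/(k+1))·Σ_{j=0}^{k}(ω_T(j) + c̄(j)) ≤ κ₁/√(k+1) + κ₂/(k+1), where κ₁ = (κ_T/ξ)·(1 + β·η/√ς), κ₂ = (κ_N/ξ)·(1 + √(κ_T² + κ_ω²)/(β·η)), with κ_T = 2·κ_gap·√ς + (4κ_tan/κ_t)·[log(4κ_tan/(κ_t·√ς)) − 1] and κ_N = κ_gap + (κ_tan/(κ_t·√ς))·log(1 + κ_T²/ς).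 In particular the average of ω_T(j) + c̄(j) over the first k+1 iterations is O(1/√(k+1)). -/
set_option maxHeartbeats 1000000

lemma aux_log_ineq {η B : ℝ} (hη0 : 0 < η) (hη1 : η ≤ 1) (hB : 0 < B) :
    η * (Real.log (η * B) - 1) ≤ Real.log B - 1 + 1 / B := by
  have hlogη : Real.log η ≤ 0 := Real.log_nonpos hη0.le hη1
  have hlogB : 1 - 1 / B ≤ Real.log B := by
    have h := Real.log_le_sub_one_of_pos (show (0:ℝ) < 1/B by positivity)
    rw [one_div, Real.log_inv] at h
    rw [one_div]
    linarith
  rw [Real.log_mul hη0.ne' hB.ne']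
  have h1 : η * Real.log η ≤ 0 := mul_nonpos_of_nonneg_of_nonpos hη0.le hlogη
  have h2 : (1 - η) * (1 - 1/B) ≤ (1 - η) * Real.log B :=
    mul_le_mul_of_nonneg_left hlogB (by linarith)
  have h3 : 0 ≤ η / B := by positivity
  have hB' : 0 < 1/B := by positivity
  nlinarith [mul_pos hη0 hB']

lemma aux_x_bound {η ς κt κtan D x κgap κT : ℝ}
    (hη1 : 0 < η) (hη2 : η ≤ 1) (hς1 : 0 < ς) (hς2 : ς ≤ 1/2)
    (hκt1 : 0 < κt) (hκt2 : κt ≤ 1/2) (hκtan : 0 < κtan)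
    (hκtς : κt * Real.sqrt ς ≤ 1)
    (hD : 0 ≤ D)
    (hκgap : κgap = (1 + D) / (η * κt * Real.sqrt ς))
    (hκT : κT = 2 * κgap * Real.sqrt ς
      + (4 * κtan / κt) * (Real.log (4 * κtan / (κt * Real.sqrt ς)) - 1))
    (hx : Real.sqrt ς ≤ x)
    (hineq : η * κt * (x - Real.sqrt ς)
      ≤ D + 2 * κtan * η^2 * Real.log (x / Real.sqrt ς)) :
    x ≤ κT := by
  set s := Real.sqrt ς with hs_def
  have hs : 0 < s := Real.sqrt_pos.2 hς1
  have hs1 : s ≤ 1 := by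
    rw [hs_def, show (1:ℝ) = Real.sqrt 1 by simp]
    exact Real.sqrt_le_sqrt (by linarith)
  set B := 4 * κtan / (κt * s) with hB_def
  have hB : 0 < B := by positivity
  have hx0 : 0 < x := lt_of_lt_of_le hs hx
  -- log bound: log(x/s) ≤ x/(s*(η*B)) - 1 + log (η*B)
  have hlog1 : Real.log (x / s) ≤ x / (s * (η * B)) - 1 + Real.log (η * B) := by
    have h1 : Real.log (x / (s * (η * B))) ≤ x / (s * (η * B)) - 1 :=
      Real.log_le_sub_one_of_pos (by positivity)
    have h2 : Real.log (x / (s * (η * B))) = Real.log (x / s) - Real.log (η * B) := by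
      rw [show x / (s * (η * B)) = (x / s) / (η * B) by ring,
        Real.log_div (by positivity) (by positivity)]
    linarith
  -- coefficient identity: 2*κtan*η^2 / (s*(η*B)) = η*κt/2
  have hcoef : 2 * κtan * η^2 * (x / (s * (η * B))) = η * κt / 2 * x := by
    rw [hB_def]; field_simp; ring
  have hkey : η * κt / 2 * x ≤ D + η * κt * s + 2 * κtan * η^2 * (Real.log (η * B) - 1) := by
    have h0 := mul_le_mul_of_nonneg_left hlog1 (show (0:ℝ) ≤ 2 * κtan * η^2 by positivity)
    have h0' : 2 * κtan * η^2 * Real.log (x / s)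
        ≤ η * κt / 2 * x - 2 * κtan * η^2 + 2 * κtan * η^2 * Real.log (η * B) := by
      calc 2 * κtan * η^2 * Real.log (x / s)
          ≤ 2 * κtan * η^2 * (x / (s * (η * B)) - 1 + Real.log (η * B)) := h0
        _ = 2 * κtan * η^2 * (x / (s * (η * B))) - 2 * κtan * η^2
            + 2 * κtan * η^2 * Real.log (η * B) := by ring
        _ = η * κt / 2 * x - 2 * κtan * η^2 + 2 * κtan * η^2 * Real.log (η * B) := by
            rw [hcoef]
    linarith [hineq]
  -- use aux_log_ineq
  have haux : η * (Real.log (η * B) - 1) ≤ Real.log B - 1 + 1 / B :=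
    aux_log_ineq hη1 hη2 hB
  have haux2 : 2 * κtan * η^2 * (Real.log (η * B) - 1)
      ≤ 2 * κtan * η * (Real.log B - 1) + 2 * κtan * η / B := by
    have := mul_le_mul_of_nonneg_left haux (show (0:ℝ) ≤ 2 * κtan * η by positivity)
    calc 2 * κtan * η^2 * (Real.log (η * B) - 1)
        = 2 * κtan * η * (η * (Real.log (η * B) - 1)) := by ring
      _ ≤ 2 * κtan * η * (Real.log B - 1 + 1 / B) := this
      _ = 2 * κtan * η * (Real.log B - 1) + 2 * κtan * η / B := by ring
  have hBinv : 2 * κtan * η / B = η * κt * s / 2 := by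
    rw [hB_def]; field_simp; ring
  -- so: η*κt/2*x ≤ D + (3/2)*η*κt*s + 2*κtan*η*(log B - 1)
  have h4 : η * κt / 2 * x ≤ D + (3/2) * (η * κt * s) + 2 * κtan * η * (Real.log B - 1) := by
    linarith [hkey, haux2, hBinv ▸ le_refl (2 * κtan * η / B)]
  -- divide by η*κt/2
  have hηκt : 0 < η * κt := by positivity
  have h5 : x ≤ 2 * D / (η * κt) + 3 * s + (4 * κtan / κt) * (Real.log B - 1) := by
    have := mul_le_mul_of_nonneg_left h4 (show (0:ℝ) ≤ 2 / (η * κt) by positivity)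
    calc x = 2 / (η * κt) * (η * κt / 2 * x) := by field_simp
      _ ≤ 2 / (η * κt) * (D + (3/2) * (η * κt * s) + 2 * κtan * η * (Real.log B - 1)) := this
      _ = 2 * D / (η * κt) + 3 * s + (4 * κtan / κt) * (Real.log B - 1) := by
          field_simp; ring
  -- compare to κT
  have hgap : 2 * κgap * s = 2 * (1 + D) / (η * κt) := by
    rw [hκgap]; field_simp
  have h6 : 2 * D / (η * κt) + 3 * s ≤ 2 * (1 + D) / (η * κt) := by
    have h7 : η * κt ≤ 1/2 := by nlinarith
    have h8 : 4 ≤ 2 / (η * κt) := by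
      rw [le_div_iff₀ hηκt]; linarith
    have : 2 * D / (η * κt) + 2 / (η * κt) = 2 * (1 + D) / (η * κt) := by ring
    linarith
  rw [hκT]
  linarith [hgap, h5, h6]

theorem stmt19
    (η ς β κt κtan ξ : ℝ)
    (hη1 : 0 < η) (hη2 : η ≤ 1) (hς1 : 0 < ς) (hς2 : ς ≤ 1/2) (hβ : 0 < β)
    (hκt1 : 0 < κt) (hκt2 : κt ≤ 1/2) (hκtan : 0 < κtan)
    (hξ1 : 0 < ξ) (hξ2 : ξ ≤ 1)
    (hκtς : κt * Real.sqrt ς ≤ 1)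
    (ωT ωN : ℕ → ℝ) (hωT : ∀ k, 0 ≤ ωT k) (hωN : ∀ k, 0 ≤ ωN k)
    (T N : Set ℕ) [DecidablePred (· ∈ T)] [DecidablePred (· ∈ N)]
    (Γ α : ℕ → ℝ)
    (hΓ0 : Γ 0 = 0)
    (hΓT : ∀ k ∈ T, Γ (k + 1) = Γ k + ωT k ^ 2)
    (hΓN : ∀ k, k ∉ T → Γ (k + 1) = Γ k)
    (hα : ∀ k, α k = η / Real.sqrt (Γ k + ωT k ^ 2 + ς))
    (hswitch : ∀ k, k ∈ T ↔ ωN k ≤ β * α k * ωT k)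
    (hTN : ∀ k, k ∉ T → k ∈ N)
    (ψ ψp : ℕ → ℝ)
    (hψN : ∀ k ∈ N, ψp k - ψ k ≤ -(η * ωN k))
    (hψN' : ∀ k, k ∉ N → ψp k = ψ k)
    (hψT : ∀ k ∈ T, ψ (k + 1) - ψp k ≤ -(κt * α k * ωT k ^ 2) + κtan * α k ^ 2 * ωT k ^ 2)
    (hψT' : ∀ k, k ∉ T → ψ (k + 1) = ψp k)
    (ψlow : ℝ) (hlow : ∀ k, ψlow ≤ ψ k)
    (κgap : ℝ) (hκgap : κgap = (1 + ψ 0 - ψlow) / (η * κt * Real.sqrt ς))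
    (cbar : ℕ → ℝ) (hcbar : ∀ k, 0 ≤ cbar k) (hcbarN : ∀ k, ξ * cbar k ≤ ωN k)
    (κω : ℝ) (hκω : 0 < κω) (hωTb : ∀ k, ωT k ≤ κω)
    (κT κN κ₁ κ₂ : ℝ)
    (hκT : κT = 2 * κgap * Real.sqrt ς
      + (4 * κtan / κt) * (Real.log (4 * κtan / (κt * Real.sqrt ς)) - 1))
    (hκN : κN = κgap + (κtan / (κt * Real.sqrt ς)) * Real.log (1 + κT ^ 2 / ς))
    (hκ₁ : κ₁ = (κT / ξ) * (1 + β * η / Real.sqrt ς))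
    (hκ₂ : κ₂ = (κN / ξ) * (1 + Real.sqrt (κT ^ 2 + κω ^ 2) / (β * η))) :
    ∀ k : ℕ,
      (1 / ((k : ℝ) + 1)) * ∑ j ∈ Finset.range (k + 1), (ωT j + cbar j)
        ≤ κ₁ / Real.sqrt ((k : ℝ) + 1) + κ₂ / ((k : ℝ) + 1) := by
  intro k
  have hs : 0 < Real.sqrt ς := Real.sqrt_pos.2 hς1
  have hΓmono : Monotone Γ := monotone_nat_of_le_succ (fun n => by
    by_cases h : n ∈ T
    · rw [hΓT n h]; nlinarith [sq_nonneg (ωT n)]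
    · rw [hΓN n h])
  have hΓnn : ∀ n, 0 ≤ Γ n := fun n => hΓ0 ▸ hΓmono (Nat.zero_le n)
  have hden : ∀ n, 0 < Γ n + ωT n ^ 2 + ς := fun n => by nlinarith [hΓnn n, sq_nonneg (ωT n)]
  have hαpos : ∀ n, 0 < α n := fun n => by
    rw [hα n]; exact div_pos hη1 (Real.sqrt_pos.2 (hden n))
  have hαle : ∀ n, α n ≤ η / Real.sqrt ς := fun n => by
    rw [hα n]
    apply div_le_div_of_nonneg_left hη1.le hs
    exact Real.sqrt_le_sqrt (by nlinarith [hΓnn n, sq_nonneg (ωT n)])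
  -- telescoping inequality
  have htel : ∀ K : ℕ, ψ K + η * (∑ j ∈ Finset.range K, if j ∈ N then ωN j else 0)
      + κt * (∑ j ∈ Finset.range K, if j ∈ T then α j * ωT j ^ 2 else 0)
      ≤ ψ 0 + κtan * (∑ j ∈ Finset.range K, if j ∈ T then α j ^ 2 * ωT j ^ 2 else 0) := by
    intro K
    induction K with
    | zero => simp
    | succ n ih =>
      rw [Finset.sum_range_succ, Finset.sum_range_succ, Finset.sum_range_succ]
      have e1 : ψp n - ψ n ≤ -(if n ∈ N then η * ωN n else 0) := by
        by_cases h : n ∈ N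
        · simpa [h] using hψN n h
        · simp [h, hψN' n h]
      have e2 : ψ (n+1) - ψp n ≤ -(if n ∈ T then κt * (α n * ωT n ^ 2) else 0)
          + (if n ∈ T then κtan * (α n ^ 2 * ωT n ^ 2) else 0) := by
        by_cases h : n ∈ T
        · have := hψT n h
          simp only [h, if_true]
          linarith [this]
        · simp [h, hψT' n h]
      by_cases hTn : n ∈ T <;> by_cases hNn : n ∈ N <;>
        simp only [hTn, hNn, if_true, if_false] at e1 e2 ⊢ <;>
        linarith [ih, e1, e2]
  -- Γ as a sum
  have hΓsum : ∀ K, (∑ j ∈ Finset.range K, if j ∈ T then ωT j ^ 2 else 0) = Γ K := by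
    intro K; induction K with
    | zero => simp [hΓ0]
    | succ n ih =>
      rw [Finset.sum_range_succ, ih]
      by_cases h : n ∈ T
      · rw [if_pos h, hΓT n h]
      · rw [if_neg h, hΓN n h, add_zero]
  -- lower bound on the weighted tangential sum
  have hS1lb : ∀ K, η * Γ K / Real.sqrt (Γ K + ς)
      ≤ ∑ j ∈ Finset.range K, (if j ∈ T then α j * ωT j ^ 2 else 0) := by
    intro K
    have hGK : 0 < Γ K + ς := by nlinarith [hΓnn K]
    have hsK : 0 < Real.sqrt (Γ K + ς) := Real.sqrt_pos.2 hGK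
    calc η * Γ K / Real.sqrt (Γ K + ς)
        = ∑ j ∈ Finset.range K, (η / Real.sqrt (Γ K + ς)) * (if j ∈ T then ωT j ^ 2 else 0) := by
          rw [← Finset.mul_sum, hΓsum K]; ring
      _ ≤ ∑ j ∈ Finset.range K, (if j ∈ T then α j * ωT j ^ 2 else 0) := by
          apply Finset.sum_le_sum
          intro j hj
          by_cases h : j ∈ T
          · rw [if_pos h, if_pos h, hα j]
            have hj' : j + 1 ≤ K := Finset.mem_range.1 hj
            have hle : Γ j + ωT j ^ 2 + ς ≤ Γ K + ς := by
              have h1 := hΓmono hj'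
              have h2 := hΓT j h
              linarith
            have hd : 0 < Real.sqrt (Γ j + ωT j ^ 2 + ς) := Real.sqrt_pos.2 (hden j)
            have hdd : Real.sqrt (Γ j + ωT j ^ 2 + ς) ≤ Real.sqrt (Γ K + ς) :=
              Real.sqrt_le_sqrt hle
            have := div_le_div_of_nonneg_left hη1.le hd hdd
            exact mul_le_mul_of_nonneg_right this (sq_nonneg _)
          · rw [if_neg h, if_neg h, mul_zero]
  -- upper bound on the squared tangential sum
  have hS2ub : ∀ K, (∑ j ∈ Finset.range K, if j ∈ T then α j ^ 2 * ωT j ^ 2 else 0)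
      ≤ η ^ 2 * (Real.log (Γ K + ς) - Real.log ς) := by
    intro K; induction K with
    | zero => simp [hΓ0]
    | succ n ih =>
      rw [Finset.sum_range_succ]
      by_cases h : n ∈ T
      · have hGn : 0 < Γ n + ς := by nlinarith [hΓnn n]
        have hGn1 : 0 < Γ (n+1) + ς := by nlinarith [hΓnn (n+1)]
        have hα2 : α n ^ 2 = η ^ 2 / (Γ n + ωT n ^ 2 + ς) := by
          rw [hα n, div_pow, Real.sq_sqrt (hden n).le]
        have hlog := Real.log_le_sub_one_of_pos
          (show 0 < (Γ n + ς) / (Γ (n+1) + ς) by positivity)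
        rw [Real.log_div hGn.ne' hGn1.ne'] at hlog
        have hΓn1 : Γ (n+1) = Γ n + ωT n ^ 2 := hΓT n h
        have hstep : α n ^ 2 * ωT n ^ 2
            ≤ η ^ 2 * (Real.log (Γ (n+1) + ς) - Real.log (Γ n + ς)) := by
          rw [hα2]
          have e1 : η ^ 2 / (Γ n + ωT n ^ 2 + ς) * ωT n ^ 2
              = η ^ 2 * (ωT n ^ 2 / (Γ (n+1) + ς)) := by
            rw [hΓn1]; ring
          rw [e1]
          apply mul_le_mul_of_nonneg_left _ (sq_nonneg η)
          have e2 : ωT n ^ 2 / (Γ (n+1) + ς) = 1 - (Γ n + ς) / (Γ (n+1) + ς) := by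
            rw [hΓn1, eq_sub_iff_add_eq, ← add_div,
              div_eq_one_iff_eq (hden n).ne']
            ring
          rw [e2]; linarith
        rw [if_pos h]
        linarith [ih, hstep]
      · rw [if_neg h, add_zero, hΓN n h]
        exact ih
  -- key bound: sqrt(Γ K + ς) ≤ κT
  have hD : 0 ≤ ψ 0 - ψlow := by linarith [hlow 0]
  have hbound : ∀ K, Real.sqrt (Γ K + ς) ≤ κT := by
    intro K
    have hGK : 0 < Γ K + ς := by nlinarith [hΓnn K]
    set x := Real.sqrt (Γ K + ς) with hx_def
    have hxs : Real.sqrt ς ≤ x := Real.sqrt_le_sqrt (by linarith [hΓnn K])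
    have hx2 : x ^ 2 = Γ K + ς := Real.sq_sqrt hGK.le
    have hs2 : Real.sqrt ς ^ 2 = ς := Real.sq_sqrt hς1.le
    have hx0 : 0 < x := lt_of_lt_of_le hs hxs
    have hSNnn : 0 ≤ ∑ j ∈ Finset.range K, (if j ∈ N then ωN j else 0) :=
      Finset.sum_nonneg fun j _ => by split_ifs with h; exacts [hωN j, le_rfl]
    have h1 : κt * (η * Γ K / x)
        ≤ (ψ 0 - ψlow) + κtan * (η ^ 2 * (Real.log (Γ K + ς) - Real.log ς)) := by
      have h2 := htel K
      have h3 := mul_le_mul_of_nonneg_left (hS1lb K) hκt1.le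
      have h4 := mul_le_mul_of_nonneg_left (hS2ub K) hκtan.le
      have h5 := hlow K
      have h6 := mul_nonneg hη1.le hSNnn
      linarith
    have hlogid : Real.log (Γ K + ς) - Real.log ς = 2 * Real.log (x / Real.sqrt ς) := by
      have e1 : Real.log (Γ K + ς) = 2 * Real.log x := by
        rw [← hx2, Real.log_pow]; push_cast; ring
      have e2 : Real.log ς = 2 * Real.log (Real.sqrt ς) := by
        conv_lhs => rw [← hs2]
        rw [Real.log_pow]; push_cast; ring
      rw [e1, e2, Real.log_div hx0.ne' hs.ne']; ring
    have hΓoverx : η * (x - Real.sqrt ς) ≤ η * Γ K / x := by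
      rw [le_div_iff₀ hx0]
      nlinarith [mul_nonneg hη1.le (mul_nonneg hs.le (sub_nonneg.2 hxs)), hx2, hs2]
    have hineq : η * κt * (x - Real.sqrt ς)
        ≤ (ψ 0 - ψlow) + 2 * κtan * η ^ 2 * Real.log (x / Real.sqrt ς) := by
      have h7 := mul_le_mul_of_nonneg_left hΓoverx hκt1.le
      rw [hlogid] at h1
      linarith [h1, h7]
    exact aux_x_bound (D := ψ 0 - ψlow) (κgap := κgap) (κT := κT) hη1 hη2 hς1 hς2 hκt1 hκt2 hκtan hκtς hD
      (by rw [hκgap]; ring_nf) (by rw [hκT]) hxs hineq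
  have hκT0 : 0 < κT := lt_of_lt_of_le hs (by simpa [hΓ0] using hbound 0)
  -- bound on sum of ωN over N
  have hlog1nn : 0 ≤ Real.log (1 + κT ^ 2 / ς) :=
    Real.log_nonneg (by nlinarith [sq_nonneg κT, div_nonneg (sq_nonneg κT) hς1.le])
  have hSNb : ∀ K, (∑ j ∈ Finset.range K, if j ∈ N then ωN j else 0) ≤ κN := by
    intro K
    have hGK : 0 < Γ K + ς := by nlinarith [hΓnn K]
    have hS1nn : 0 ≤ ∑ j ∈ Finset.range K, (if j ∈ T then α j * ωT j ^ 2 else 0) :=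
      Finset.sum_nonneg fun j _ => by
        split_ifs with h
        · exact mul_nonneg (hαpos j).le (sq_nonneg _)
        · exact le_rfl
    have h1 : η * (∑ j ∈ Finset.range K, if j ∈ N then ωN j else 0)
        ≤ (ψ 0 - ψlow) + κtan * (η ^ 2 * (Real.log (Γ K + ς) - Real.log ς)) := by
      have h2 := htel K
      have h4 := mul_le_mul_of_nonneg_left (hS2ub K) hκtan.le
      have h5 := hlow K
      have h6 := mul_nonneg hκt1.le hS1nn
      linarith
    -- log bound via Γ K + ς ≤ κT^2
    have hΓκ : Γ K + ς ≤ κT ^ 2 := by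
      have := hbound K
      nlinarith [Real.sq_sqrt hGK.le, Real.sqrt_nonneg (Γ K + ς)]
    have hlog2 : Real.log (Γ K + ς) - Real.log ς ≤ Real.log (1 + κT ^ 2 / ς) := by
      have e1 : Real.log (1 + κT ^ 2 / ς) = Real.log (ς + κT ^ 2) - Real.log ς := by
        rw [show (1 + κT ^ 2 / ς) = (ς + κT ^ 2) / ς by field_simp,
          Real.log_div (by nlinarith [sq_nonneg κT]) hς1.ne']
      have e2 : Real.log (Γ K + ς) ≤ Real.log (ς + κT ^ 2) :=
        Real.log_le_log hGK (by nlinarith)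
      linarith
    -- divide by η
    have hgapge : (ψ 0 - ψlow) / η ≤ κgap := by
      rw [hκgap, div_le_div_iff₀ hη1 (by positivity)]
      nlinarith [mul_nonneg (mul_nonneg hD hη1.le) (sub_nonneg.2 hκtς), hη1.le]
    have hcoef2 : κtan * η ≤ κtan / (κt * Real.sqrt ς) := by
      rw [le_div_iff₀ (by positivity)]
      have hη_t : η * (κt * Real.sqrt ς) ≤ 1 := by
        nlinarith [mul_nonneg (sub_nonneg.2 hη2) (mul_pos hκt1 hs).le]
      nlinarith [mul_le_mul_of_nonneg_left hη_t hκtan.le]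
    refine le_of_mul_le_mul_left ?_ hη1
    have hηD : η * ((ψ 0 - ψlow) / η) = ψ 0 - ψlow := by field_simp
    have m1 : η * ((ψ 0 - ψlow) / η) ≤ η * κgap := mul_le_mul_of_nonneg_left hgapge hη1.le
    have m2 : η * (κtan * η) * Real.log (1 + κT ^ 2 / ς)
        ≤ η * (κtan / (κt * Real.sqrt ς)) * Real.log (1 + κT ^ 2 / ς) :=
      mul_le_mul_of_nonneg_right (mul_le_mul_of_nonneg_left hcoef2 hη1.le) hlog1nn
    have m3 : κtan * (η ^ 2 * (Real.log (Γ K + ς) - Real.log ς))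
        ≤ η * (κtan * η) * Real.log (1 + κT ^ 2 / ς) := by
      have := mul_le_mul_of_nonneg_left hlog2 (show (0:ℝ) ≤ κtan * η ^ 2 by positivity)
      nlinarith [this]
    rw [hκN]
    linarith only [h1, m1, m2, m3, hηD]
  -- final assembly
  set M := Real.sqrt (κT ^ 2 + κω ^ 2) with hM_def
  have hM0 : 0 ≤ M := Real.sqrt_nonneg _
  have h1ξ : 1 ≤ 1 / ξ := by rw [le_div_iff₀ hξ1]; linarith
  have hterm : ∀ j, ωT j + cbar j ≤ (if j ∈ T then (1 + β * η / Real.sqrt ς) / ξ * ωT j else 0)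
      + (if j ∈ T then 0 else (1 / ξ) * (1 + M / (β * η)) * ωN j) := by
    intro j
    by_cases h : j ∈ T
    · rw [if_pos h, if_pos h, add_zero]
      have hn : ωN j ≤ β * (η / Real.sqrt ς) * ωT j := by
        refine le_trans ((hswitch j).1 h) ?_
        exact mul_le_mul_of_nonneg_right
          (mul_le_mul_of_nonneg_left (hαle j) hβ.le) (hωT j)
      have key : ξ * (ωT j + cbar j) ≤ (1 + β * η / Real.sqrt ς) * ωT j := by
        have m0 := mul_nonneg (by linarith : (0:ℝ) ≤ 1 - ξ) (hωT j)
        have m1 := hcbarN j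
        ring_nf at hn ⊢
        linarith only [hn, m0, m1]
      rw [div_mul_eq_mul_div, le_div_iff₀ hξ1]
      linarith [key]
    · rw [if_neg h, if_neg h, zero_add]
      have hjN := hTN j h
      have hsw : β * α j * ωT j < ωN j := not_le.1 (fun hh => h ((hswitch j).2 hh))
      have hd : 0 < Real.sqrt (Γ j + ωT j ^ 2 + ς) := Real.sqrt_pos.2 (hden j)
      have hMb : Real.sqrt (Γ j + ωT j ^ 2 + ς) ≤ M := by
        apply Real.sqrt_le_sqrt
        have hGj : 0 < Γ j + ς := by linarith only [hΓnn j, hς1]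
        have h1 : Γ j + ς ≤ κT ^ 2 := by
          nlinarith only [hbound j, Real.sq_sqrt hGj.le, Real.sqrt_nonneg (Γ j + ς), hκT0]
        have h2 : ωT j ^ 2 ≤ κω ^ 2 := by nlinarith only [hωTb j, hωT j]
        linarith only [h1, h2]
      have hωTj : ωT j ≤ ωN j * M / (β * η) := by
        have h6 : β * η * ωT j / Real.sqrt (Γ j + ωT j ^ 2 + ς) ≤ ωN j := by
          have e : β * α j * ωT j = β * η * ωT j / Real.sqrt (Γ j + ωT j ^ 2 + ς) := by
            rw [hα j]; ring
          linarith [e ▸ hsw.le]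
        have h7 := (div_le_iff₀ hd).1 h6
        rw [le_div_iff₀ (mul_pos hβ hη1)]
        calc ωT j * (β * η) = β * η * ωT j := by ring
          _ ≤ ωN j * Real.sqrt (Γ j + ωT j ^ 2 + ς) := h7
          _ ≤ ωN j * M := mul_le_mul_of_nonneg_left hMb (hωN j)
      have hc : cbar j ≤ (1 / ξ) * ωN j := by
        rw [one_div, inv_mul_eq_div, le_div_iff₀ hξ1]
        linarith [hcbarN j]
      have a1 : ωN j * M / (β * η) ≤ (1 / ξ) * (M / (β * η)) * ωN j := by
        have ha : 0 ≤ ωN j * M / (β * η) :=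
          div_nonneg (mul_nonneg (hωN j) hM0) (mul_pos hβ hη1).le
        have e : (1 / ξ) * (M / (β * η)) * ωN j = (1 / ξ) * (ωN j * M / (β * η)) := by
          ring
        rw [e]
        nlinarith only [mul_le_mul_of_nonneg_right h1ξ ha]
      have e2 : (1 / ξ) * (1 + M / (β * η)) * ωN j
          = (1 / ξ) * ωN j + (1 / ξ) * (M / (β * η)) * ωN j := by ring
      rw [e2]
      linarith [hωTj, a1, hc]
  -- sum the termwise bound
  have hsum : (∑ j ∈ Finset.range (k+1), (ωT j + cbar j))
      ≤ (1 + β * η / Real.sqrt ς) / ξ * (∑ j ∈ Finset.range (k+1), if j ∈ T then ωT j else 0)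
      + (1 / ξ) * (1 + M / (β * η)) * (∑ j ∈ Finset.range (k+1), if j ∈ T then 0 else ωN j) := by
    calc (∑ j ∈ Finset.range (k+1), (ωT j + cbar j))
        ≤ ∑ j ∈ Finset.range (k+1), ((if j ∈ T then (1 + β * η / Real.sqrt ς) / ξ * ωT j else 0)
            + (if j ∈ T then 0 else (1 / ξ) * (1 + M / (β * η)) * ωN j)) :=
          Finset.sum_le_sum fun j _ => hterm j
      _ = _ := by
          rw [Finset.sum_add_distrib, Finset.mul_sum, Finset.mul_sum]
          congr 1 <;> refine Finset.sum_congr rfl fun j _ => ?_ <;>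
            split_ifs <;> simp
  -- Cauchy-Schwarz bound on the tangential part
  have hKpos : (0:ℝ) < ((k:ℝ) + 1) := by positivity
  have hP : (∑ j ∈ Finset.range (k+1), if j ∈ T then ωT j else 0)
      ≤ Real.sqrt ((k:ℝ)+1) * κT := by
    have hPnn : 0 ≤ ∑ j ∈ Finset.range (k+1), (if j ∈ T then ωT j else 0) :=
      Finset.sum_nonneg fun j _ => by split_ifs with h; exacts [hωT j, le_rfl]
    have hΓκ : Γ (k+1) ≤ κT ^ 2 := by
      have hGK : (0:ℝ) ≤ Γ (k+1) + ς := by linarith only [hΓnn (k+1), hς1.le]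
      nlinarith only [hbound (k+1), Real.sq_sqrt hGK, Real.sqrt_nonneg (Γ (k+1) + ς), hκT0,
        hς1]
    have hCS : (∑ j ∈ Finset.range (k+1), if j ∈ T then ωT j else 0) ^ 2
        ≤ ((k:ℝ)+1) * Γ (k+1) := by
      have h0 := sq_sum_le_card_mul_sum_sq
        (s := Finset.range (k+1)) (f := fun j => if j ∈ T then ωT j else 0)
      have e1 : ∑ j ∈ Finset.range (k+1), (if j ∈ T then ωT j else 0) ^ 2 = Γ (k+1) := by
        rw [← hΓsum (k+1)]
        refine Finset.sum_congr rfl fun j _ => ?_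
        split_ifs <;> simp
      rw [e1] at h0
      simpa using h0
    calc (∑ j ∈ Finset.range (k+1), if j ∈ T then ωT j else 0)
        = Real.sqrt ((∑ j ∈ Finset.range (k+1), if j ∈ T then ωT j else 0) ^ 2) :=
          (Real.sqrt_sq hPnn).symm
      _ ≤ Real.sqrt (((k:ℝ)+1) * κT ^ 2) := by
          apply Real.sqrt_le_sqrt
          nlinarith only [hCS, hΓκ, hKpos]
      _ = Real.sqrt ((k:ℝ)+1) * κT := by
          rw [Real.sqrt_mul hKpos.le, Real.sqrt_sq hκT0.le]
  -- bound on the normal part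
  have hQ : (∑ j ∈ Finset.range (k+1), if j ∈ T then 0 else ωN j) ≤ κN := by
    refine le_trans (Finset.sum_le_sum fun j _ => ?_) (hSNb (k+1))
    by_cases h : j ∈ T
    · simp only [h, if_true]
      split_ifs with h2
      exacts [hωN j, le_rfl]
    · simp only [h, if_false, hTN j h, if_true]
      exact le_rfl
  -- combine everything
  have hc1 : 0 ≤ (1 + β * η / Real.sqrt ς) / ξ := by positivity
  have hc2 : 0 ≤ (1 / ξ) * (1 + M / (β * η)) := by positivity
  have htotal : (∑ j ∈ Finset.range (k+1), (ωT j + cbar j))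
      ≤ κ₁ * Real.sqrt ((k:ℝ)+1) + κ₂ := by
    have b1 := mul_le_mul_of_nonneg_left hP hc1
    have b2 := mul_le_mul_of_nonneg_left hQ hc2
    have e1 : (1 + β * η / Real.sqrt ς) / ξ * (Real.sqrt ((k:ℝ)+1) * κT)
        = κ₁ * Real.sqrt ((k:ℝ)+1) := by rw [hκ₁]; ring
    have e2 : (1 / ξ) * (1 + M / (β * η)) * κN = κ₂ := by rw [hκ₂]; ring
    linarith only [hsum, b1, b2, e1, e2]
  have hsqK : 0 < Real.sqrt ((k:ℝ)+1) := Real.sqrt_pos.2 hKpos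
  have hdiv : κ₁ * Real.sqrt ((k:ℝ)+1) / ((k:ℝ)+1) = κ₁ / Real.sqrt ((k:ℝ)+1) := by
    rw [div_eq_div_iff hKpos.ne' hsqK.ne']
    rw [mul_assoc, Real.mul_self_sqrt hKpos.le]
  calc (1 / ((k:ℝ) + 1)) * ∑ j ∈ Finset.range (k + 1), (ωT j + cbar j)
      ≤ (1 / ((k:ℝ) + 1)) * (κ₁ * Real.sqrt ((k:ℝ)+1) + κ₂) :=
        mul_le_mul_of_nonneg_left htotal (by positivity)
    _ = κ₁ * Real.sqrt ((k:ℝ)+1) / ((k:ℝ)+1) + κ₂ / ((k:ℝ)+1) := by ring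
    _ = κ₁ / Real.sqrt ((k:ℝ)+1) + κ₂ / ((k:ℝ)+1) := by rw [hdiv]
end
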